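/- arXiv:2208.11452 — 4 statements merged into one kernel-verified Lean document; each statement's English description precedes it below -/
import Mathlib

section
/- Let γ > 0 and let f(z) = ∑_{n≥0} a_n z^n be analytic on the unit disk with (a_n) nonnegative and non-increasing. Then f ∈ B^γ if and only if sup_{n≥1} n^{2-γ} a_n < ∞. -/
open MeasureTheory Set Filter

/-- `g` is almost decreasing on `s`. -/
def AlmostDecreasingOn (g : ℝ → ℝ) (s : Set ℝ) : Prop :=
  ∃ C > 0, ∀ x ∈ s, ∀ y ∈ s, x < y → g y ≤ C * g x

/-- `g` is almost increasing on `s`. -/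
def AlmostIncreasingOn (g : ℝ → ℝ) (s : Set ℝ) : Prop :=
  ∃ C > 0, ∀ x ∈ s, ∀ y ∈ s, x < y → g x ≤ C * g y

/-- `ν` is a normal weight on `[0,1)` with exponents `a ≤ b`. -/
def IsNormal (ν : ℝ → ℝ) (a b : ℝ) : Prop :=
  0 < a ∧ a ≤ b ∧ (∀ s ∈ Ico (0:ℝ) 1, 0 < ν s) ∧ ContinuousOn ν (Ico 0 1) ∧
  AlmostDecreasingOn (fun s => ν s / (1 - s ^ 2) ^ a) (Ico 0 1) ∧
  AlmostIncreasingOn (fun s => ν s / (1 - s ^ 2) ^ b) (Ico 0 1)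

/-- Membership in the normal-weight Bloch space `B_ν`. -/
def MemBloch (ν : ℝ → ℝ) (f : ℂ → ℂ) : Prop :=
  DifferentiableOn ℂ f (Metric.ball 0 1) ∧
  BddAbove (Set.range fun z : Metric.ball (0:ℂ) 1 => ν ‖(z : ℂ)‖ * ‖deriv f z‖)

/-- The Bloch norm `|f(0)| + sup ν(|z|)|f'(z)|`. -/
noncomputable def blochNorm (ν : ℝ → ℝ) (f : ℂ → ℂ) : ℝ :=
  ‖f 0‖ + ⨆ z : Metric.ball (0:ℂ) 1, ν ‖(z : ℂ)‖ * ‖deriv f z‖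

/-- `ω̃(t) = ∫_0^t ds/ω(s)`. -/
noncomputable def tildeW (ω : ℝ → ℝ) (t : ℝ) : ℝ := ∫ s in (0:ℝ)..t, 1 / ω s

/-- The generalized integral type Hilbert operator `I_{μ,α+1}`. -/
noncomputable def intHilbert (μ : Measure ℝ) (α : ℝ) (f : ℂ → ℂ) (z : ℂ) : ℂ :=
  ∫ t in Ico (0:ℝ) 1, f (t : ℂ) / (1 - (t : ℂ) * z) ^ ((α : ℂ) + 1) ∂μ

/-- The sublinear generalized integral type Hilbert operator. -/
noncomputable def tildeIntHilbert (μ : Measure ℝ) (α : ℝ) (f : ℂ → ℂ) (z : ℂ) : ℂ :=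
  ∫ t in Ico (0:ℝ) 1, (‖f (t : ℂ)‖ : ℂ) / (1 - (t : ℂ) * z) ^ ((α : ℂ) + 1) ∂μ

/-- Boundedness of an operator from `B_{ν₁}` to `B_{ν₂}`. -/
def IsBddOp (ν₁ ν₂ : ℝ → ℝ) (T : (ℂ → ℂ) → ℂ → ℂ) : Prop :=
  ∃ C > 0, ∀ f, MemBloch ν₁ f → MemBloch ν₂ (T f) ∧ blochNorm ν₂ (T f) ≤ C * blochNorm ν₁ f

/-- Compactness of an operator from `B_{ν₁}` to `B_{ν₂}` (sequential characterization). -/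
def IsCompactOp (ν₁ ν₂ : ℝ → ℝ) (T : (ℂ → ℂ) → ℂ → ℂ) : Prop :=
  IsBddOp ν₁ ν₂ T ∧
  ∀ (h : ℕ → ℂ → ℂ) (M : ℝ), (∀ k, MemBloch ν₁ (h k) ∧ blochNorm ν₁ (h k) ≤ M) →
    TendstoLocallyUniformlyOn (fun k z => h k z) (fun _ => 0) atTop (Metric.ball (0:ℂ) 1) →
    Tendsto (fun k => blochNorm ν₂ (T (h k))) atTop (nhds 0)


section Aux

open Real

lemma aux_summable_pow {r : ℝ} (hr0 : 0 ≤ r) (hr1 : r < 1) (k : ℕ) :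
    Summable (fun n : ℕ => ((n : ℝ) + 1) ^ k * r ^ n) := by
  have h1 : Summable (fun n : ℕ => (2:ℝ)^k * ((n:ℝ)^k * r^n + r^n)) := by
    apply Summable.mul_left
    exact ((summable_pow_mul_geometric_of_norm_lt_one k (by
      rwa [Real.norm_eq_abs, abs_of_nonneg hr0])).add
      (summable_geometric_of_lt_one hr0 hr1))
  apply h1.of_nonneg_of_le (fun n => by positivity)
  intro n
  have hrn : (0:ℝ) ≤ r ^ n := by positivity
  have : ((n:ℝ)+1)^k ≤ (2:ℝ)^k * ((n:ℝ)^k + 1) := by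
    rcases Nat.eq_zero_or_pos n with rfl | hn
    · simp
      calc (1:ℝ) ≤ 2^k := one_le_pow₀ (by norm_num)
        _ ≤ 2^k * (0^k+1) := by
            rcases Nat.eq_zero_or_pos k with rfl | hk
            · norm_num
            · rw [zero_pow hk.ne', zero_add, mul_one]
    · have h2 : ((n:ℝ)+1)^k ≤ (2*(n:ℝ))^k := by
        apply pow_le_pow_left₀ (by positivity)
        have : (1:ℝ) ≤ (n:ℝ) := by exact_mod_cast hn
        linarith
      calc ((n:ℝ)+1)^k ≤ (2*(n:ℝ))^k := h2
        _ = 2^k * (n:ℝ)^k := by rw [mul_pow]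
        _ ≤ 2^k * ((n:ℝ)^k + 1) := by
            apply mul_le_mul_of_nonneg_left (by linarith) (by positivity)
  calc ((n:ℝ)+1)^k * r^n ≤ (2:ℝ)^k * ((n:ℝ)^k + 1) * r^n :=
        mul_le_mul_of_nonneg_right this hrn
    _ = 2^k * ((n:ℝ)^k*r^n + r^n) := by ring

lemma aux_summable_rpow {r : ℝ} (hr0 : 0 ≤ r) (hr1 : r < 1) (β : ℝ) :
    Summable (fun n : ℕ => ((n : ℝ) + 1) ^ β * r ^ n) := by
  set k := ⌈max β 0⌉₊ with hk
  apply (aux_summable_pow hr0 hr1 k).of_nonneg_of_le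
  · intro n; positivity
  · intro n
    apply mul_le_mul_of_nonneg_right _ (by positivity)
    have h1 : (0:ℝ) ≤ (n:ℝ) + 1 := by positivity
    calc ((n:ℝ)+1)^β ≤ ((n:ℝ)+1)^(k:ℝ) := by
          apply Real.rpow_le_rpow_of_exponent_le (by linarith)
          exact le_trans (le_max_left β 0) (Nat.le_ceil _)
      _ = ((n:ℝ)+1)^k := Real.rpow_natCast _ k

lemma aux_abel (b : ℕ → ℝ) (hb0 : b 0 = 0) {r : ℝ}
    (h1 : Summable (fun n : ℕ => b (n+1) * r ^ n)) :
    (1 - r) * ∑' n : ℕ, b (n+1) * r ^ n = ∑' n : ℕ, (b (n+1) - b n) * r ^ n := by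
  have h2 : Summable (fun n : ℕ => b n * r ^ n) := by
    rw [← summable_nat_add_iff 1]
    have : (fun n : ℕ => b (n+1) * r ^ (n+1)) = fun n : ℕ => r * (b (n+1) * r ^ n) := by
      funext n; ring
    rw [this]
    exact h1.mul_left r
  have key : ∑' n : ℕ, b n * r ^ n = r * ∑' n : ℕ, b (n+1) * r ^ n := by
    rw [Summable.tsum_eq_zero_add h2, hb0]
    simp only [zero_mul, zero_add]
    rw [← tsum_mul_left]
    congr 1; funext n; ring
  have h3 : ∑' n : ℕ, (b (n+1) - b n) * r ^ n
      = (∑' n : ℕ, b (n+1) * r ^ n) - ∑' n : ℕ, b n * r ^ n := by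
    rw [← Summable.tsum_sub h1 h2]
    congr 1; funext n; ring
  rw [h3, key]; ring

/-- difference of powers bound -/

lemma aux_pow_diff (k : ℕ) {a : ℝ} (ha : 0 ≤ a) :
    (a+1)^(k+1) - a^(k+1) ≤ (k+1) * (a+1)^k := by
  induction k with
  | zero => norm_num
  | succ k ih =>
    have h1 : a^(k+1) ≤ (a+1)^(k+1) := by
      apply pow_le_pow_left₀ ha; linarith
    have h2 : (0:ℝ) ≤ (a+1)^k := by positivity
    have hc : (a+1)^(k+2) - a^(k+2) ≤ ((k:ℝ)+2) * (a+1)^(k+1) :=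
      calc (a+1)^(k+2) - a^(k+2) = (a+1)*((a+1)^(k+1) - a^(k+1)) + a^(k+1) := by ring
      _ ≤ (a+1)*((k+1)*(a+1)^k) + (a+1)^(k+1) := by
          apply add_le_add _ h1
          exact mul_le_mul_of_nonneg_left ih (by linarith)
      _ = ((k:ℝ)+2) * (a+1)^(k+1) := by ring
    push_cast at hc ⊢
    convert hc using 2 <;> push_cast <;> ring
    
/-- integer case bound -/

lemma aux_int_bound (k : ℕ) :
    ∃ C > 0, ∀ r : ℝ, 0 ≤ r → r < 1 →
      ∑' n : ℕ, ((n : ℝ) + 1) ^ k * r ^ n ≤ C / (1 - r) ^ (k+1) := by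
  induction k with
  | zero =>
    refine ⟨1, one_pos, fun r hr0 hr1 => ?_⟩
    simp only [pow_zero, one_mul, pow_one]
    rw [tsum_geometric_of_lt_one hr0 hr1]
    rw [inv_eq_one_div]; norm_num
  | succ k ih =>
    obtain ⟨C, hC, hCb⟩ := ih
    refine ⟨(k+2) * C, by positivity, fun r hr0 hr1 => ?_⟩
    have h1r : (0:ℝ) < 1 - r := by linarith
    have hs1 := aux_summable_pow hr0 hr1 (k+1)
    have hs0 := aux_summable_pow hr0 hr1 k
    -- Abel with b n = n^(k+1)
    have habel := aux_abel (fun n : ℕ => ((n:ℝ))^(k+1)) (by simp) (r := r)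
      (by simpa using hs1)
    push_cast at habel
    have hdiff : ∀ n : ℕ, (((n:ℝ)+1)^(k+1) - ((n:ℝ))^(k+1)) * r^n
        ≤ ((k:ℝ)+2) * (((n:ℝ)+1)^k * r^n) := by
      intro n
      have := aux_pow_diff k (a := (n:ℝ)) (Nat.cast_nonneg n)
      have hrn : (0:ℝ) ≤ r^n := by positivity
      calc (((n:ℝ)+1)^(k+1) - ((n:ℝ))^(k+1)) * r^n
          ≤ ((k+1) * ((n:ℝ)+1)^k) * r^n := mul_le_mul_of_nonneg_right this hrn
        _ ≤ ((k:ℝ)+2) * (((n:ℝ)+1)^k * r^n) := by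
            rw [← mul_assoc]
            apply mul_le_mul_of_nonneg_right _ hrn
            apply mul_le_mul_of_nonneg_right _ (by positivity)
            push_cast; linarith
    have hsum_le : ∑' n : ℕ, (((n:ℝ)+1)^(k+1) - ((n:ℝ))^(k+1)) * r^n
        ≤ ((k:ℝ)+2) * ∑' n : ℕ, ((n:ℝ)+1)^k * r^n := by
      rw [← tsum_mul_left]
      apply Summable.tsum_le_tsum hdiff _ (hs0.mul_left _)
      · -- summability of the difference series
        have : (fun n : ℕ => (((n:ℝ)+1)^(k+1) - ((n:ℝ))^(k+1)) * r^n)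
            = fun n : ℕ => ((n:ℝ)+1)^(k+1) * r^n - ((n:ℝ))^(k+1) * r^n := by
          funext n; ring
        rw [this]
        apply hs1.sub
        rw [← summable_nat_add_iff 1]
        push_cast
        have : (fun n : ℕ => ((n:ℝ)+1)^(k+1) * r^(n+1))
            = fun n : ℕ => r * (((n:ℝ)+1)^(k+1) * r^n) := by funext n; ring
        rw [this]
        exact hs1.mul_left r
    have hmain : (1-r) * ∑' n : ℕ, ((n:ℝ)+1)^(k+1) * r^n
        ≤ ((k:ℝ)+2) * ∑' n : ℕ, ((n:ℝ)+1)^k * r^n := by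
      calc (1-r) * ∑' n : ℕ, ((n:ℝ)+1)^(k+1) * r^n
          = ∑' n : ℕ, (((n:ℝ)+1)^(k+1) - ((n:ℝ))^(k+1)) * r^n := by
            rw [← habel]
        _ ≤ _ := hsum_le
    have hb := hCb r hr0 hr1
    rw [le_div_iff₀ (by positivity), pow_succ]
    have hfin : (∑' n : ℕ, ((n:ℝ)+1)^(k+1) * r^n) * ((1-r)^(k+1) * (1-r)) ≤ ((k:ℝ)+2) * C :=
      calc (∑' n : ℕ, ((n:ℝ)+1)^(k+1) * r^n) * ((1-r)^(k+1) * (1-r))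
        = ((1-r) * ∑' n : ℕ, ((n:ℝ)+1)^(k+1) * r^n) * (1-r)^(k+1) := by ring
      _ ≤ (((k:ℝ)+2) * ∑' n : ℕ, ((n:ℝ)+1)^k * r^n) * (1-r)^(k+1) := by
          apply mul_le_mul_of_nonneg_right hmain (by positivity)
      _ ≤ ((k:ℝ)+2) * (C / (1-r)^(k+1)) * (1-r)^(k+1) := by
          apply mul_le_mul_of_nonneg_right _ (by positivity)
          exact mul_le_mul_of_nonneg_left hb (by positivity)
      _ = ((k:ℝ)+2) * C := by field_simp
    push_cast at hfin ⊢
    linarith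

lemma aux_shift_summable (b : ℕ → ℝ) {r : ℝ}
    (h1 : Summable (fun n : ℕ => b (n+1) * r ^ n)) :
    Summable (fun n : ℕ => b n * r ^ n) := by
  rw [← summable_nat_add_iff 1]
  have : (fun n : ℕ => b (n+1) * r ^ (n+1)) = fun n : ℕ => r * (b (n+1) * r ^ n) := by
    funext n; ring
  rw [this]
  exact h1.mul_left r

lemma aux_rpow_comb {A B D : ℝ} (hA : 0 < A) (hB : 0 < B) (hD : 0 < D)
    (x y u v w θ : ℝ) :
    (A^x * B^w * D^u)^θ * (A^y * B^w * D^v)^(1-θ)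
      = A^(x*θ + y*(1-θ)) * B^w * D^(u*θ + v*(1-θ)) := by
  rw [Real.mul_rpow (by positivity) (by positivity),
      Real.mul_rpow (by positivity) (by positivity),
      Real.mul_rpow (by positivity) (by positivity),
      Real.mul_rpow (by positivity) (by positivity),
      ← Real.rpow_mul hA.le, ← Real.rpow_mul hB.le, ← Real.rpow_mul hD.le,
      ← Real.rpow_mul hA.le, ← Real.rpow_mul hB.le, ← Real.rpow_mul hD.le,
      Real.rpow_add hA, Real.rpow_add hD]
  have hw : w = w*θ + w*(1-θ) := by ring
  nth_rewrite 3 [hw]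
  rw [Real.rpow_add hB]
  ring

/-- fractional exponent bound -/

lemma aux_frac_bound (k : ℕ) {θ : ℝ} (hθ0 : 0 ≤ θ) (hθ1 : θ < 1) :
    ∃ C > 0, ∀ r : ℝ, 0 ≤ r → r < 1 →
      ∑' n : ℕ, ((n : ℝ) + 1) ^ ((k:ℝ) + θ) * r ^ n
        ≤ C * (1 - r) ^ (-(((k:ℝ) + 1) + θ)) := by
  obtain ⟨C1, hC1, hC1b⟩ := aux_int_bound (k+1)
  obtain ⟨C0, hC0, hC0b⟩ := aux_int_bound k
  have hCpos : (0:ℝ) < θ * C1 + (1-θ) * C0 + 1 := by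
    nlinarith [mul_nonneg hθ0 hC1.le, mul_nonneg (by linarith : (0:ℝ) ≤ 1-θ) hC0.le]
  refine ⟨θ * C1 + (1-θ) * C0 + 1, hCpos, fun r hr0 hr1 => ?_⟩
  have h1r : (0:ℝ) < 1 - r := by linarith
  rcases eq_or_lt_of_le hr0 with rfl | hrpos
  · -- r = 0
    have : ∑' n : ℕ, ((n : ℝ) + 1) ^ ((k:ℝ) + θ) * (0:ℝ) ^ n = 1 := by
      rw [tsum_eq_single 0]
      · norm_num
      · intro n hn
        rw [zero_pow hn, mul_zero]
    rw [this]
    simp only [sub_zero, Real.one_rpow]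
    nlinarith
  -- r > 0
  have hkey : ∀ n : ℕ, ((n : ℝ) + 1) ^ ((k:ℝ) + θ) * r ^ n
      ≤ θ * ((1-r)^(1-θ) * (((n:ℝ)+1)^(k+1) * r^n))
        + (1-θ) * ((1-r)^(-θ) * (((n:ℝ)+1)^k * r^n)) := by
    intro n
    have hA : (0:ℝ) < (n:ℝ) + 1 := by positivity
    set p₁ : ℝ := ((n:ℝ)+1)^((k:ℝ)+1) * r^(n:ℝ) * (1-r)^(1-θ) with hp₁
    set p₂ : ℝ := ((n:ℝ)+1)^((k:ℝ)) * r^(n:ℝ) * (1-r)^(-θ) with hp₂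
    have hid : ((n : ℝ) + 1) ^ ((k:ℝ) + θ) * r ^ n = p₁^θ * p₂^(1-θ) := by
      rw [hp₁, hp₂, aux_rpow_comb hA hrpos h1r]
      have e1 : ((k:ℝ)+1)*θ + (k:ℝ)*(1-θ) = (k:ℝ) + θ := by ring
      have e2 : (1-θ)*θ + (-θ)*(1-θ) = 0 := by ring
      rw [e1, e2, Real.rpow_zero, mul_one, Real.rpow_natCast]
    rw [hid]
    have hge := Real.geom_mean_le_arith_mean2_weighted hθ0 (by linarith)
      (show 0 ≤ p₁ by rw [hp₁]; positivity) (show 0 ≤ p₂ by rw [hp₂]; positivity)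
      (show θ + (1-θ) = 1 by ring)
    refine hge.trans (le_of_eq ?_)
    rw [hp₁, hp₂]
    rw [Real.rpow_natCast ((n:ℝ)+1) k, Real.rpow_natCast r n]
    have : ((n:ℝ)+1)^((k:ℝ)+1) = ((n:ℝ)+1)^(k+1) := by
      rw [← Real.rpow_natCast ((n:ℝ)+1) (k+1)]; push_cast; ring_nf
    rw [this]; ring
  have hsum1 : Summable (fun n : ℕ => θ * ((1-r)^(1-θ) * (((n:ℝ)+1)^(k+1) * r^n))) :=
    ((aux_summable_pow hr0 hr1 (k+1)).mul_left _).mul_left _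
  have hsum0 : Summable (fun n : ℕ => (1-θ) * ((1-r)^(-θ) * (((n:ℝ)+1)^k * r^n))) :=
    ((aux_summable_pow hr0 hr1 k).mul_left _).mul_left _
  have hts : ∑' n : ℕ, ((n : ℝ) + 1) ^ ((k:ℝ) + θ) * r ^ n
      ≤ θ * ((1-r)^(1-θ) * ∑' n : ℕ, ((n:ℝ)+1)^(k+1) * r^n)
        + (1-θ) * ((1-r)^(-θ) * ∑' n : ℕ, ((n:ℝ)+1)^k * r^n) := by
    rw [← tsum_mul_left, ← tsum_mul_left, ← tsum_mul_left, ← tsum_mul_left,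
       ← Summable.tsum_add hsum1 hsum0]
    exact Summable.tsum_le_tsum hkey (aux_summable_rpow hr0 hr1 _) (hsum1.add hsum0)
  have e3 : (1-r)^(1-θ) * (C1 / (1-r)^(k+2)) = C1 * (1-r)^(-(((k:ℝ)+1)+θ)) := by
    rw [div_eq_mul_inv, ← Real.rpow_natCast (1-r) (k+2), ← Real.rpow_neg h1r.le,
      ← mul_assoc, mul_comm ((1-r)^(1-θ)) C1, mul_assoc, ← Real.rpow_add h1r]
    congr 1
    push_cast; ring
  have e4 : (1-r)^(-θ) * (C0 / (1-r)^(k+1)) = C0 * (1-r)^(-(((k:ℝ)+1)+θ)) := by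
    rw [div_eq_mul_inv, ← Real.rpow_natCast (1-r) (k+1), ← Real.rpow_neg h1r.le,
      ← mul_assoc, mul_comm ((1-r)^(-θ)) C0, mul_assoc, ← Real.rpow_add h1r]
    congr 1
    push_cast; ring
  have hpos : (0:ℝ) < (1-r)^(-(((k:ℝ)+1)+θ)) := Real.rpow_pos_of_pos h1r _
  calc ∑' n : ℕ, ((n : ℝ) + 1) ^ ((k:ℝ) + θ) * r ^ n
      ≤ θ * ((1-r)^(1-θ) * ∑' n : ℕ, ((n:ℝ)+1)^(k+1) * r^n)
        + (1-θ) * ((1-r)^(-θ) * ∑' n : ℕ, ((n:ℝ)+1)^k * r^n) := hts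
    _ ≤ θ * ((1-r)^(1-θ) * (C1 / (1-r)^(k+2)))
        + (1-θ) * ((1-r)^(-θ) * (C0 / (1-r)^(k+1))) := by
        apply add_le_add
        · apply mul_le_mul_of_nonneg_left _ hθ0
          apply mul_le_mul_of_nonneg_left (hC1b r hr0 hr1) (by positivity)
        · apply mul_le_mul_of_nonneg_left _ (by linarith)
          apply mul_le_mul_of_nonneg_left (hC0b r hr0 hr1) (by positivity)
    _ = (θ * C1 + (1-θ) * C0) * (1-r)^(-(((k:ℝ)+1)+θ)) := by
        rw [e3, e4]; ring
    _ ≤ (θ * C1 + (1-θ) * C0 + 1) * (1-r)^(-(((k:ℝ)+1)+θ)) := by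
        apply mul_le_mul_of_nonneg_right _ hpos.le
        linarith

lemma aux_bern {γ : ℝ} (hγ0 : 0 < γ) (hγ1 : γ ≤ 1) (n : ℕ) :
    γ * ((n:ℝ)+1) ^ (γ-1) ≤ ((n:ℝ)+1) ^ γ - (n:ℝ) ^ γ := by
  have hA : (0:ℝ) < (n:ℝ) + 1 := by positivity
  have hs : (-1:ℝ) ≤ -1/((n:ℝ)+1) := by
    rw [neg_div]
    apply neg_le_neg
    rw [div_le_one hA]
    simp
  have hb := rpow_one_add_le_one_add_mul_self hs hγ0.le hγ1
  have h1 : (1 + -1/((n:ℝ)+1)) = (n:ℝ)/((n:ℝ)+1) := by field_simp; ring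
  rw [h1] at hb
  -- hb : ((n:ℝ)/((n:ℝ)+1))^γ ≤ 1 + γ * (-1/((n:ℝ)+1))
  have h2 : ((n:ℝ)/((n:ℝ)+1))^γ = (n:ℝ)^γ / ((n:ℝ)+1)^γ :=
    Real.div_rpow (Nat.cast_nonneg n) hA.le γ
  rw [h2] at hb
  have hAp : (0:ℝ) < ((n:ℝ)+1)^γ := Real.rpow_pos_of_pos hA _
  have hb2 : (n:ℝ)^γ ≤ (1 + γ * (-1/((n:ℝ)+1))) * ((n:ℝ)+1)^γ := by
    rw [← div_le_iff₀ hAp]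
    exact hb
  have h3 : (1 + γ * (-1/((n:ℝ)+1))) * ((n:ℝ)+1)^γ
      = ((n:ℝ)+1)^γ - γ * (((n:ℝ)+1)^γ / ((n:ℝ)+1)) := by ring
  have h4 : ((n:ℝ)+1)^γ / ((n:ℝ)+1) = ((n:ℝ)+1)^(γ-1) := by
    rw [Real.rpow_sub hA, Real.rpow_one]
  rw [h3, h4] at hb2
  linarith

lemma aux_key {γ : ℝ} (hγ : 0 < γ) :
    ∃ C > 0, ∀ r : ℝ, 0 ≤ r → r < 1 →
      ∑' n : ℕ, ((n : ℝ) + 1) ^ (γ - 1) * r ^ n ≤ C * (1 - r) ^ (-γ) := by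
  rcases le_or_gt 1 γ with hγ1 | hγ1
  · -- γ ≥ 1
    set k := ⌊γ - 1⌋₊ with hk
    have hg0 : (0:ℝ) ≤ γ - 1 := by linarith
    have hθ0 : 0 ≤ γ - 1 - k := by
      have := Nat.floor_le hg0
      linarith
    have hθ1 : γ - 1 - k < 1 := by
      have := Nat.lt_floor_add_one (γ - 1)
      linarith
    obtain ⟨C, hC, hCb⟩ := aux_frac_bound k hθ0 hθ1
    refine ⟨C, hC, fun r hr0 hr1 => ?_⟩
    have e1 : (k:ℝ) + (γ - 1 - k) = γ - 1 := by ring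
    have e2 : -(((k:ℝ) + 1) + (γ - 1 - k)) = -γ := by ring
    have := hCb r hr0 hr1
    rwa [e1, e2] at this
  · -- 0 < γ < 1
    obtain ⟨C, hC, hCb⟩ := aux_frac_bound 0 hγ.le hγ1
    refine ⟨γ⁻¹ * C, by positivity, fun r hr0 hr1 => ?_⟩
    have h1r : (0:ℝ) < 1 - r := by linarith
    have hsum : Summable (fun n : ℕ => ((n:ℝ)+1)^γ * r^n) := aux_summable_rpow hr0 hr1 γ
    have habel := aux_abel (fun n : ℕ => (n:ℝ)^γ) (by simp [Real.zero_rpow hγ.ne']) (r := r)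
      (by push_cast; exact hsum)
    push_cast at habel
    have hterm : ∀ n : ℕ, γ * (((n:ℝ)+1)^(γ-1) * r^n)
        ≤ (((n:ℝ)+1)^γ - (n:ℝ)^γ) * r^n := by
      intro n
      have := aux_bern hγ hγ1.le n
      have hrn : (0:ℝ) ≤ r^n := by positivity
      calc γ * (((n:ℝ)+1)^(γ-1) * r^n) = (γ * ((n:ℝ)+1)^(γ-1)) * r^n := by ring
        _ ≤ (((n:ℝ)+1)^γ - (n:ℝ)^γ) * r^n := mul_le_mul_of_nonneg_right this hrn
    have hsub : Summable (fun n : ℕ => (((n:ℝ)+1)^γ - (n:ℝ)^γ) * r^n) := by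
      have h2 : Summable (fun n : ℕ => ((n:ℝ))^γ * r^n) := by
        apply aux_shift_summable (fun n : ℕ => (n:ℝ)^γ)
        push_cast; exact hsum
      have : (fun n : ℕ => (((n:ℝ)+1)^γ - (n:ℝ)^γ) * r^n)
          = fun n : ℕ => ((n:ℝ)+1)^γ * r^n - ((n:ℝ))^γ * r^n := by funext n; ring
      rw [this]
      exact hsum.sub h2
    have hts : γ * ∑' n : ℕ, ((n:ℝ)+1)^(γ-1) * r^n
        ≤ (1-r) * ∑' n : ℕ, ((n:ℝ)+1)^γ * r^n := by
      rw [habel, ← tsum_mul_left]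
      exact Summable.tsum_le_tsum hterm ((aux_summable_rpow hr0 hr1 _).mul_left _) hsub
    have hb := hCb r hr0 hr1
    simp only [Nat.cast_zero, zero_add] at hb
    -- hb : ∑' (n+1)^γ r^n ≤ C * (1-r)^(-(1+γ))  (with (0:ℝ)+... simp'd)
    have hfin : γ * ∑' n : ℕ, ((n:ℝ)+1)^(γ-1) * r^n ≤ C * (1-r)^(-γ) := by
      calc γ * ∑' n : ℕ, ((n:ℝ)+1)^(γ-1) * r^n
          ≤ (1-r) * ∑' n : ℕ, ((n:ℝ)+1)^γ * r^n := hts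
        _ ≤ (1-r) * (C * (1-r)^(-(1+γ))) := by
            apply mul_le_mul_of_nonneg_left _ h1r.le
            exact hb
        _ = C * ((1-r)^(1:ℝ) * (1-r)^(-(1+γ))) := by
            rw [Real.rpow_one]; ring
        _ = C * (1-r)^(-γ) := by
            rw [← Real.rpow_add h1r]
            congr 1
            ring
    calc ∑' n : ℕ, ((n:ℝ)+1)^(γ-1) * r^n
        = γ⁻¹ * (γ * ∑' n : ℕ, ((n:ℝ)+1)^(γ-1) * r^n) := by
          field_simp
      _ ≤ γ⁻¹ * (C * (1-r)^(-γ)) := by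
          apply mul_le_mul_of_nonneg_left hfin (by positivity)
      _ = γ⁻¹ * C * (1-r)^(-γ) := by ring

lemma aux_summable_deriv_real (c : ℕ → ℝ) (hc : ∀ n, 0 ≤ c n) (hmono : Antitone c)
    {t : ℝ} (ht0 : 0 ≤ t) (ht1 : t < 1) :
    Summable (fun n : ℕ => ((n:ℝ) + 1) * c (n+1) * t ^ n) := by
  apply ((aux_summable_pow ht0 ht1 1).mul_left (c 0)).of_nonneg_of_le
  · intro n
    have := hc (n+1)
    positivity
  · intro n
    have h1 : c (n+1) ≤ c 0 := hmono (Nat.zero_le _)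
    have h2 : (0:ℝ) ≤ t^n := by positivity
    have h3 : (0:ℝ) ≤ (n:ℝ)+1 := by positivity
    calc ((n:ℝ)+1) * c (n+1) * t^n ≤ ((n:ℝ)+1) * c 0 * t^n := by
          apply mul_le_mul_of_nonneg_right _ h2
          exact mul_le_mul_of_nonneg_left h1 h3
      _ = c 0 * (((n:ℝ)+1)^1 * t^n) := by ring

/-- complex summability of the derivative series -/

lemma aux_summable_deriv (c : ℕ → ℝ) (hc : ∀ n, 0 ≤ c n) (hmono : Antitone c)
    {w : ℂ} (hw : ‖w‖ < 1) :
    Summable (fun n : ℕ => ((n:ℂ) + 1) * (c (n+1) : ℂ) * w ^ n) := by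
  apply Summable.of_norm
  have : (fun n : ℕ => ‖((n:ℂ) + 1) * (c (n+1) : ℂ) * w ^ n‖)
      = fun n : ℕ => ((n:ℝ) + 1) * c (n+1) * ‖w‖ ^ n := by
    funext n
    rw [norm_mul, norm_mul, norm_pow]
    congr
    · have : ((n:ℂ) + 1) = ((n+1 : ℕ) : ℂ) := by push_cast; ring
      rw [this, Complex.norm_natCast]
      push_cast; ring
    · rw [Complex.norm_real, Real.norm_eq_abs, abs_of_nonneg (hc _)]
  rw [this]
  exact aux_summable_deriv_real c hc hmono (norm_nonneg w) hw

lemma aux_hasDerivAt (c : ℕ → ℝ) (hc : ∀ n, 0 ≤ c n) (hmono : Antitone c)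
    (f : ℂ → ℂ)
    (hf : ∀ z ∈ Metric.ball (0:ℂ) 1, HasSum (fun n : ℕ => (c n : ℂ) * z ^ n) (f z))
    {z : ℂ} (hz : ‖z‖ < 1) :
    HasDerivAt f (∑' n : ℕ, ((n:ℂ) + 1) * (c (n+1) : ℂ) * z ^ n) z := by
  set R : ℝ := (1 + ‖z‖)/2 with hR
  have hz0 : 0 ≤ ‖z‖ := norm_nonneg z
  have hR1 : R < 1 := by rw [hR]; linarith
  have hzR : ‖z‖ < R := by rw [hR]; linarith
  have hR0 : 0 ≤ R := by rw [hR]; linarith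
  have hzt : z ∈ Metric.ball (0:ℂ) R := by
    rw [Metric.mem_ball, dist_zero_right]; exact hzR
  have hz1 : z ∈ Metric.ball (0:ℂ) 1 := by
    rw [Metric.mem_ball, dist_zero_right]; exact hz
  -- summable bound
  have hu : Summable (fun n : ℕ => c 0 * ((n:ℝ) * R^(n-1))) := by
    apply Summable.mul_left
    rw [← summable_nat_add_iff 1]
    simp only [Nat.add_sub_cancel]
    push_cast
    have : (fun n : ℕ => ((n:ℝ)+1) * R^n) = fun n : ℕ => ((n:ℝ)+1)^1 * R^n := by
      funext n; ring
    rw [this]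
    exact aux_summable_pow hR0 hR1 1
  have hgd : ∀ (n : ℕ), ∀ y ∈ Metric.ball (0:ℂ) R,
      HasDerivAt (fun x : ℂ => (c n : ℂ) * x ^ n) ((c n : ℂ) * ((n:ℂ) * y^(n-1))) y :=
    fun n y _ => (hasDerivAt_pow n y).const_mul _
  have hbound : ∀ (n : ℕ), ∀ y ∈ Metric.ball (0:ℂ) R,
      ‖(c n : ℂ) * ((n:ℂ) * y^(n-1))‖ ≤ c 0 * ((n:ℝ) * R^(n-1)) := by
    intro n y hy
    rw [Metric.mem_ball, dist_zero_right] at hy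
    rw [norm_mul, norm_mul, norm_pow, Complex.norm_real, Real.norm_eq_abs, abs_of_nonneg (hc n),
      Complex.norm_natCast]
    have h1 : c n ≤ c 0 := hmono (Nat.zero_le _)
    have h2 : ‖y‖^(n-1) ≤ R^(n-1) := pow_le_pow_left₀ (norm_nonneg y) hy.le _
    have h3 : (0:ℝ) ≤ (n:ℝ) := Nat.cast_nonneg n
    calc c n * ((n:ℝ) * ‖y‖^(n-1)) ≤ c n * ((n:ℝ) * R^(n-1)) := by
          apply mul_le_mul_of_nonneg_left _ (hc n)
          exact mul_le_mul_of_nonneg_left h2 h3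
      _ ≤ c 0 * ((n:ℝ) * R^(n-1)) := by
          apply mul_le_mul_of_nonneg_right h1
          positivity
  have hg0 : Summable (fun n : ℕ => (c n : ℂ) * z ^ n) := (hf z hz1).summable
  have H := hasDerivAt_tsum_of_isPreconnected hu Metric.isOpen_ball
    (convex_ball (0:ℂ) R).isPreconnected hgd hbound hzt hg0 hzt
  have heq : f =ᶠ[nhds z] (fun y => ∑' n : ℕ, (c n : ℂ) * y ^ n) := by
    filter_upwards [Metric.isOpen_ball.mem_nhds hz1] with y hy
    exact ((hf y hy).tsum_eq).symm
  have H2 : HasDerivAt f (∑' n : ℕ, (c n : ℂ) * ((n:ℂ) * z^(n-1))) z :=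
    H.congr_of_eventuallyEq heq
  -- rewrite the sum
  have hsum' : Summable (fun n : ℕ => (c n : ℂ) * ((n:ℂ) * z^(n-1))) := by
    apply Summable.of_norm
    apply hu.of_nonneg_of_le (fun n => norm_nonneg _)
    intro n
    exact hbound n z hzt
  have : ∑' n : ℕ, (c n : ℂ) * ((n:ℂ) * z^(n-1))
      = ∑' n : ℕ, ((n:ℂ) + 1) * (c (n+1) : ℂ) * z ^ n := by
    rw [Summable.tsum_eq_zero_add hsum']
    simp only [Nat.cast_zero, zero_mul, mul_zero, zero_add, Nat.add_sub_cancel]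
    congr 1
    funext n
    push_cast
    ring
  rwa [this] at H2

lemma aux_gauss (n : ℕ) :
    ∑ m ∈ Finset.range n, ((m:ℝ)+1) = (n:ℝ)*((n:ℝ)+1)/2 := by
  induction n with
  | zero => simp
  | succ n ih => rw [Finset.sum_range_succ, ih]; push_cast; ring

lemma aux_term_norm (c : ℕ → ℝ) (hc : ∀ n, 0 ≤ c n) (w : ℂ) (n : ℕ) :
    ‖((n:ℂ) + 1) * (c (n+1) : ℂ) * w ^ n‖ = ((n:ℝ) + 1) * c (n+1) * ‖w‖ ^ n := by
  rw [norm_mul, norm_mul, norm_pow, Complex.norm_real, Real.norm_eq_abs,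
    abs_of_nonneg (hc _)]
  congr 2
  have h : ((n:ℂ) + 1) = ((n+1 : ℕ) : ℂ) := by push_cast; ring
  rw [h, Complex.norm_natCast]
  push_cast; ring

theorem stmt8 (γ : ℝ) (hγ : 0 < γ) (f : ℂ → ℂ) (c : ℕ → ℝ) (hc : ∀ n, 0 ≤ c n)
    (hmono : Antitone c)
    (hf : ∀ z ∈ Metric.ball (0:ℂ) 1, HasSum (fun n : ℕ => (c n : ℂ) * z ^ n) (f z)) :
    MemBloch (fun s => (1 - s ^ 2) ^ γ) f ↔
      ∃ M : ℝ, ∀ n : ℕ, 1 ≤ n → (n : ℝ) ^ (2 - γ) * c n ≤ M := by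
  constructor
  · rintro ⟨hdiff, S, hS⟩
    rw [mem_upperBounds] at hS
    refine ⟨2 * Real.exp 1 * 2^γ * S, fun n hn => ?_⟩
    have hnr : (1:ℝ) ≤ (n:ℝ) := by exact_mod_cast hn
    have hnp : (0:ℝ) < (n:ℝ) := by linarith
    set x : ℝ := 1/(2*(n:ℝ)) with hxdef
    have hx0 : 0 < x := by positivity
    have hx2 : x ≤ 1/2 := by
      rw [hxdef, div_le_div_iff₀ (by positivity) (by norm_num)]
      linarith
    set r : ℝ := 1 - x with hrdef
    have hr0 : 0 ≤ r := by rw [hrdef]; linarith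
    have hr1 : r < 1 := by rw [hrdef]; linarith
    have hzn : ‖((r:ℝ):ℂ)‖ = r := by
      rw [Complex.norm_real, Real.norm_eq_abs, abs_of_nonneg hr0]
    have hzb : ((r:ℝ):ℂ) ∈ Metric.ball (0:ℂ) 1 := by
      rw [Metric.mem_ball, dist_zero_right, hzn]; exact hr1
    have hD := aux_hasDerivAt c hc hmono f hf (z := ((r:ℝ):ℂ)) (by rw [hzn]; exact hr1)
    have hd : deriv f ((r:ℝ):ℂ) = ∑' m : ℕ, ((m:ℂ) + 1) * (c (m+1) : ℂ) * ((r:ℝ):ℂ) ^ m :=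
      hD.deriv
    have hsum_real : Summable (fun m : ℕ => ((m:ℝ) + 1) * c (m+1) * r ^ m) :=
      aux_summable_deriv_real c hc hmono hr0 hr1
    have hn_eq : ‖deriv f ((r:ℝ):ℂ)‖ = ∑' m : ℕ, ((m:ℝ) + 1) * c (m+1) * r ^ m := by
      rw [hd]
      have h1 : (fun m : ℕ => ((m:ℂ) + 1) * (c (m+1) : ℂ) * ((r:ℝ):ℂ) ^ m)
          = fun m : ℕ => ((((m:ℝ) + 1) * c (m+1) * r ^ m : ℝ) : ℂ) := by
        funext m; push_cast; ring
      rw [h1, ← Complex.ofReal_tsum, Complex.norm_real, Real.norm_eq_abs,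
        abs_of_nonneg]
      apply tsum_nonneg
      intro m
      have := hc (m+1)
      positivity
    have hlow : ((n:ℝ)^2/2) * (c n * r^n) ≤ ∑' m : ℕ, ((m:ℝ) + 1) * c (m+1) * r ^ m := by
      have hfin : ∑ m ∈ Finset.range n, (((m:ℝ) + 1) * (c n * r ^ n))
          ≤ ∑ m ∈ Finset.range n, ((m:ℝ) + 1) * c (m+1) * r ^ m := by
        apply Finset.sum_le_sum
        intro m hm
        rw [Finset.mem_range] at hm
        have h1 : c n ≤ c (m+1) := hmono (by omega)
        have h2 : r^n ≤ r^m := pow_le_pow_of_le_one hr0 (by linarith) (by omega)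
        have h3 : (0:ℝ) ≤ (m:ℝ)+1 := by positivity
        have h4 : c n * r^n ≤ c (m+1) * r^m :=
          mul_le_mul h1 h2 (by positivity) (hc _)
        calc ((m:ℝ)+1) * (c n * r^n) ≤ ((m:ℝ)+1) * (c (m+1) * r^m) :=
              mul_le_mul_of_nonneg_left h4 h3
          _ = ((m:ℝ)+1) * c (m+1) * r^m := by ring
      have hts : ∑ m ∈ Finset.range n, ((m:ℝ) + 1) * c (m+1) * r ^ m
          ≤ ∑' m : ℕ, ((m:ℝ) + 1) * c (m+1) * r ^ m := by
        apply Summable.sum_le_tsum _ _ hsum_real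
        intro m _
        have := hc (m+1)
        positivity
      have hgs : ∑ m ∈ Finset.range n, (((m:ℝ) + 1) * (c n * r ^ n))
          = ((n:ℝ)*((n:ℝ)+1)/2) * (c n * r^n) := by
        rw [← Finset.sum_mul, aux_gauss]
      have h5 : ((n:ℝ)^2/2) * (c n * r^n) ≤ ((n:ℝ)*((n:ℝ)+1)/2) * (c n * r^n) := by
        apply mul_le_mul_of_nonneg_right _ (by have := hc n; positivity)
        nlinarith
      linarith
    have hexp : Real.exp (-1) ≤ r^n := by
      have h2 : (1:ℝ) + 2*x ≤ Real.exp (2*x) := by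
        have := Real.add_one_le_exp (2*x)
        linarith
      have h3 : Real.exp (-(2*x)) ≤ (1+2*x)⁻¹ := by
        rw [Real.exp_neg]
        exact inv_anti₀ (by positivity) h2
      have h4 : (1+2*x)⁻¹ ≤ 1-x := by
        rw [inv_eq_one_div, div_le_iff₀ (by positivity)]
        nlinarith
      have h5 : Real.exp (-(2*x)) ≤ r := by rw [hrdef]; linarith
      have h6 : (Real.exp (-(2*x)))^n ≤ r^n :=
        pow_le_pow_left₀ (Real.exp_nonneg _) h5 n
      have h7 : (Real.exp (-(2*x)))^n = Real.exp (-1) := by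
        rw [← Real.exp_nat_mul]
        congr 1
        rw [hxdef]
        field_simp
      linarith [h6, h7.ge.trans h6]
    -- the sup bound
    have hSz := hS _ (Set.mem_range_self (⟨((r:ℝ):ℂ), hzb⟩ : Metric.ball (0:ℂ) 1))
    simp only at hSz
    rw [hzn] at hSz
    -- hSz : (1 - r^2)^γ * ‖deriv f r‖ ≤ S
    have h1r2 : (0:ℝ) ≤ 1 - r^2 := by nlinarith
    have hν : x^γ ≤ (1-r^2)^γ := by
      apply Real.rpow_le_rpow hx0.le _ hγ.le
      rw [hrdef]; nlinarith
    have hT : ((n:ℝ)^2/2) * (c n * Real.exp (-1)) ≤ ‖deriv f ((r:ℝ):ℂ)‖ := by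
      rw [hn_eq]
      refine le_trans ?_ hlow
      apply mul_le_mul_of_nonneg_left _ (by positivity)
      exact mul_le_mul_of_nonneg_left hexp (hc n)
    have hK1 : x^γ * (((n:ℝ)^2/2) * (c n * Real.exp (-1))) ≤ S := by
      refine le_trans ?_ hSz
      apply mul_le_mul hν hT (by have := hc n; positivity) (Real.rpow_nonneg h1r2 γ)
    -- final algebra
    set P : ℝ := (2*(n:ℝ))^γ with hPdef
    have hPpos : 0 < P := Real.rpow_pos_of_pos (by positivity) γ
    have hxP : x^γ = P⁻¹ := by
      rw [hxdef, hPdef, one_div, Real.inv_rpow (by positivity)]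
    rw [hxP] at hK1
    have hK1b : ((n:ℝ)^2/2) * (c n * Real.exp (-1)) ≤ P * S := by
      have h := mul_le_mul_of_nonneg_left hK1 hPpos.le
      rwa [← mul_assoc, mul_inv_cancel₀ hPpos.ne', one_mul] at h
    have he : Real.exp (-1) * Real.exp 1 = 1 := by
      rw [← Real.exp_add]; norm_num
    have hK2 : (n:ℝ)^2 * c n ≤ 2 * Real.exp 1 * (P * S) := by
      have h8 : (n:ℝ)^2 * c n
          = (((n:ℝ)^2/2) * (c n * Real.exp (-1))) * (2 * Real.exp 1) := by
        have h9 : (((n:ℝ)^2/2) * (c n * Real.exp (-1))) * (2 * Real.exp 1)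
            = (n:ℝ)^2 * c n * (Real.exp (-1) * Real.exp 1) := by ring
        rw [h9, he, mul_one]
      rw [h8]
      calc (((n:ℝ)^2/2) * (c n * Real.exp (-1))) * (2 * Real.exp 1)
          ≤ (P * S) * (2 * Real.exp 1) := mul_le_mul_of_nonneg_right hK1b (by positivity)
        _ = 2 * Real.exp 1 * (P * S) := by ring
    have hPsplit : P = 2^γ * (n:ℝ)^γ := by
      rw [hPdef, Real.mul_rpow (by norm_num) hnp.le]
    have hsplit : (n:ℝ)^(2-γ) = (n:ℝ)^2 * (n:ℝ)^(-γ) := by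
      rw [show (2:ℝ) - γ = 2 + (-γ) by ring, Real.rpow_add hnp]
      congr 1
      rw [← Real.rpow_natCast (n:ℝ) 2]
      norm_num
    have hcancel : (n:ℝ)^γ * (n:ℝ)^(-γ) = 1 := by
      rw [← Real.rpow_add hnp]; simp
    calc (n:ℝ)^(2-γ) * c n = ((n:ℝ)^2 * c n) * (n:ℝ)^(-γ) := by rw [hsplit]; ring
      _ ≤ (2 * Real.exp 1 * (P * S)) * (n:ℝ)^(-γ) :=
          mul_le_mul_of_nonneg_right hK2 (Real.rpow_nonneg hnp.le _)
      _ = 2 * Real.exp 1 * 2^γ * S * ((n:ℝ)^γ * (n:ℝ)^(-γ)) := by rw [hPsplit]; ring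
      _ = 2 * Real.exp 1 * 2^γ * S := by rw [hcancel, mul_one]
  · rintro ⟨M, hM⟩
    have hM' : ∀ m : ℕ, c (m+1) ≤ M * ((m:ℝ)+1)^(γ-2) := by
      intro m
      have h1 := hM (m+1) (by omega)
      have hA : (0:ℝ) < (m:ℝ)+1 := by positivity
      have hcast : ((m+1:ℕ):ℝ) = (m:ℝ)+1 := by push_cast; ring
      rw [hcast] at h1
      have h2 := mul_le_mul_of_nonneg_left h1 (Real.rpow_nonneg hA.le (γ-2))
      have h3 : ((m:ℝ)+1)^(γ-2) * (((m:ℝ)+1)^(2-γ) * c (m+1)) = c (m+1) := by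
        rw [← mul_assoc, ← Real.rpow_add hA]
        norm_num
      rw [h3, mul_comm] at h2
      exact h2
    have hM0 : 0 ≤ M := by
      have h := (hc 1).trans (hM' 0)
      simpa using h
    obtain ⟨C, hC, hCb⟩ := aux_key hγ
    constructor
    · intro z hz
      rw [Metric.mem_ball, dist_zero_right] at hz
      exact (aux_hasDerivAt c hc hmono f hf hz).differentiableAt.differentiableWithinAt
    · refine ⟨2^γ * (M*C), ?_⟩
      rintro v ⟨z, rfl⟩
      have hz1 : ‖(z:ℂ)‖ < 1 := by
        have := z.2
        rwa [Metric.mem_ball, dist_zero_right] at this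
      set t := ‖(z:ℂ)‖ with htdef
      have ht0 : 0 ≤ t := norm_nonneg _
      have h1t : (0:ℝ) < 1 - t := by linarith
      have hd := (aux_hasDerivAt c hc hmono f hf hz1).deriv
      have hnormfun : (fun m : ℕ => ‖((m:ℂ)+1)*(c (m+1):ℂ)*(z:ℂ)^m‖)
          = fun m : ℕ => ((m:ℝ)+1)*c (m+1)*t^m := funext (aux_term_norm c hc (z:ℂ))
      have hns : Summable (fun m : ℕ => ‖((m:ℂ)+1)*(c (m+1):ℂ)*(z:ℂ)^m‖) := by
        rw [hnormfun]
        exact aux_summable_deriv_real c hc hmono ht0 hz1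
      have hnorm : ‖deriv f (z:ℂ)‖ ≤ ∑' m : ℕ, ((m:ℝ)+1) * c (m+1) * t^m := by
        rw [hd]
        calc ‖∑' m : ℕ, ((m:ℂ)+1)*(c (m+1):ℂ)*(z:ℂ)^m‖
            ≤ ∑' m : ℕ, ‖((m:ℂ)+1)*(c (m+1):ℂ)*(z:ℂ)^m‖ := norm_tsum_le_tsum_norm hns
          _ = ∑' m : ℕ, ((m:ℝ)+1)*c (m+1)*t^m := by rw [hnormfun]
      have hstep : ∑' m : ℕ, ((m:ℝ)+1)*c (m+1)*t^m
          ≤ M * ∑' m : ℕ, ((m:ℝ)+1)^(γ-1)*t^m := by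
        rw [← tsum_mul_left]
        apply Summable.tsum_le_tsum _ (aux_summable_deriv_real c hc hmono ht0 hz1)
          ((aux_summable_rpow ht0 hz1 _).mul_left M)
        intro m
        have hA : (0:ℝ) < (m:ℝ)+1 := by positivity
        have h5 : ((m:ℝ)+1) * ((m:ℝ)+1)^(γ-2) = ((m:ℝ)+1)^(γ-1) := by
          nth_rewrite 1 [← Real.rpow_one ((m:ℝ)+1)]
          rw [← Real.rpow_add hA]
          congr 1
          ring
        calc ((m:ℝ)+1)*c (m+1)*t^m ≤ ((m:ℝ)+1)*(M * ((m:ℝ)+1)^(γ-2))*t^m := by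
              apply mul_le_mul_of_nonneg_right _ (by positivity)
              exact mul_le_mul_of_nonneg_left (hM' m) hA.le
          _ = M * ((((m:ℝ)+1) * ((m:ℝ)+1)^(γ-2)) * t^m) := by ring
          _ = M * (((m:ℝ)+1)^(γ-1) * t^m) := by rw [h5]
      have hB := hCb t ht0 hz1
      have hDb : ‖deriv f (z:ℂ)‖ ≤ M * (C * (1-t)^(-γ)) :=
        hnorm.trans (hstep.trans (mul_le_mul_of_nonneg_left hB hM0))
      have h6 : (0:ℝ) ≤ 1-t^2 := by nlinarith
      have hν2 : (1-t^2)^γ ≤ 2^γ*(1-t)^γ := by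
        have h7 : 1-t^2 ≤ 2*(1-t) := by nlinarith
        calc (1-t^2)^γ ≤ (2*(1-t))^γ := Real.rpow_le_rpow h6 h7 hγ.le
          _ = 2^γ*(1-t)^γ := Real.mul_rpow (by norm_num) h1t.le
      have hfinal : (1-t^2)^γ * ‖deriv f (z:ℂ)‖ ≤ 2^γ * (M*C) := by
        calc (1-t^2)^γ * ‖deriv f (z:ℂ)‖
            ≤ (2^γ*(1-t)^γ) * (M * (C * (1-t)^(-γ))) := by
              apply mul_le_mul hν2 hDb (norm_nonneg _)
              positivity
          _ = 2^γ * (M*C) * ((1-t)^γ * (1-t)^(-γ)) := by ring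
          _ = 2^γ * (M*C) := by
              rw [← Real.rpow_add h1t]
              simp
      simpa using hfinal

end Aux
end

section
/- Let ω be a normal weight on [0,1), μ a positive Borel measure on [0,1), and α > -1. If ∫_0^1 (ω̃(t) + 1) dμ(t) < ∞, where ω̃(t) = ∫_0^t ds/ω(s), then for every f ∈ B_ω the integral I_{μ,α+1}(f)(z) = ∫_0^1 f(t)/(1-tz)^{α+1} dμ(t) converges absolutely for every z in the unit disk and defines an analytic function on the disk, with the uniform bound |I_{μ,α+1}(f)(z)| ≤ C‖f‖_{B_ω}/(1-r)^{α+1} for |z| ≤ r < 1. -/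
open MeasureTheory Set Filter

section Aux

lemma aux_tz_norm {t r : ℝ} {z : ℂ} (ht0 : 0 ≤ t) (ht1 : t ≤ 1) (hz : ‖z‖ ≤ r) :
    1 - r ≤ ‖1 - (t : ℂ) * z‖ := by
  have h1 : ‖(t : ℂ) * z‖ ≤ r := by
    rw [norm_mul, Complex.norm_real, Real.norm_eq_abs, abs_of_nonneg ht0]
    calc t * ‖z‖ ≤ 1 * r := mul_le_mul ht1 hz (norm_nonneg z) zero_le_one
      _ = r := one_mul r
  calc 1 - r ≤ ‖(1 : ℂ)‖ - ‖(t : ℂ) * z‖ := by rw [norm_one]; linarith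
    _ ≤ ‖1 - (t : ℂ) * z‖ := norm_sub_norm_le _ _

lemma aux_ne_zero {t r : ℝ} {z : ℂ} (ht0 : 0 ≤ t) (ht1 : t ≤ 1) (hz : ‖z‖ ≤ r)
    (hr : r < 1) : 1 - (t : ℂ) * z ≠ 0 := by
  intro h
  have := aux_tz_norm ht0 ht1 hz
  rw [h, norm_zero] at this
  linarith

lemma aux_slit {t r : ℝ} {z : ℂ} (ht0 : 0 ≤ t) (ht1 : t ≤ 1) (hz : ‖z‖ ≤ r)
    (hr : r < 1) : 1 - (t : ℂ) * z ∈ Complex.slitPlane := by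
  rw [Complex.mem_slitPlane_iff]
  left
  have h1 : ((t : ℂ) * z).re ≤ r := by
    have h2 := Complex.re_le_norm ((t : ℂ) * z)
    have h3 : ‖(t : ℂ) * z‖ ≤ r := by
      rw [norm_mul, Complex.norm_real, Real.norm_eq_abs, abs_of_nonneg ht0]
      calc t * ‖z‖ ≤ 1 * r := mul_le_mul ht1 hz (norm_nonneg z) zero_le_one
        _ = r := one_mul r
    linarith
  simp only [Complex.sub_re, Complex.one_re]
  linarith

lemma aux_cpow_norm {β : ℝ} {w : ℂ} (hw : w ≠ 0) : ‖w ^ ((β : ℝ) : ℂ)‖ = ‖w‖ ^ β := by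
  exact Complex.norm_cpow_real w β

end Aux

theorem stmt10 (ω : ℝ → ℝ) (a b : ℝ) (hω : IsNormal ω a b) (μ : Measure ℝ) (α : ℝ)
    (hα : -1 < α)
    (hμ : Integrable (fun t => tildeW ω t + 1) (μ.restrict (Ico 0 1))) :
    ∃ C > 0, ∀ f : ℂ → ℂ, MemBloch ω f →
      (∀ z ∈ Metric.ball (0:ℂ) 1,
          Integrable (fun t : ℝ => f (t : ℂ) / (1 - (t : ℂ) * z) ^ ((α : ℂ) + 1))
            (μ.restrict (Ico 0 1)))
      ∧ DifferentiableOn ℂ (intHilbert μ α f) (Metric.ball 0 1)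
      ∧ ∀ r ∈ Ico (0:ℝ) 1, ∀ z : ℂ, ‖z‖ ≤ r →
          ‖intHilbert μ α f z‖ ≤ C * blochNorm ω f / (1 - r) ^ (α + 1) := by
  obtain ⟨ha, hab, hωpos, hωcont, _h5, _h6⟩ := hω
  have hcpos : (0:ℝ) < α + 1 := by linarith
  set M₀ : ℝ := ∫ t in Ico (0:ℝ) 1, (tildeW ω t + 1) ∂μ with hM₀def
  have htW : ∀ t ∈ Ico (0:ℝ) 1, 0 ≤ tildeW ω t := by
    intro t ht
    refine intervalIntegral.integral_nonneg ht.1 fun s hs => ?_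
    have hωs : 0 < ω s := hωpos s ⟨hs.1, lt_of_le_of_lt hs.2 ht.2⟩
    positivity
  have hM₀0 : 0 ≤ M₀ :=
    MeasureTheory.setIntegral_nonneg measurableSet_Ico fun t ht => by
      have := htW t ht; linarith
  refine ⟨M₀ + 1, by linarith, fun f hf => ?_⟩
  obtain ⟨hfd, hfb⟩ := hf
  have hfc : ContinuousOn f (Metric.ball 0 1) := hfd.continuousOn
  have hfd' : ContinuousOn (deriv f) (Metric.ball 0 1) :=
    ((hfd.analyticOnNhd Metric.isOpen_ball).deriv).continuousOn
  set Ms : ℝ := ⨆ z : Metric.ball (0:ℂ) 1, ω ‖(z : ℂ)‖ * ‖deriv f z‖ with hMsdef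
  set M : ℝ := blochNorm ω f with hMdef
  have hMeq : M = ‖f 0‖ + Ms := rfl
  have hmem : ∀ t ∈ Ico (0:ℝ) 1, ((t : ℂ) ∈ Metric.ball (0:ℂ) 1) := by
    intro t ht
    simp only [Metric.mem_ball, dist_eq_norm, sub_zero, Complex.norm_real,
      Real.norm_eq_abs, abs_of_nonneg ht.1]
    exact ht.2
  have hnrm : ∀ t ∈ Ico (0:ℝ) 1, ‖(t : ℂ)‖ = t := by
    intro t ht
    rw [Complex.norm_real, Real.norm_eq_abs, abs_of_nonneg ht.1]
  have hMs0 : 0 ≤ Ms := by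
    have h0 : ((0:ℂ)) ∈ Metric.ball (0:ℂ) 1 := by simp
    have h1 := le_ciSup hfb (⟨0, h0⟩ : Metric.ball (0:ℂ) 1)
    have h2 : (0:ℝ) < ω ‖((0:ℂ))‖ := by
      simpa using hωpos 0 ⟨le_refl 0, one_pos⟩
    refine le_trans ?_ h1
    simp only
    positivity
  have hM0 : 0 ≤ M := by rw [hMeq]; have := norm_nonneg (f 0); linarith
  have hMsM : Ms ≤ M := by rw [hMeq]; have := norm_nonneg (f 0); linarith
  have hf0M : ‖f 0‖ ≤ M := by rw [hMeq]; linarith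
  -- pointwise bound on f
  have hfbound : ∀ t ∈ Ico (0:ℝ) 1, ‖f t‖ ≤ M * (tildeW ω t + 1) := by
    intro t ht
    have hIcc : Icc (0:ℝ) t ⊆ Ico (0:ℝ) 1 := fun s hs => ⟨hs.1, lt_of_le_of_lt hs.2 ht.2⟩
    have hderiv : ∀ s ∈ uIcc (0:ℝ) t, HasDerivAt (fun s : ℝ => f s) (deriv f s) s := by
      intro s hs
      rw [uIcc_of_le ht.1] at hs
      have hsball : (s : ℂ) ∈ Metric.ball (0:ℂ) 1 := hmem s (hIcc hs)
      exact ((hfd.differentiableAt (Metric.isOpen_ball.mem_nhds hsball)).hasDerivAt).comp_ofReal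
    have hcontd : ContinuousOn (fun s : ℝ => deriv f s) (uIcc (0:ℝ) t) := by
      rw [uIcc_of_le ht.1]
      exact hfd'.comp Complex.continuous_ofReal.continuousOn fun s hs => hmem s (hIcc hs)
    have hint : IntervalIntegrable (fun s : ℝ => deriv f (s : ℂ)) MeasureTheory.volume 0 t :=
      hcontd.intervalIntegrable
    have hFTC := intervalIntegral.integral_eq_sub_of_hasDerivAt hderiv hint
    have h1ω : IntervalIntegrable (fun s => 1 / ω s) MeasureTheory.volume 0 t := by
      apply ContinuousOn.intervalIntegrable
      rw [uIcc_of_le ht.1]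
      exact continuousOn_const.div (hωcont.mono hIcc) fun s hs => (hωpos s (hIcc hs)).ne'
    have hnormint : IntervalIntegrable (fun s : ℝ => ‖deriv f (s : ℂ)‖) MeasureTheory.volume 0 t :=
      hcontd.norm.intervalIntegrable
    have hb : ∫ s in (0:ℝ)..t, ‖deriv f (s : ℂ)‖ ≤ ∫ s in (0:ℝ)..t, Ms * (1 / ω s) := by
      refine intervalIntegral.integral_mono_on ht.1 hnormint (h1ω.const_mul Ms) fun s hs => ?_
      have hsI := hIcc hs
      have hωs : 0 < ω s := hωpos s hsI
      have hsb : (s : ℂ) ∈ Metric.ball (0:ℂ) 1 := hmem s hsI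
      have hsup := le_ciSup hfb (⟨(s : ℂ), hsb⟩ : Metric.ball (0:ℂ) 1)
      simp only at hsup
      rw [hnrm s hsI] at hsup
      rw [mul_one_div, le_div_iff₀ hωs]
      nlinarith [norm_nonneg (deriv f (s : ℂ))]
    have htW' : ∫ s in (0:ℝ)..t, Ms * (1 / ω s) = Ms * tildeW ω t := by
      rw [tildeW, ← intervalIntegral.integral_const_mul]
    have hdiff : ‖f t - f 0‖ ≤ Ms * tildeW ω t := by
      have h0 : f ((0:ℝ) : ℂ) = f 0 := by norm_num
      rw [← h0]
      calc ‖f t - f ((0:ℝ):ℂ)‖ = ‖∫ s in (0:ℝ)..t, deriv f (s : ℂ)‖ := by rw [hFTC]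
        _ ≤ ∫ s in (0:ℝ)..t, ‖deriv f (s : ℂ)‖ :=
            intervalIntegral.norm_integral_le_integral_norm ht.1
        _ ≤ ∫ s in (0:ℝ)..t, Ms * (1 / ω s) := hb
        _ = Ms * tildeW ω t := htW'
    have h2 : ‖f t‖ ≤ ‖f 0‖ + ‖f t - f 0‖ := by
      calc ‖f t‖ = ‖f 0 + (f t - f 0)‖ := by ring_nf
        _ ≤ ‖f 0‖ + ‖f t - f 0‖ := norm_add_le _ _
    have h3 := htW t ht
    nlinarith [mul_le_mul_of_nonneg_right hMsM h3]
  -- measurability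
  have hFmeas : ∀ z : ℂ, ‖z‖ < 1 → MeasureTheory.AEStronglyMeasurable
      (fun t : ℝ => f (t : ℂ) / (1 - (t : ℂ) * z) ^ ((α : ℂ) + 1)) (μ.restrict (Ico 0 1)) := by
    intro z hz
    refine ContinuousOn.aestronglyMeasurable ?_ measurableSet_Ico
    refine ContinuousOn.div ?_ ?_ ?_
    · exact hfc.comp Complex.continuous_ofReal.continuousOn fun t ht => hmem t ht
    · intro t ht
      have hslit := aux_slit ht.1 ht.2.le (le_refl ‖z‖) hz
      have hbase : ContinuousWithinAt (fun t : ℝ => 1 - (t : ℂ) * z) (Ico 0 1) t :=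
        (continuous_const.sub (Complex.continuous_ofReal.mul continuous_const)).continuousWithinAt
      exact ContinuousAt.comp_continuousWithinAt (g := fun w : ℂ => w ^ ((α : ℂ) + 1))
        (f := fun t : ℝ => 1 - (t : ℂ) * z) (continuousAt_cpow_const hslit) hbase
    · intro t ht
      have hne := aux_ne_zero ht.1 ht.2.le (le_refl ‖z‖) hz
      simp [Complex.cpow_eq_zero_iff, hne]
  -- pointwise bound
  have hptbound : ∀ r : ℝ, r < 1 → ∀ z : ℂ, ‖z‖ ≤ r → ∀ t ∈ Ico (0:ℝ) 1,
      ‖f (t : ℂ) / (1 - (t : ℂ) * z) ^ ((α : ℂ) + 1)‖ ≤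
        (M / (1 - r) ^ (α + 1)) * (tildeW ω t + 1) := by
    intro r hr z hz t ht
    have hne := aux_ne_zero ht.1 ht.2.le hz hr
    have h1r : (0:ℝ) < 1 - r := by linarith
    have hcast : ((α : ℂ) + 1) = (((α + 1 : ℝ)) : ℂ) := by push_cast; ring
    rw [norm_div, hcast, aux_cpow_norm hne]
    have hden : (1 - r) ^ (α + 1) ≤ ‖1 - (t : ℂ) * z‖ ^ (α + 1) :=
      Real.rpow_le_rpow h1r.le (aux_tz_norm ht.1 ht.2.le hz) hcpos.le
    have hdenpos : (0:ℝ) < (1 - r) ^ (α + 1) := Real.rpow_pos_of_pos h1r _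
    have hnum := hfbound t ht
    have h4 : ‖f (t : ℂ)‖ / ‖1 - (t : ℂ) * z‖ ^ (α + 1) ≤
        (M * (tildeW ω t + 1)) / (1 - r) ^ (α + 1) :=
      div_le_div₀ (by have := htW t ht; positivity) hnum hdenpos hden
    calc ‖f (t : ℂ)‖ / ‖1 - (t : ℂ) * z‖ ^ (α + 1)
        ≤ (M * (tildeW ω t + 1)) / (1 - r) ^ (α + 1) := h4
      _ = (M / (1 - r) ^ (α + 1)) * (tildeW ω t + 1) := by ring
  -- integrability
  have hInt : ∀ z ∈ Metric.ball (0:ℂ) 1,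
      MeasureTheory.Integrable (fun t : ℝ => f (t : ℂ) / (1 - (t : ℂ) * z) ^ ((α : ℂ) + 1))
        (μ.restrict (Ico 0 1)) := by
    intro z hz
    have hz1 : ‖z‖ < 1 := by simpa [dist_eq_norm] using hz
    refine MeasureTheory.Integrable.mono' (hμ.const_mul (M / (1 - ‖z‖) ^ (α + 1)))
      (hFmeas z hz1) ?_
    exact MeasureTheory.ae_restrict_of_forall_mem measurableSet_Ico
      fun t ht => hptbound ‖z‖ hz1 z (le_refl _) t ht
  refine ⟨hInt, ?_, ?_⟩
  · -- differentiability
    intro z₀ hz₀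
    have hz₀n : ‖z₀‖ < 1 := by simpa [dist_eq_norm] using hz₀
    set r : ℝ := (1 + ‖z₀‖) / 2 with hrdef
    set ε : ℝ := (1 - ‖z₀‖) / 2 with hεdef
    have hεpos : 0 < ε := by rw [hεdef]; linarith
    have hr1 : r < 1 := by rw [hrdef]; linarith
    have h1r : (0:ℝ) < 1 - r := by linarith
    have hrball : ∀ z ∈ Metric.ball z₀ ε, ‖z‖ ≤ r := by
      intro z hz
      have h1 : ‖z - z₀‖ < ε := by simpa [dist_eq_norm] using hz
      have h2 : ‖z‖ ≤ ‖z₀‖ + ‖z - z₀‖ := by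
        calc ‖z‖ = ‖z₀ + (z - z₀)‖ := by ring_nf
          _ ≤ ‖z₀‖ + ‖z - z₀‖ := norm_add_le _ _
      rw [hrdef]; linarith
    set c : ℂ := (α : ℂ) + 1 with hcdef
    have hF'meas : MeasureTheory.AEStronglyMeasurable
        (fun t : ℝ => f (t : ℂ) * (-c * (1 - (t : ℂ) * z₀) ^ (-c - 1) * (-(t : ℂ))))
        (μ.restrict (Ico 0 1)) := by
      refine ContinuousOn.aestronglyMeasurable ?_ measurableSet_Ico
      refine ContinuousOn.mul
        (hfc.comp Complex.continuous_ofReal.continuousOn fun t ht => hmem t ht) ?_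
      refine ContinuousOn.mul (ContinuousOn.mul continuousOn_const ?_) ?_
      · intro t ht
        have hslit := aux_slit ht.1 ht.2.le (hrball z₀ (Metric.mem_ball_self hεpos)) hr1
        have hbase : ContinuousWithinAt (fun t : ℝ => 1 - (t : ℂ) * z₀) (Ico 0 1) t :=
          (continuous_const.sub (Complex.continuous_ofReal.mul continuous_const)).continuousWithinAt
        exact ContinuousAt.comp_continuousWithinAt (g := fun w : ℂ => w ^ (-c - 1))
          (f := fun t : ℝ => 1 - (t : ℂ) * z₀) (continuousAt_cpow_const hslit) hbase
      · exact (Complex.continuous_ofReal.neg).continuousOn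
    have key := hasDerivAt_integral_of_dominated_loc_of_deriv_le (μ := μ.restrict (Ico 0 1))
      (F := fun z (t : ℝ) => f (t : ℂ) / (1 - (t : ℂ) * z) ^ c)
      (F' := fun z (t : ℝ) => f (t : ℂ) * (-c * (1 - (t : ℂ) * z) ^ (-c - 1) * (-(t : ℂ))))
      (x₀ := z₀)
      (bound := fun t => M * (tildeW ω t + 1) * ((α + 1) * (1 - r) ^ (-(α + 2))) )
      (Metric.ball_mem_nhds z₀ hεpos)
      (Filter.eventually_of_mem (Metric.isOpen_ball.mem_nhds hz₀) fun z hz =>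
        hFmeas z (by simpa [dist_eq_norm] using hz))
      (hInt z₀ hz₀) hF'meas
      ?_ ((hμ.const_mul M).mul_const _) ?_
    · exact key.2.differentiableAt.differentiableWithinAt
    · -- bound on F'
      refine MeasureTheory.ae_restrict_of_forall_mem measurableSet_Ico fun t ht z hz => ?_
      have hzr := hrball z hz
      have hne := aux_ne_zero ht.1 ht.2.le hzr hr1
      have hcast : (-c - 1) = (((-(α + 2) : ℝ)) : ℂ) := by rw [hcdef]; push_cast; ring
      rw [norm_mul, norm_mul, norm_mul, norm_neg, norm_neg, hcast, aux_cpow_norm hne,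
        hnrm t ht]
      have hcnorm : ‖c‖ = α + 1 := by
        rw [hcdef]
        have : (α : ℂ) + 1 = (((α + 1 : ℝ)) : ℂ) := by push_cast; ring
        rw [this, Complex.norm_real, Real.norm_eq_abs, abs_of_pos hcpos]
      rw [hcnorm]
      have hpow : ‖1 - (t : ℂ) * z‖ ^ (-(α + 2)) ≤ (1 - r) ^ (-(α + 2)) :=
        Real.rpow_le_rpow_of_nonpos h1r (aux_tz_norm ht.1 ht.2.le hzr) (by linarith)
      have hft := hfbound t ht
      have htW1 := htW t ht
      have hppos : (0:ℝ) < (1 - r) ^ (-(α + 2)) := Real.rpow_pos_of_pos h1r _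
      have hppos2 : (0:ℝ) ≤ ‖1 - (t : ℂ) * z‖ ^ (-(α + 2)) := Real.rpow_nonneg (norm_nonneg _) _
      calc ‖f (t : ℂ)‖ * ((α + 1) * ‖1 - (t : ℂ) * z‖ ^ (-(α + 2)) * t)
          ≤ (M * (tildeW ω t + 1)) * ((α + 1) * ((1 - r) ^ (-(α + 2))) * 1) := by
            apply mul_le_mul hft ?_ ?_ (by nlinarith)
            · apply mul_le_mul ?_ ht.2.le ht.1 (mul_nonneg hcpos.le hppos.le)
              exact mul_le_mul_of_nonneg_left hpow hcpos.le
            · exact mul_nonneg (mul_nonneg hcpos.le hppos2) ht.1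
        _ = M * (tildeW ω t + 1) * ((α + 1) * (1 - r) ^ (-(α + 2))) := by ring
    · -- derivative
      refine MeasureTheory.ae_restrict_of_forall_mem measurableSet_Ico fun t ht z hz => ?_
      have hzr := hrball z hz
      have hslit := aux_slit ht.1 ht.2.le hzr hr1
      have hne := aux_ne_zero ht.1 ht.2.le hzr hr1
      have h1 : HasDerivAt (fun z : ℂ => 1 - (t : ℂ) * z) (-(t : ℂ)) z := by
        simpa using ((hasDerivAt_id z).const_mul (t : ℂ)).const_sub (1 : ℂ)
      have h2 := HasDerivAt.cpow_const (c := -c) h1 hslit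
      have h3 := h2.const_mul (f (t : ℂ))
      have hfun : (fun z : ℂ => f (t : ℂ) / (1 - (t : ℂ) * z) ^ c) =
          fun z : ℂ => f (t : ℂ) * (1 - (t : ℂ) * z) ^ (-c) := by
        funext w
        rw [Complex.cpow_neg, div_eq_mul_inv]
      rw [hfun]
      exact h3

  · -- norm bound
    intro r hr z hzr
    have hz1 : ‖z‖ < 1 := lt_of_le_of_lt hzr hr.2
    have h1r : (0:ℝ) < 1 - r := by linarith [hr.2]
    have hdenpos : (0:ℝ) < (1 - r) ^ (α + 1) := Real.rpow_pos_of_pos h1r _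
    have key : ‖intHilbert μ α f z‖ ≤
        ∫ t in Ico (0:ℝ) 1, (M / (1 - r) ^ (α + 1)) * (tildeW ω t + 1) ∂μ := by
      refine MeasureTheory.norm_integral_le_of_norm_le (hμ.const_mul _) ?_
      exact MeasureTheory.ae_restrict_of_forall_mem measurableSet_Ico
        fun t ht => hptbound r hr.2 z hzr t ht
    have heq : ∫ t in Ico (0:ℝ) 1, (M / (1 - r) ^ (α + 1)) * (tildeW ω t + 1) ∂μ =
        (M / (1 - r) ^ (α + 1)) * M₀ := by
      rw [hM₀def, ← MeasureTheory.integral_const_mul]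
    rw [heq] at key
    calc ‖intHilbert μ α f z‖ ≤ (M / (1 - r) ^ (α + 1)) * M₀ := key
      _ = M * M₀ / (1 - r) ^ (α + 1) := by ring
      _ ≤ (M₀ + 1) * M / (1 - r) ^ (α + 1) := by
          rw [div_le_div_iff₀ hdenpos hdenpos]
          nlinarith
end

section
/- Let ω be a normal weight on [0,1), μ a positive Borel measure on [0,1), and α > -1. If the operator I_{μ,α+1}(f)(z) = ∫_0^1 f(t)/(1-tz)^{α+1} dμ(t) is well defined (finite) at z = 0 for every f ∈ B_ω, then ∫_0^1 (ω̃(t) + 1) dμ(t) < ∞, where ω̃(t) = ∫_0^t ds/ω(s). -/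
open MeasureTheory Set Filter

noncomputable def rseq (n : ℕ) : ℝ := 1 - (1/2)^n

lemma rseq_zero : rseq 0 = 0 := by simp [rseq]

lemma one_sub_rseq (n : ℕ) : 1 - rseq n = (1/2)^n := by simp [rseq]

lemma rseq_mem (n : ℕ) : rseq n ∈ Ico (0:ℝ) 1 := by
  constructor
  · have : ((1:ℝ)/2)^n ≤ 1 := pow_le_one₀ (by norm_num) (by norm_num)
    simp only [rseq, sub_nonneg]; exact this
  · have : (0:ℝ) < (1/2)^n := by positivity
    simp only [rseq]; linarith

lemma rseq_mono {m n : ℕ} (h : m ≤ n) : rseq m ≤ rseq n := by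
  have := pow_le_pow_of_le_one (by norm_num : (0:ℝ) ≤ 1/2) (by norm_num) h
  simp only [rseq]; linarith

lemma exists_rseq_index {ρ : ℝ} (h0 : 0 ≤ ρ) (h1 : ρ < 1) :
    ∃ N, rseq N ≤ ρ ∧ ρ < rseq (N+1) := by
  have hex : ∃ n, ρ < rseq (n+1) := by
    obtain ⟨n, hn⟩ := exists_pow_lt_of_lt_one (by linarith : (0:ℝ) < 1 - ρ)
      (by norm_num : (1:ℝ)/2 < 1)
    refine ⟨n, ?_⟩
    have h2 : ((1:ℝ)/2)^(n+1) ≤ (1/2)^n :=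
      pow_le_pow_of_le_one (by norm_num) (by norm_num) (by omega)
    simp only [rseq]; linarith
  classical
  refine ⟨Nat.find hex, ?_, Nat.find_spec hex⟩
  rcases Nat.eq_zero_or_eq_succ_pred (Nat.find hex) with h | h
  · rw [h, rseq_zero]; exact h0
  · have := Nat.find_min hex (m := Nat.find hex - 1) (by omega)
    push_neg at this
    have h2 : Nat.find hex - 1 + 1 = Nat.find hex := by omega
    rw [← h2]; exact this


noncomputable def cc (ω : ℝ → ℝ) (n : ℕ) : ℝ := 1 / ω (rseq n)

lemma rpow_pow_comm {x : ℝ} (hx : 0 ≤ x) (a : ℝ) (k : ℕ) : ((x^k : ℝ))^a = (x^a)^k := by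
  rw [← Real.rpow_natCast x k, ← Real.rpow_natCast (x^a) k, ← Real.rpow_mul hx,
    ← Real.rpow_mul hx, mul_comm]

lemma sq_bounds {x : ℝ} (hx : x ∈ Ico (0:ℝ) 1) :
    0 < 1 - x^2 ∧ 1 - x ≤ 1 - x^2 ∧ 1 - x^2 ≤ 2*(1-x) := by
  obtain ⟨h0, h1⟩ := hx
  refine ⟨by nlinarith, by nlinarith, by nlinarith⟩

section Normal
variable {ω : ℝ → ℝ} {a b C₁ C₂ : ℝ}

lemma dec_le (hpos : ∀ s ∈ Ico (0:ℝ) 1, 0 < ω s) (hC₁ : 1 ≤ C₁)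
    (hd : ∀ x ∈ Ico (0:ℝ) 1, ∀ y ∈ Ico (0:ℝ) 1, x < y →
      ω y / (1-y^2)^a ≤ C₁ * (ω x / (1-x^2)^a))
    {x y : ℝ} (hx : x ∈ Ico (0:ℝ) 1) (hy : y ∈ Ico (0:ℝ) 1) (hxy : x ≤ y) :
    ω y * (1 - x^2)^a ≤ C₁ * (ω x * (1 - y^2)^a) := by
  have px := (sq_bounds hx).1
  have py := (sq_bounds hy).1
  have pxa : (0:ℝ) < (1-x^2)^a := Real.rpow_pos_of_pos px a
  have pya : (0:ℝ) < (1-y^2)^a := Real.rpow_pos_of_pos py a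
  rcases eq_or_lt_of_le hxy with rfl | hlt
  · nlinarith [hpos x hx, mul_pos (hpos x hx) pxa]
  · have h' := hd x hx y hy hlt
    rw [← mul_div_assoc, div_le_div_iff₀ pya pxa] at h'
    rw [← mul_assoc]; exact h'

lemma inc_le (hpos : ∀ s ∈ Ico (0:ℝ) 1, 0 < ω s) (hC₂ : 1 ≤ C₂)
    (hi : ∀ x ∈ Ico (0:ℝ) 1, ∀ y ∈ Ico (0:ℝ) 1, x < y →
      ω x / (1-x^2)^b ≤ C₂ * (ω y / (1-y^2)^b))
    {x y : ℝ} (hx : x ∈ Ico (0:ℝ) 1) (hy : y ∈ Ico (0:ℝ) 1) (hxy : x ≤ y) :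
    ω x * (1 - y^2)^b ≤ C₂ * (ω y * (1 - x^2)^b) := by
  have px := (sq_bounds hx).1
  have py := (sq_bounds hy).1
  have pxb : (0:ℝ) < (1-x^2)^b := Real.rpow_pos_of_pos px b
  have pyb : (0:ℝ) < (1-y^2)^b := Real.rpow_pos_of_pos py b
  rcases eq_or_lt_of_le hxy with rfl | hlt
  · nlinarith [hpos x hx, mul_pos (hpos x hx) pxb]
  · have h' := hi x hx y hy hlt
    rw [← mul_div_assoc, div_le_div_iff₀ pxb pyb] at h'
    rw [← mul_assoc]; exact h'
end Normal

section Est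
variable {ω : ℝ → ℝ} {a b C₁ C₂ : ℝ}

lemma cc_pos (hpos : ∀ s ∈ Ico (0:ℝ) 1, 0 < ω s) (n : ℕ) : 0 < cc ω n :=
  div_pos one_pos (hpos _ (rseq_mem n))

lemma upper_small (ha : 0 < a) (hpos : ∀ s ∈ Ico (0:ℝ) 1, 0 < ω s) (hC₁ : 1 ≤ C₁)
    (hd : ∀ x ∈ Ico (0:ℝ) 1, ∀ y ∈ Ico (0:ℝ) 1, x < y →
      ω y / (1-y^2)^a ≤ C₁ * (ω x / (1-x^2)^a))
    {n N : ℕ} (hnN : n ≤ N) {ρ : ℝ} (hρ : ρ ∈ Ico (0:ℝ) 1) (hNρ : rseq N ≤ ρ) :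
    ω ρ * cc ω n ≤ C₁ * 2^a * ((1/2:ℝ)^a)^(N-n) := by
  have hωn := hpos _ (rseq_mem n)
  have key := dec_le hpos hC₁ hd (rseq_mem n) hρ (le_trans (rseq_mono hnN) hNρ)
  set q : ℝ := (1/2:ℝ)^a with hqdef
  have hq0 : 0 < q := Real.rpow_pos_of_pos (by norm_num) a
  have pρ := sq_bounds hρ
  have pn := sq_bounds (rseq_mem n)
  have pna : (0:ℝ) < (1 - rseq n^2)^a := Real.rpow_pos_of_pos pn.1 a
  have e1 : (1 - ρ^2)^a ≤ 2^a * q^N := by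
    have h2 : 1 - ρ^2 ≤ 2*(1/2)^N := by
      have := pρ.2.2
      have h3 : 1 - ρ ≤ (1/2)^N := by rw [← one_sub_rseq]; linarith
      linarith
    calc (1 - ρ^2)^a ≤ (2*(1/2)^N : ℝ)^a :=
          Real.rpow_le_rpow (le_of_lt pρ.1) h2 ha.le
    _ = 2^a * ((1/2:ℝ)^N)^a := Real.mul_rpow (by norm_num) (by positivity)
    _ = 2^a * q^N := by rw [rpow_pow_comm (by norm_num) a N]
  have e2 : q^n ≤ (1 - rseq n^2)^a := by
    have h2 : ((1:ℝ)/2)^n ≤ 1 - rseq n^2 := by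
      have := pn.2.1; rw [one_sub_rseq] at this; linarith
    calc q^n = (((1:ℝ)/2)^n)^a := (rpow_pow_comm (by norm_num) a n).symm
    _ ≤ (1 - rseq n^2)^a := Real.rpow_le_rpow (by positivity) h2 ha.le
  have step : ω ρ * cc ω n ≤ C₁ * ((1-ρ^2)^a / (1 - rseq n^2)^a) := by
    rw [cc, mul_one_div, div_le_iff₀ hωn]
    have := key
    calc ω ρ = ω ρ * (1 - rseq n^2)^a / (1 - rseq n^2)^a := by field_simp
    _ ≤ C₁ * (ω (rseq n) * (1-ρ^2)^a) / (1 - rseq n^2)^a := by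
        exact div_le_div_of_nonneg_right key pna.le
    _ = C₁ * ((1-ρ^2)^a / (1 - rseq n^2)^a) * ω (rseq n) := by field_simp
  refine step.trans ?_
  have hC₁0 : (0:ℝ) ≤ C₁ := by linarith
  have : (1-ρ^2)^a / (1 - rseq n^2)^a ≤ (2^a * q^N) / q^n :=
    div_le_div₀ (by positivity) e1 (by positivity) e2
  calc C₁ * ((1-ρ^2)^a / (1 - rseq n^2)^a) ≤ C₁ * ((2^a * q^N) / q^n) :=
        mul_le_mul_of_nonneg_left this hC₁0
  _ = C₁ * 2^a * q^(N-n) := by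
      rw [pow_sub₀ q (ne_of_gt hq0) hnN]; ring

lemma upper_tail (hb : 0 < b) (hpos : ∀ s ∈ Ico (0:ℝ) 1, 0 < ω s) (hC₂ : 1 ≤ C₂)
    (hi : ∀ x ∈ Ico (0:ℝ) 1, ∀ y ∈ Ico (0:ℝ) 1, x < y →
      ω x / (1-x^2)^b ≤ C₂ * (ω y / (1-y^2)^b))
    {x : ℝ} {n : ℕ} (hx : x ∈ Ico (0:ℝ) 1) (hxn : x ≤ rseq n) :
    ω x * cc ω n ≤ C₂ * (1 - x^2)^b / ((1/2:ℝ)^b)^n := by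
  have hωn := hpos _ (rseq_mem n)
  have key := inc_le hpos hC₂ hi hx (rseq_mem n) hxn
  have px := sq_bounds hx
  have pn := sq_bounds (rseq_mem n)
  have pnb : (0:ℝ) < (1 - rseq n^2)^b := Real.rpow_pos_of_pos pn.1 b
  have hqn : ((1/2:ℝ)^b)^n ≤ (1 - rseq n^2)^b := by
    have h2 : ((1:ℝ)/2)^n ≤ 1 - rseq n^2 := by
      have := pn.2.1; rw [one_sub_rseq] at this; linarith
    calc ((1/2:ℝ)^b)^n = (((1:ℝ)/2)^n)^b := (rpow_pow_comm (by norm_num) b n).symm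
    _ ≤ (1 - rseq n^2)^b := Real.rpow_le_rpow (by positivity) h2 hb.le
  have step : ω x * cc ω n ≤ C₂ * ((1-x^2)^b / (1 - rseq n^2)^b) := by
    rw [cc, mul_one_div, div_le_iff₀ hωn]
    calc ω x = ω x * (1 - rseq n^2)^b / (1 - rseq n^2)^b := by field_simp
    _ ≤ C₂ * (ω (rseq n) * (1-x^2)^b) / (1 - rseq n^2)^b :=
        div_le_div_of_nonneg_right key pnb.le
    _ = C₂ * ((1-x^2)^b / (1 - rseq n^2)^b) * ω (rseq n) := by field_simp
  refine step.trans ?_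
  have hC₂0 : (0:ℝ) ≤ C₂ := by linarith
  have : (1-x^2)^b / (1 - rseq n^2)^b ≤ (1-x^2)^b / ((1/2:ℝ)^b)^n :=
    div_le_div_of_nonneg_left (Real.rpow_nonneg px.1.le b) (by positivity) hqn
  calc C₂ * ((1-x^2)^b / (1 - rseq n^2)^b) ≤ C₂ * ((1-x^2)^b / ((1/2:ℝ)^b)^n) :=
        mul_le_mul_of_nonneg_left this hC₂0
  _ = C₂ * (1-x^2)^b / ((1/2:ℝ)^b)^n := by ring

lemma lower_cc (hb : 0 < b) (hpos : ∀ s ∈ Ico (0:ℝ) 1, 0 < ω s) (hC₂ : 1 ≤ C₂)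
    (hi : ∀ x ∈ Ico (0:ℝ) 1, ∀ y ∈ Ico (0:ℝ) 1, x < y →
      ω x / (1-x^2)^b ≤ C₂ * (ω y / (1-y^2)^b))
    {N : ℕ} {s : ℝ} (hs : s ∈ Ico (0:ℝ) 1) (h1 : rseq N ≤ s) (h2 : s < rseq (N+1)) :
    1 / (C₂ * 4^b * ω s) ≤ cc ω N := by
  have hωN := hpos _ (rseq_mem N)
  have hωs := hpos _ hs
  have key := inc_le hpos hC₂ hi (rseq_mem N) hs h1
  -- key : ω (rseq N) * (1 - s^2)^b ≤ C₂ * (ω s * (1 - rseq N^2)^b)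
  have pN := sq_bounds (rseq_mem N)
  have ps := sq_bounds hs
  have e1 : (1 - rseq N^2)^b ≤ 4^b * ((1/2:ℝ)^(N+1))^b := by
    have h3 : 1 - rseq N^2 ≤ 4 * (1/2)^(N+1) := by
      have := pN.2.2; rw [one_sub_rseq] at this
      have h4 : (2:ℝ)*(1/2)^N = 4*(1/2)^(N+1) := by ring
      linarith
    calc (1 - rseq N^2)^b ≤ ((4:ℝ) * (1/2)^(N+1))^b :=
          Real.rpow_le_rpow pN.1.le h3 hb.le
    _ = 4^b * ((1/2:ℝ)^(N+1))^b := Real.mul_rpow (by norm_num) (by positivity)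
  have e2 : ((1/2:ℝ)^(N+1))^b ≤ (1 - s^2)^b := by
    have h3 : ((1:ℝ)/2)^(N+1) ≤ 1 - s^2 := by
      have h4 := ps.2.1
      have h5 : 1 - rseq (N+1) < 1 - s := by linarith
      rw [one_sub_rseq] at h5; linarith
    exact Real.rpow_le_rpow (by positivity) h3 hb.le
  have hωineq : ω (rseq N) ≤ C₂ * 4^b * ω s := by
    have hpb : (0:ℝ) < ((1/2:ℝ)^(N+1))^b := Real.rpow_pos_of_pos (by positivity) b
    have c1 : ω (rseq N) * ((1/2:ℝ)^(N+1))^b ≤ C₂ * 4^b * ω s * ((1/2:ℝ)^(N+1))^b := by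
      calc ω (rseq N) * ((1/2:ℝ)^(N+1))^b ≤ ω (rseq N) * (1-s^2)^b :=
            mul_le_mul_of_nonneg_left e2 hωN.le
      _ ≤ C₂ * (ω s * (1 - rseq N^2)^b) := key
      _ ≤ C₂ * (ω s * (4^b * ((1/2:ℝ)^(N+1))^b)) := by
          apply mul_le_mul_of_nonneg_left _ (by linarith)
          exact mul_le_mul_of_nonneg_left e1 hωs.le
      _ = C₂ * 4^b * ω s * ((1/2:ℝ)^(N+1))^b := by ring
    exact le_of_mul_le_mul_right c1 hpb
  rw [cc]
  exact one_div_le_one_div_of_le hωN hωineq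

lemma cc_le (hb : 0 < b) (hpos : ∀ s ∈ Ico (0:ℝ) 1, 0 < ω s) (hC₂ : 1 ≤ C₂)
    (hi : ∀ x ∈ Ico (0:ℝ) 1, ∀ y ∈ Ico (0:ℝ) 1, x < y →
      ω x / (1-x^2)^b ≤ C₂ * (ω y / (1-y^2)^b)) (n : ℕ) :
    cc ω n ≤ C₂ * ((2:ℝ)^b)^n / ω 0 := by
  have h0 : (0:ℝ) ∈ Ico (0:ℝ) 1 := ⟨le_refl 0, by norm_num⟩
  have hω0 := hpos 0 h0
  have key := upper_tail hb hpos hC₂ hi h0 (rseq_mem n).1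
  have hq : ((1/2:ℝ)^b) = ((2:ℝ)^b)⁻¹ := by
    rw [show (1/2:ℝ) = 2⁻¹ by norm_num, Real.inv_rpow (by norm_num : (0:ℝ) ≤ 2) b]
  have key2 : ω 0 * cc ω n ≤ C₂ * ((2:ℝ)^b)^n := by
    have e : ((1:ℝ) - 0^2)^b = 1 := by norm_num
    rw [e, hq, inv_pow, div_inv_eq_mul] at key
    calc ω 0 * cc ω n ≤ C₂ * 1 * (2^b)^n := key
    _ = C₂ * ((2:ℝ)^b)^n := by ring
  rw [le_div_iff₀ hω0]
  calc cc ω n * ω 0 = ω 0 * cc ω n := mul_comm _ _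
  _ ≤ C₂ * ((2:ℝ)^b)^n := key2


/-- the majorant sequence at radius ρ -/
noncomputable def ub (ω : ℝ → ℝ) (ρ : ℝ) (n : ℕ) : ℝ := cc ω n * ρ^(2^n - 1)

lemma summable_aux {B ρ : ℝ} (hB : 0 ≤ B) (h0 : 0 ≤ ρ) (h1 : ρ < 1) :
    Summable (fun n => B^n * ρ^(2^n - 1)) := by
  rcases le_or_gt B 0 with hB0 | hB0
  · have hB' : B = 0 := le_antisymm hB0 hB
    subst hB'
    apply (summable_nat_add_iff 1).1
    simp only [zero_pow (Nat.succ_ne_zero _)]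
    simpa using summable_zero
  · apply summable_of_ratio_norm_eventually_le (r := 1/2) (by norm_num)
    have hev : ∀ᶠ n : ℕ in atTop, B * ρ^(2^n) ≤ 1/2 := by
      rcases eq_or_lt_of_le h0 with rfl | hρ0
      · filter_upwards [eventually_ge_atTop 1] with n hn
        rw [zero_pow (by positivity)]; norm_num
      · have hlim : Tendsto (fun n : ℕ => B * ρ^(2^n)) atTop (nhds 0) := by
          have h2 : Tendsto (fun n : ℕ => ρ^n) atTop (nhds 0) :=
            tendsto_pow_atTop_nhds_zero_of_lt_one h0 h1
          have h3 : Tendsto (fun n : ℕ => ρ^(2^n)) atTop (nhds 0) :=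
            h2.comp (tendsto_pow_atTop_atTop_of_one_lt one_lt_two)
          simpa using h3.const_mul B
        exact hlim.eventually_le_const (by norm_num : (0:ℝ) < 1/2)
    filter_upwards [hev] with n hn
    have e1 : (2:ℕ)^(n+1) - 1 = 2^n + (2^n - 1) := by
      have : (1:ℕ) ≤ 2^n := Nat.one_le_two_pow
      have : (2:ℕ)^(n+1) = 2*2^n := by ring
      omega
    rw [Real.norm_of_nonneg (by positivity), Real.norm_of_nonneg (by positivity)]
    calc B^(n+1) * ρ^(2^(n+1) - 1) = (B * ρ^(2^n)) * (B^n * ρ^(2^n - 1)) := by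
          rw [e1, pow_add]; ring
    _ ≤ (1/2) * (B^n * ρ^(2^n - 1)) := by
        apply mul_le_mul_of_nonneg_right hn (by positivity)

lemma ub_nonneg {ω : ℝ → ℝ} (hpos : ∀ s ∈ Ico (0:ℝ) 1, 0 < ω s) {ρ : ℝ} (h0 : 0 ≤ ρ) (n : ℕ) :
    0 ≤ ub ω ρ n := mul_nonneg (cc_pos hpos n).le (by positivity)

lemma summable_ub {ω : ℝ → ℝ} {b C₂ : ℝ} (hb : 0 < b)
    (hpos : ∀ s ∈ Ico (0:ℝ) 1, 0 < ω s) (hC₂ : 1 ≤ C₂)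
    (hi : ∀ x ∈ Ico (0:ℝ) 1, ∀ y ∈ Ico (0:ℝ) 1, x < y →
      ω x / (1-x^2)^b ≤ C₂ * (ω y / (1-y^2)^b))
    {ρ : ℝ} (h0 : 0 ≤ ρ) (h1 : ρ < 1) : Summable (ub ω ρ) := by
  have hω0 := hpos 0 ⟨le_refl 0, by norm_num⟩
  have hmaj := summable_aux (B := (2:ℝ)^b) (Real.rpow_nonneg (by norm_num) b) h0 h1
  apply Summable.of_nonneg_of_le (ub_nonneg hpos h0) _ (hmaj.mul_left (C₂ / ω 0))
  intro n
  calc ub ω ρ n ≤ (C₂ * ((2:ℝ)^b)^n / ω 0) * ρ^(2^n - 1) :=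
        mul_le_mul_of_nonneg_right (cc_le hb hpos hC₂ hi n) (by positivity)
  _ = C₂ / ω 0 * (((2:ℝ)^b)^n * ρ^(2^n - 1)) := by ring

/-- tail majorant -/
noncomputable def vv (b C₂ : ℝ) (j : ℕ) : ℝ := C₂ * ((2:ℝ)^b)^(j+2) * Real.exp (-(2:ℝ)^j / 2)

lemma vv_nonneg {b C₂ : ℝ} (hC₂ : 0 ≤ C₂) (j : ℕ) : 0 ≤ vv b C₂ j := by
  unfold vv; positivity

lemma summable_vv (b : ℝ) {C₂ : ℝ} (hC : 0 < C₂) : Summable (vv b C₂) := by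
  apply summable_of_ratio_norm_eventually_le (r := 1/2) (by norm_num)
  have hB : (0:ℝ) < (2:ℝ)^b := Real.rpow_pos_of_pos (by norm_num) b
  have hlim : Tendsto (fun j : ℕ => (2:ℝ)^b * Real.exp (-(2:ℝ)^j / 2)) atTop (nhds 0) := by
    have h2 : Tendsto (fun j : ℕ => ((2:ℝ)^j : ℝ)) atTop atTop := by
      exact_mod_cast tendsto_pow_atTop_atTop_of_one_lt (by norm_num : (1:ℝ) < 2)
    have h3 : Tendsto (fun j : ℕ => Real.exp (-(2:ℝ)^j / 2)) atTop (nhds 0) := by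
      apply Real.tendsto_exp_atBot.comp
      apply Tendsto.atBot_div_const (by norm_num : (0:ℝ) < 2)
      exact tendsto_neg_atBot_iff.mpr h2
    simpa using h3.const_mul ((2:ℝ)^b)
  filter_upwards [hlim.eventually_le_const (by norm_num : (0:ℝ) < 1/2)] with j hj
  rw [Real.norm_of_nonneg (vv_nonneg hC.le _), Real.norm_of_nonneg (vv_nonneg hC.le _)]
  have e1 : -(2:ℝ)^(j+1) / 2 = -(2:ℝ)^j / 2 + -(2:ℝ)^j / 2 := by ring
  calc vv b C₂ (j+1) = ((2:ℝ)^b * Real.exp (-(2:ℝ)^j / 2)) * vv b C₂ j := by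
        unfold vv
        rw [e1, Real.exp_add]; ring
  _ ≤ (1/2) * vv b C₂ j := mul_le_mul_of_nonneg_right hj (vv_nonneg hC.le _)

noncomputable def GG (ω : ℝ → ℝ) (z : ℂ) : ℂ := ∑' n, (cc ω n : ℂ) * z^(2^n - 1)
noncomputable def FF (ω : ℝ → ℝ) (z : ℂ) : ℂ := ∑' n, (cc ω n : ℂ) * z^(2^n) / ((2:ℂ)^n)
noncomputable def SF (ω : ℝ → ℝ) (N : ℕ) (z : ℂ) : ℂ :=
  ∑ n ∈ Finset.range N, (cc ω n : ℂ) * z^(2^n) / ((2:ℂ)^n)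

section Series
variable {ω : ℝ → ℝ} {b C₂ : ℝ}

lemma norm_Fterm_le (hpos : ∀ s ∈ Ico (0:ℝ) 1, 0 < ω s) {z : ℂ} {ρ : ℝ} (hz : ‖z‖ ≤ ρ)
    (hρ1 : ρ ≤ 1) (n : ℕ) : ‖(cc ω n : ℂ) * z^(2^n) / ((2:ℂ)^n)‖ ≤ ub ω ρ n := by
  have h0 : (0:ℝ) ≤ ρ := le_trans (norm_nonneg z) hz
  have hcc := cc_pos hpos (ω := ω) n
  rw [norm_div, norm_mul, norm_pow, Complex.norm_real, Real.norm_of_nonneg hcc.le]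
  have h2 : ‖(2:ℂ)^n‖ = 2^n := by
    rw [norm_pow]; norm_num
  rw [h2]
  have hz2 : ‖z‖^(2^n) ≤ ρ^(2^n - 1) := by
    calc ‖z‖^(2^n) ≤ ρ^(2^n) := pow_le_pow_left₀ (norm_nonneg z) hz _
    _ ≤ ρ^(2^n - 1) := pow_le_pow_of_le_one h0 hρ1 (Nat.sub_le _ _)
  calc cc ω n * ‖z‖^(2^n) / 2^n ≤ cc ω n * ρ^(2^n - 1) / 1 := by
        apply div_le_div₀ (by positivity) (mul_le_mul_of_nonneg_left hz2 hcc.le)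
          one_pos (one_le_pow₀ (by norm_num : (1:ℝ) ≤ 2))
  _ = ub ω ρ n := by rw [div_one, ub]

lemma norm_Gterm_le (hpos : ∀ s ∈ Ico (0:ℝ) 1, 0 < ω s) {z : ℂ} {ρ : ℝ} (hz : ‖z‖ ≤ ρ)
    (n : ℕ) : ‖(cc ω n : ℂ) * z^(2^n - 1)‖ ≤ ub ω ρ n := by
  have h0 : (0:ℝ) ≤ ρ := le_trans (norm_nonneg z) hz
  have hcc := cc_pos hpos (ω := ω) n
  rw [norm_mul, norm_pow, Complex.norm_real, Real.norm_of_nonneg hcc.le]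
  exact mul_le_mul_of_nonneg_left (pow_le_pow_left₀ (norm_nonneg z) hz _) hcc.le

lemma SF_tendsto (hb : 0 < b) (hpos : ∀ s ∈ Ico (0:ℝ) 1, 0 < ω s) (hC₂ : 1 ≤ C₂)
    (hi : ∀ x ∈ Ico (0:ℝ) 1, ∀ y ∈ Ico (0:ℝ) 1, x < y →
      ω x / (1-x^2)^b ≤ C₂ * (ω y / (1-y^2)^b)) :
    TendstoLocallyUniformlyOn (fun N z => SF ω N z) (FF ω) atTop (Metric.ball (0:ℂ) 1) := by
  rw [tendstoLocallyUniformlyOn_iff_forall_isCompact Metric.isOpen_ball]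
  intro K hK hKc
  rcases K.eq_empty_or_nonempty with rfl | hne
  · intro u _; simp
  obtain ⟨z₀, hz₀K, hmax⟩ := hKc.exists_isMaxOn hne continuous_norm.continuousOn
  rw [isMaxOn_iff] at hmax
  have hρ1 : ‖z₀‖ < 1 := by
    have := hK hz₀K; rwa [Metric.mem_ball, dist_zero_right] at this
  exact tendstoUniformlyOn_tsum_nat (summable_ub hb hpos hC₂ hi (norm_nonneg z₀) hρ1)
    (fun n z hz => norm_Fterm_le hpos (hmax z hz) hρ1.le n)

lemma SF_hasDeriv (ω : ℝ → ℝ) (N : ℕ) (z : ℂ) :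
    HasDerivAt (fun w => SF ω N w) (∑ n ∈ Finset.range N, (cc ω n : ℂ) * z^(2^n - 1)) z := by
  apply HasDerivAt.fun_sum
  intro n _
  have h1 : HasDerivAt (fun w : ℂ => w^(2^n)) ((2^n : ℕ) * z^(2^n - 1)) z := hasDerivAt_pow _ z
  have h2 := (h1.const_mul ((cc ω n : ℂ))).div_const ((2:ℂ)^n)
  convert h2 using 1
  · rfl
  have hne : ((2:ℂ)^n) ≠ 0 := pow_ne_zero _ two_ne_zero
  push_cast
  field_simp

lemma SF_differentiable (ω : ℝ → ℝ) (N : ℕ) : Differentiable ℂ (fun w => SF ω N w) := by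
  intro z
  exact (HasDerivAt.fun_sum (fun n _ => ((hasDerivAt_pow (2^n) z).const_mul
    ((cc ω n : ℂ))).div_const ((2:ℂ)^n))).differentiableAt

lemma FF_diff (hb : 0 < b) (hpos : ∀ s ∈ Ico (0:ℝ) 1, 0 < ω s) (hC₂ : 1 ≤ C₂)
    (hi : ∀ x ∈ Ico (0:ℝ) 1, ∀ y ∈ Ico (0:ℝ) 1, x < y →
      ω x / (1-x^2)^b ≤ C₂ * (ω y / (1-y^2)^b)) :
    DifferentiableOn ℂ (FF ω) (Metric.ball (0:ℂ) 1) :=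
  (SF_tendsto hb hpos hC₂ hi).differentiableOn
    (Eventually.of_forall fun N => (SF_differentiable ω N).differentiableOn) Metric.isOpen_ball

lemma summable_Gterm (hb : 0 < b) (hpos : ∀ s ∈ Ico (0:ℝ) 1, 0 < ω s) (hC₂ : 1 ≤ C₂)
    (hi : ∀ x ∈ Ico (0:ℝ) 1, ∀ y ∈ Ico (0:ℝ) 1, x < y →
      ω x / (1-x^2)^b ≤ C₂ * (ω y / (1-y^2)^b))
    {z : ℂ} (hz : ‖z‖ < 1) : Summable (fun n => (cc ω n : ℂ) * z^(2^n - 1)) := by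
  apply Summable.of_norm
  apply Summable.of_nonneg_of_le (fun n => norm_nonneg _)
    (fun n => norm_Gterm_le hpos (le_refl ‖z‖) n)
    (summable_ub hb hpos hC₂ hi (norm_nonneg z) hz)

lemma deriv_SF_eq (ω : ℝ → ℝ) (N : ℕ) :
    (deriv (fun w => SF ω N w)) = fun z => ∑ n ∈ Finset.range N, (cc ω n : ℂ) * z^(2^n - 1) :=
  funext fun z => (SF_hasDeriv ω N z).deriv

lemma deriv_FF_tendsto (hb : 0 < b) (hpos : ∀ s ∈ Ico (0:ℝ) 1, 0 < ω s) (hC₂ : 1 ≤ C₂)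
    (hi : ∀ x ∈ Ico (0:ℝ) 1, ∀ y ∈ Ico (0:ℝ) 1, x < y →
      ω x / (1-x^2)^b ≤ C₂ * (ω y / (1-y^2)^b)) :
    TendstoLocallyUniformlyOn (fun N => deriv (fun w => SF ω N w)) (deriv (FF ω)) atTop
      (Metric.ball (0:ℂ) 1) :=
  (SF_tendsto hb hpos hC₂ hi).deriv
    (Eventually.of_forall fun N => (SF_differentiable ω N).differentiableOn) Metric.isOpen_ball

lemma deriv_FF_eq (hb : 0 < b) (hpos : ∀ s ∈ Ico (0:ℝ) 1, 0 < ω s) (hC₂ : 1 ≤ C₂)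
    (hi : ∀ x ∈ Ico (0:ℝ) 1, ∀ y ∈ Ico (0:ℝ) 1, x < y →
      ω x / (1-x^2)^b ≤ C₂ * (ω y / (1-y^2)^b))
    {z : ℂ} (hz : z ∈ Metric.ball (0:ℂ) 1) : deriv (FF ω) z = GG ω z := by
  have hz' : ‖z‖ < 1 := by rwa [Metric.mem_ball, dist_zero_right] at hz
  have hpt := (deriv_FF_tendsto hb hpos hC₂ hi).tendsto_at hz
  have he : (fun N => deriv (fun w => SF ω N w) z) =
      fun N => ∑ n ∈ Finset.range N, (cc ω n : ℂ) * z^(2^n - 1) := by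
    funext N; rw [deriv_SF_eq]
  rw [he] at hpt
  have hsum := (summable_Gterm hb hpos hC₂ hi hz').hasSum.tendsto_sum_nat
  exact tendsto_nhds_unique hpt hsum

lemma GG_real (ω : ℝ → ℝ) (s : ℝ) : GG ω (s:ℂ) = ((∑' n, ub ω s n : ℝ) : ℂ) := by
  rw [GG, Complex.ofReal_tsum]
  congr 1; funext n
  rw [ub]; push_cast; ring

lemma FF_zero (ω : ℝ → ℝ) : FF ω 0 = 0 := by
  rw [FF]
  convert tsum_zero with n
  rw [zero_pow (by positivity), mul_zero, zero_div]
end Series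

lemma quarter_aux : ∀ N : ℕ, 1 ≤ N → (1/4:ℝ) ≤ rseq N ^ (2^N) := by
  intro N hN
  induction N, hN using Nat.le_induction with
  | base => norm_num [rseq]
  | succ N hN ih =>
    have key : rseq N ≤ rseq (N+1)^2 := by
      have e : ((1:ℝ)/2)^N = 2*(1/2)^(N+1) := by ring
      simp only [rseq]
      nlinarith [sq_nonneg ((1/2:ℝ)^(N+1))]
    calc (1/4:ℝ) ≤ rseq N^(2^N) := ih
    _ ≤ (rseq (N+1)^2)^(2^N) := pow_le_pow_left₀ (rseq_mem N).1 key _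
    _ = rseq (N+1)^(2^(N+1)) := by
        rw [← pow_mul]
        congr 1
        ring

lemma quarter (N : ℕ) : (1/4 : ℝ) ≤ rseq N ^ (2^N - 1) := by
  rcases Nat.eq_zero_or_pos N with rfl | hN
  · norm_num
  calc (1/4:ℝ) ≤ rseq N ^ (2^N) := quarter_aux N hN
  _ ≤ rseq N ^ (2^N - 1) :=
      pow_le_pow_of_le_one (rseq_mem N).1 (by have := (rseq_mem N).2; linarith) (Nat.sub_le _ _)

section Main
variable {ω : ℝ → ℝ} {a b C₁ C₂ : ℝ}

lemma lower_main (hb : 0 < b) (hpos : ∀ s ∈ Ico (0:ℝ) 1, 0 < ω s) (hC₂ : 1 ≤ C₂)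
    (hi : ∀ x ∈ Ico (0:ℝ) 1, ∀ y ∈ Ico (0:ℝ) 1, x < y →
      ω x / (1-x^2)^b ≤ C₂ * (ω y / (1-y^2)^b))
    {s : ℝ} (hs : s ∈ Ico (0:ℝ) 1) :
    1 / (4 * (C₂ * 4^b) * ω s) ≤ ∑' n, ub ω s n := by
  obtain ⟨N, h1, h2⟩ := exists_rseq_index hs.1 hs.2
  have hsum := summable_ub hb hpos hC₂ hi hs.1 hs.2
  have hωs := hpos s hs
  have h4b : (0:ℝ) < (4:ℝ)^b := Real.rpow_pos_of_pos (by norm_num) b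
  have hterm : 1/(4 * (C₂*4^b) * ω s) ≤ ub ω s N := by
    have hA := lower_cc hb hpos hC₂ hi hs h1 h2
    have hB : (1/4:ℝ) ≤ s^(2^N - 1) :=
      le_trans (quarter N) (pow_le_pow_left₀ (rseq_mem N).1 h1 _)
    have he : 1/(4*(C₂*4^b)*ω s) = (1/(C₂*4^b*ω s)) * (1/4) := by
      field_simp
    rw [he, ub]
    exact mul_le_mul hA hB (by norm_num) (cc_pos hpos N).le
  exact hterm.trans (Summable.le_tsum hsum N fun n _ => ub_nonneg hpos hs.1 n)

lemma half_rpow (x : ℝ) : ((1/2:ℝ))^x = ((2:ℝ)^x)⁻¹ := by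
  rw [show (1/2:ℝ) = 2⁻¹ by norm_num, Real.inv_rpow (by norm_num : (0:ℝ) ≤ 2) x]

lemma upper_main (ha : 0 < a) (hb : 0 < b) (hpos : ∀ s ∈ Ico (0:ℝ) 1, 0 < ω s)
    (hC₁ : 1 ≤ C₁) (hC₂ : 1 ≤ C₂)
    (hd : ∀ x ∈ Ico (0:ℝ) 1, ∀ y ∈ Ico (0:ℝ) 1, x < y →
      ω y / (1-y^2)^a ≤ C₁ * (ω x / (1-x^2)^a))
    (hi : ∀ x ∈ Ico (0:ℝ) 1, ∀ y ∈ Ico (0:ℝ) 1, x < y →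
      ω x / (1-x^2)^b ≤ C₂ * (ω y / (1-y^2)^b))
    {ρ : ℝ} (hρ : ρ ∈ Ico (0:ℝ) 1) :
    ω ρ * ∑' n, ub ω ρ n ≤
      C₁ * 2^a * (1 - (1/2:ℝ)^a)⁻¹ + ∑' j, vv b C₂ j := by
  obtain ⟨N, h1, h2⟩ := exists_rseq_index hρ.1 hρ.2
  have hωρ := hpos ρ hρ
  have hub := summable_ub hb hpos hC₂ hi hρ.1 hρ.2
  have ht : Summable (fun n => ω ρ * ub ω ρ n) := hub.mul_left _
  have e0 : ω ρ * ∑' n, ub ω ρ n = ∑' n, ω ρ * ub ω ρ n := tsum_mul_left.symm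
  rw [e0, ← Summable.sum_add_tsum_nat_add (N+1) ht]
  have hq : (0:ℝ) < (1/2:ℝ)^a := Real.rpow_pos_of_pos (by norm_num) a
  have hq1 : (1/2:ℝ)^a < 1 := by
    apply Real.rpow_lt_one (by norm_num) (by norm_num) ha
  -- part 1
  have part1 : ∑ n ∈ Finset.range (N+1), ω ρ * ub ω ρ n ≤ C₁ * 2^a * (1 - (1/2:ℝ)^a)⁻¹ := by
    have hstep : ∀ n ∈ Finset.range (N+1),
        ω ρ * ub ω ρ n ≤ C₁ * 2^a * ((1/2:ℝ)^a)^(N-n) := by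
      intro n hn
      rw [Finset.mem_range] at hn
      have hnN : n ≤ N := by omega
      have hcc := upper_small ha hpos hC₁ hd hnN hρ h1
      have hpow1 : ρ^(2^n - 1) ≤ 1 := pow_le_one₀ hρ.1 hρ.2.le
      calc ω ρ * ub ω ρ n = (ω ρ * cc ω n) * ρ^(2^n-1) := by rw [ub]; ring
      _ ≤ (C₁ * 2^a * ((1/2:ℝ)^a)^(N-n)) * 1 := by
          apply mul_le_mul hcc hpow1 (pow_nonneg hρ.1 _)
          have h2a : (0:ℝ) ≤ (2:ℝ)^a := (Real.rpow_pos_of_pos (by norm_num) a).le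
          exact mul_nonneg (mul_nonneg (by linarith) h2a) (pow_nonneg hq.le _)
      _ = C₁ * 2^a * ((1/2:ℝ)^a)^(N-n) := by ring
    calc ∑ n ∈ Finset.range (N+1), ω ρ * ub ω ρ n
        ≤ ∑ n ∈ Finset.range (N+1), C₁ * 2^a * ((1/2:ℝ)^a)^(N-n) :=
          Finset.sum_le_sum hstep
    _ = C₁ * 2^a * ∑ n ∈ Finset.range (N+1), ((1/2:ℝ)^a)^(N-n) := by
        rw [Finset.mul_sum]
    _ = C₁ * 2^a * ∑ n ∈ Finset.range (N+1), ((1/2:ℝ)^a)^n := by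
        congr 1
        rw [← Finset.sum_range_reflect]
        apply Finset.sum_congr rfl
        intro i hi2
        congr 1
        rw [Finset.mem_range] at hi2
        omega
    _ ≤ C₁ * 2^a * (1 - (1/2:ℝ)^a)⁻¹ := by
        apply mul_le_mul_of_nonneg_left _ (by positivity)
        rw [← tsum_geometric_of_lt_one hq.le hq1]
        exact Summable.sum_le_tsum _ (fun i _ => by positivity) (summable_geometric_of_lt_one hq.le hq1)
  -- part 2
  have part2 : ∑' j, ω ρ * ub ω ρ (j + (N+1)) ≤ ∑' j, vv b C₂ j := by
    have ht2 : Summable (fun j => ω ρ * ub ω ρ (j + (N+1))) :=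
      ht.comp_injective (add_left_injective (N+1))
    apply Summable.tsum_le_tsum _ ht2 (summable_vv b (by linarith))
    intro j
    have hAt : ρ ≤ rseq (j + N + 1) := le_trans h2.le (rseq_mono (by omega))
    have hA0 := upper_tail hb hpos hC₂ hi hρ hAt
    -- hA0 : ω ρ * cc ω (j+N+1) ≤ C₂ * (1-ρ^2)^b / ((1/2)^b)^(j+N+1)
    have hρb : (1 - ρ^2)^b ≤ 2^b * ((1/2:ℝ)^b)^N := by
      have hsq := sq_bounds hρ
      have h1' : 1 - ρ ≤ (1/2)^N := by
        have := one_sub_rseq N; linarith [h1]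
      have h3 : 1 - ρ^2 ≤ 2 * (1/2:ℝ)^N := by linarith [hsq.2.2]
      calc (1 - ρ^2)^b ≤ ((2:ℝ) * (1/2)^N)^b := Real.rpow_le_rpow hsq.1.le h3 hb.le
      _ = 2^b * (((1:ℝ)/2)^N)^b := Real.mul_rpow (by norm_num) (by positivity)
      _ = 2^b * ((1/2:ℝ)^b)^N := by rw [rpow_pow_comm (by norm_num) b N]
    have hA : ω ρ * cc ω (j + N + 1) ≤ C₂ * ((2:ℝ)^b)^(j+2) := by
      have hqb : (0:ℝ) < ((1/2:ℝ)^b) := Real.rpow_pos_of_pos (by norm_num) b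
      have h2b : (0:ℝ) < (2:ℝ)^b := Real.rpow_pos_of_pos (by norm_num) b
      calc ω ρ * cc ω (j + N + 1) ≤ C₂ * (1-ρ^2)^b / ((1/2:ℝ)^b)^(j+N+1) := hA0
      _ ≤ C₂ * (2^b * ((1/2:ℝ)^b)^N) / ((1/2:ℝ)^b)^(j+N+1) := by
          have hden : (0:ℝ) ≤ ((1/2:ℝ)^b)^(j+N+1) := by positivity
          exact div_le_div_of_nonneg_right
            (mul_le_mul_of_nonneg_left hρb (by linarith)) hden
      _ = C₂ * ((2:ℝ)^b)^(j+2) := by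
          rw [half_rpow b, inv_pow, inv_pow]
          field_simp
          have ee : (2:ℝ)^b * ((2:ℝ)^b)^(j+N+1) = ((2:ℝ)^b)^(j+2) * ((2:ℝ)^b)^N := by
            rw [← pow_succ' ((2:ℝ)^b) (j+N+1), ← pow_add]
            congr 1
            omega
          rw [ee]; ring
    have hB : ρ^(2^(j+N+1) - 1) ≤ Real.exp (-(2:ℝ)^j / 2) := by
      have hexp : (1:ℕ) ≤ 2^(j+N) := Nat.one_le_two_pow
      have he2 : (2:ℕ)^(j+N+1) = 2*2^(j+N) := by ring
      have step1 : ρ^(2^(j+N+1) - 1) ≤ ρ^(2^(j+N)) :=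
        pow_le_pow_of_le_one hρ.1 hρ.2.le (by omega)
      have hr1 : (0:ℝ) ≤ rseq (N+1) := (rseq_mem (N+1)).1
      have step2 : ρ^(2^(j+N)) ≤ (rseq (N+1))^(2^(j+N)) :=
        pow_le_pow_left₀ hρ.1 h2.le _
      have step3 : rseq (N+1) ≤ Real.exp (-(1/2:ℝ)^(N+1)) := by
        have := Real.add_one_le_exp (-(1/2:ℝ)^(N+1))
        have e := one_sub_rseq (N+1)
        linarith
      have step4 : (rseq (N+1))^(2^(j+N)) ≤ Real.exp (-(1/2:ℝ)^(N+1))^(2^(j+N)) :=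
        pow_le_pow_left₀ hr1 step3 _
      have step5 : Real.exp (-(1/2:ℝ)^(N+1))^(2^(j+N)) = Real.exp (-(2:ℝ)^j / 2) := by
        rw [← Real.exp_nat_mul]
        congr 1
        push_cast
        rw [div_pow, one_pow]
        field_simp
        ring
      calc ρ^(2^(j+N+1) - 1) ≤ ρ^(2^(j+N)) := step1
      _ ≤ (rseq (N+1))^(2^(j+N)) := step2
      _ ≤ Real.exp (-(1/2:ℝ)^(N+1))^(2^(j+N)) := step4
      _ = Real.exp (-(2:ℝ)^j / 2) := step5
    have e3 : j + (N+1) = j + N + 1 := by omega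
    calc ω ρ * ub ω ρ (j + (N+1)) = (ω ρ * cc ω (j+N+1)) * ρ^(2^(j+N+1) - 1) := by
          rw [e3, ub]; ring
    _ ≤ (C₂ * ((2:ℝ)^b)^(j+2)) * Real.exp (-(2:ℝ)^j / 2) := by
        apply mul_le_mul hA hB (pow_nonneg hρ.1 _)
        have h2b' : (0:ℝ) ≤ ((2:ℝ)^b)^(j+2) := by positivity
        exact mul_nonneg (by linarith) h2b'
    _ = vv b C₂ j := by rw [vv]
  exact add_le_add part1 part2
end Main

section Final
variable {ω : ℝ → ℝ} {a b C₁ C₂ : ℝ}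

lemma continuousOn_tildeW (hpos : ∀ s ∈ Ico (0:ℝ) 1, 0 < ω s)
    (hcont : ContinuousOn ω (Ico 0 1)) : ContinuousOn (tildeW ω) (Ico 0 1) := by
  intro t₀ ht₀
  set t₁ := (t₀+1)/2 with ht₁def
  have h1 : 0 ≤ t₁ := by rw [ht₁def]; linarith [ht₀.1]
  have h2 : t₀ < t₁ := by rw [ht₁def]; linarith [ht₀.2]
  have h3 : t₁ < 1 := by rw [ht₁def]; linarith [ht₀.2]
  have hsub : Icc (0:ℝ) t₁ ⊆ Ico 0 1 := fun x hx => ⟨hx.1, lt_of_le_of_lt hx.2 h3⟩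
  have hinv : ContinuousOn (fun s => 1/ω s) (Icc 0 t₁) :=
    continuousOn_const.div (hcont.mono hsub) (fun x hx => (hpos x (hsub hx)).ne')
  have hIO : IntegrableOn (fun s => 1/ω s) (Icc 0 t₁) :=
    hinv.integrableOn_compact isCompact_Icc
  have hprim : ContinuousOn (fun x => ∫ s in (0:ℝ)..x, 1/ω s) (Icc 0 t₁) := by
    have h5 := intervalIntegral.continuousOn_primitive_interval
      (a := (0:ℝ)) (b := t₁) (f := fun s => 1/ω s) (μ := volume)
      (by rwa [uIcc_of_le h1])
    rwa [uIcc_of_le h1] at h5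
  apply ContinuousWithinAt.mono_of_mem_nhdsWithin (hprim t₀ ⟨ht₀.1, h2.le⟩)
  apply mem_nhdsWithin.2 ⟨Iio t₁, isOpen_Iio, h2, ?_⟩
  rintro x ⟨hx1, hx2⟩
  exact ⟨hx2.1, le_of_lt hx1⟩

lemma FF_re_lower (hb : 0 < b) (hpos : ∀ s ∈ Ico (0:ℝ) 1, 0 < ω s) (hC₂ : 1 ≤ C₂)
    (hi : ∀ x ∈ Ico (0:ℝ) 1, ∀ y ∈ Ico (0:ℝ) 1, x < y →
      ω x / (1-x^2)^b ≤ C₂ * (ω y / (1-y^2)^b))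
    (hcont : ContinuousOn ω (Ico 0 1)) {t : ℝ} (ht : t ∈ Ico (0:ℝ) 1) :
    tildeW ω t ≤ (4*(C₂*4^b)) * ‖FF ω ↑t‖ := by
  have h4b : (0:ℝ) < (4:ℝ)^b := Real.rpow_pos_of_pos (by norm_num) b
  have hX0 : (0:ℝ) < 4*(C₂*4^b) := by nlinarith
  have hball : ∀ s:ℝ, s ∈ Icc 0 t → (↑s:ℂ) ∈ Metric.ball (0:ℂ) 1 := by
    intro s hs
    rw [Metric.mem_ball, dist_zero_right, Complex.norm_real, Real.norm_of_nonneg hs.1]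
    exact lt_of_le_of_lt hs.2 ht.2
  have hder : ∀ s ∈ uIcc (0:ℝ) t,
      HasDerivAt (fun u:ℝ => (FF ω ↑u).re) ((deriv (FF ω) ↑s).re) s := by
    intro s hs
    rw [uIcc_of_le ht.1] at hs
    have hdFF := ((FF_diff hb hpos hC₂ hi).differentiableAt
      (Metric.isOpen_ball.mem_nhds (hball s hs))).hasDerivAt
    exact hdFF.real_of_complex
  have hcontD : ContinuousOn (deriv (FF ω)) (Metric.ball (0:ℂ) 1) := by
    apply (deriv_FF_tendsto hb hpos hC₂ hi).continuousOn
    apply Frequently.of_forall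
    intro N
    rw [deriv_SF_eq]
    apply Continuous.continuousOn
    exact continuous_finset_sum _ fun n _ => continuous_const.mul (continuous_pow _)
  have hψcont : ContinuousOn (fun s:ℝ => (deriv (FF ω) ↑s).re) (Icc 0 t) :=
    Complex.continuous_re.comp_continuousOn
      (hcontD.comp Complex.continuous_ofReal.continuousOn (fun s hs => hball s hs))
  have hint : IntervalIntegrable (fun s:ℝ => (deriv (FF ω) ↑s).re) volume 0 t := by
    apply ContinuousOn.intervalIntegrable
    rwa [uIcc_of_le ht.1]
  have hftc := intervalIntegral.integral_eq_sub_of_hasDerivAt hder hint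
  rw [Complex.ofReal_zero, FF_zero ω, Complex.zero_re, sub_zero] at hftc
  have hsub : Icc (0:ℝ) t ⊆ Ico 0 1 := fun x hx => ⟨hx.1, lt_of_le_of_lt hx.2 ht.2⟩
  have hlow : ∀ s ∈ Icc (0:ℝ) t, (1/(4*(C₂*4^b))) * (1/ω s) ≤ (deriv (FF ω) ↑s).re := by
    intro s hs
    have hsI : s ∈ Ico (0:ℝ) 1 := hsub hs
    rw [deriv_FF_eq hb hpos hC₂ hi (hball s hs), GG_real, Complex.ofReal_re]
    have hlm := lower_main hb hpos hC₂ hi hsI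
    have he : (1/(4*(C₂*4^b))) * (1/ω s) = 1/(4*(C₂*4^b)*ω s) := by
      rw [div_mul_div_comm, one_mul]
    rw [he]
    exact hlm
  have hconst : IntervalIntegrable (fun s:ℝ => (1/(4*(C₂*4^b))) * (1/ω s)) volume 0 t := by
    apply ContinuousOn.intervalIntegrable
    rw [uIcc_of_le ht.1]
    exact continuousOn_const.mul
      (continuousOn_const.div (hcont.mono hsub) (fun x hx => (hpos x (hsub hx)).ne'))
  have hmono := intervalIntegral.integral_mono_on ht.1 hconst hint hlow
  rw [intervalIntegral.integral_const_mul, hftc] at hmono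
  have hre : (FF ω ↑t).re ≤ ‖FF ω ↑t‖ := Complex.re_le_norm _
  calc tildeW ω t = (4*(C₂*4^b)) * ((1/(4*(C₂*4^b))) * tildeW ω t) := by
        field_simp
  _ ≤ (4*(C₂*4^b)) * ‖FF ω ↑t‖ := by
      apply mul_le_mul_of_nonneg_left _ hX0.le
      exact le_trans hmono hre

lemma FF_memBloch (ha : 0 < a) (hb : 0 < b) (hpos : ∀ s ∈ Ico (0:ℝ) 1, 0 < ω s)
    (hC₁ : 1 ≤ C₁) (hC₂ : 1 ≤ C₂)
    (hd : ∀ x ∈ Ico (0:ℝ) 1, ∀ y ∈ Ico (0:ℝ) 1, x < y →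
      ω y / (1-y^2)^a ≤ C₁ * (ω x / (1-x^2)^a))
    (hi : ∀ x ∈ Ico (0:ℝ) 1, ∀ y ∈ Ico (0:ℝ) 1, x < y →
      ω x / (1-x^2)^b ≤ C₂ * (ω y / (1-y^2)^b)) :
    MemBloch ω (FF ω) := by
  refine ⟨FF_diff hb hpos hC₂ hi, ⟨C₁ * 2^a * (1 - (1/2:ℝ)^a)⁻¹ + ∑' j, vv b C₂ j, ?_⟩⟩
  rintro x ⟨⟨z, hz⟩, rfl⟩
  have hz' : ‖z‖ < 1 := by rwa [Metric.mem_ball, dist_zero_right] at hz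
  have hzI : ‖z‖ ∈ Ico (0:ℝ) 1 := ⟨norm_nonneg z, hz'⟩
  simp only
  rw [deriv_FF_eq hb hpos hC₂ hi hz]
  have hsum : Summable (fun n => ‖(cc ω n : ℂ) * z^(2^n - 1)‖) :=
    Summable.of_nonneg_of_le (fun n => norm_nonneg _)
      (fun n => norm_Gterm_le hpos (le_refl ‖z‖) n)
      (summable_ub hb hpos hC₂ hi (norm_nonneg z) hz')
  have hnorm : ‖GG ω z‖ ≤ ∑' n, ub ω ‖z‖ n := by
    rw [GG]
    calc ‖∑' n, (cc ω n:ℂ) * z^(2^n-1)‖ ≤ ∑' n, ‖(cc ω n:ℂ) * z^(2^n-1)‖ :=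
          norm_tsum_le_tsum_norm hsum
    _ ≤ ∑' n, ub ω ‖z‖ n := Summable.tsum_le_tsum (fun n => norm_Gterm_le hpos (le_refl ‖z‖) n)
          hsum (summable_ub hb hpos hC₂ hi (norm_nonneg z) hz')
  calc ω ‖z‖ * ‖GG ω z‖ ≤ ω ‖z‖ * ∑' n, ub ω ‖z‖ n :=
        mul_le_mul_of_nonneg_left hnorm (hpos _ hzI).le
  _ ≤ C₁ * 2^a * (1 - (1/2:ℝ)^a)⁻¹ + ∑' j, vv b C₂ j :=
      upper_main ha hb hpos hC₁ hC₂ hd hi hzI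

lemma one_memBloch (ω : ℝ → ℝ) : MemBloch ω (fun _ => (1:ℂ)) := by
  refine ⟨differentiableOn_const _, ⟨0, ?_⟩⟩
  rintro x ⟨z, rfl⟩
  simp [deriv_const]

theorem stmt11 (ω : ℝ → ℝ) (a b : ℝ) (hω : IsNormal ω a b) (μ : Measure ℝ) (α : ℝ)
    (hα : -1 < α)
    (h : ∀ f : ℂ → ℂ, MemBloch ω f →
      Integrable (fun t : ℝ => f (t : ℂ)) (μ.restrict (Ico 0 1))) :
    Integrable (fun t => tildeW ω t + 1) (μ.restrict (Ico 0 1)) := by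
  obtain ⟨ha, hab, hpos, hcont, ⟨C₁₀, hC₁₀, hd₀⟩, ⟨C₂₀, hC₂₀, hi₀⟩⟩ := hω
  set C₁ := max C₁₀ 1 with hC₁def
  set C₂ := max C₂₀ 1 with hC₂def
  have hC₁ : 1 ≤ C₁ := le_max_right _ _
  have hC₂ : 1 ≤ C₂ := le_max_right _ _
  have hb : 0 < b := lt_of_lt_of_le ha hab
  have hd : ∀ x ∈ Ico (0:ℝ) 1, ∀ y ∈ Ico (0:ℝ) 1, x < y →
      ω y / (1-y^2)^a ≤ C₁ * (ω x / (1-x^2)^a) := by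
    intro x hx y hy hxy
    have h0 := hd₀ x hx y hy hxy
    dsimp only at h0
    refine h0.trans ?_
    apply mul_le_mul_of_nonneg_right (le_max_left _ _)
    exact div_nonneg (hpos x hx).le (Real.rpow_nonneg (sq_bounds hx).1.le a)
  have hi : ∀ x ∈ Ico (0:ℝ) 1, ∀ y ∈ Ico (0:ℝ) 1, x < y →
      ω x / (1-x^2)^b ≤ C₂ * (ω y / (1-y^2)^b) := by
    intro x hx y hy hxy
    have h0 := hi₀ x hx y hy hxy
    dsimp only at h0
    refine h0.trans ?_
    apply mul_le_mul_of_nonneg_right (le_max_left _ _)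
    exact div_nonneg (hpos y hy).le (Real.rpow_nonneg (sq_bounds hy).1.le b)
  have hF := h (FF ω) (FF_memBloch ha hb hpos hC₁ hC₂ hd hi)
  have h1 := h (fun _ => 1) (one_memBloch ω)
  have h4b : (0:ℝ) < (4:ℝ)^b := Real.rpow_pos_of_pos (by norm_num) b
  have hX0 : (0:ℝ) < 4*(C₂*4^b) := by nlinarith
  have hg : Integrable (fun t : ℝ => 4*(C₂*4^b) * ‖FF ω (↑t:ℂ)‖ + 1) (μ.restrict (Ico 0 1)) := by
    apply Integrable.add ((hF.norm).const_mul (4*(C₂*4^b)))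
    simpa using h1.norm
  apply Integrable.mono' hg
  · apply ContinuousOn.aestronglyMeasurable _ measurableSet_Ico
    exact (continuousOn_tildeW hpos hcont).add continuousOn_const
  · rw [ae_restrict_iff' measurableSet_Ico]
    apply Eventually.of_forall
    intro t ht
    have h0 : 0 ≤ tildeW ω t := by
      apply intervalIntegral.integral_nonneg ht.1
      intro u hu
      have huI : u ∈ Ico (0:ℝ) 1 := ⟨hu.1, lt_of_le_of_lt hu.2 ht.2⟩
      exact (div_pos one_pos (hpos u huI)).le
    have hup := FF_re_lower hb hpos hC₂ hi hcont ht
    rw [Real.norm_of_nonneg (by linarith)]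
    linarith
end Final
end Est
end

section
/- Let ω, ν be normal weights on [0,1), α > -1, and μ a finite positive Borel measure on [0,1). Assume ω̃(1) = ∫_0^1 ds/ω(s) < ∞. If sup_{n≥1} n^{α+2} ν(1-1/n) μ_n < ∞, where μ_n = ∫_0^1 t^n dμ(t), then I_{μ,α+1}: B_ω → B_ν is compact. -/
open MeasureTheory Set Filter

set_option maxHeartbeats 1000000
section Helpers

variable {ν : ℝ → ℝ} {a' b' : ℝ}

lemma ratio_decr (hν : IsNormal ν a' b') :
    ∃ C > 0, ∀ x ∈ Ico (0:ℝ) 1, ∀ y ∈ Ico (0:ℝ) 1, x ≤ y →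
      ν y ≤ C * ν x * ((1 - y^2) / (1 - x^2)) ^ a' := by
  obtain ⟨C, hC, hmono⟩ := hν.2.2.2.2.1
  have ha' : 0 < a' := hν.1
  refine ⟨max C 1, lt_of_lt_of_le hC (le_max_left _ _), ?_⟩
  intro x hx y hy hxy
  have hx2 : (0:ℝ) < 1 - x^2 := by nlinarith [hx.1, hx.2]
  have hy2 : (0:ℝ) < 1 - y^2 := by nlinarith [hy.1, hy.2]
  have hνx : 0 < ν x := hν.2.2.1 x hx
  have hνy : 0 < ν y := hν.2.2.1 y hy
  rcases eq_or_lt_of_le hxy with rfl | hlt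
  · rw [div_self (ne_of_gt hx2), Real.one_rpow, mul_one]
    nlinarith [le_max_right C 1]
  · have h1 : ν y / (1-y^2)^a' ≤ C * (ν x / (1-x^2)^a') := hmono x hx y hy hlt
    have hpy : (0:ℝ) < (1-y^2)^a' := Real.rpow_pos_of_pos hy2 _
    have hpx : (0:ℝ) < (1-x^2)^a' := Real.rpow_pos_of_pos hx2 _
    have h2 : ν y ≤ C * ν x * ((1-y^2)^a' / (1-x^2)^a') := by
      rw [div_le_iff₀ hpy] at h1
      calc ν y ≤ C * (ν x / (1-x^2)^a') * (1-y^2)^a' := h1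
        _ = C * ν x * ((1-y^2)^a' / (1-x^2)^a') := by ring
    rw [Real.div_rpow (le_of_lt hy2) (le_of_lt hx2)]
    calc ν y ≤ C * ν x * ((1-y^2)^a' / (1-x^2)^a') := h2
      _ ≤ max C 1 * ν x * ((1-y^2)^a' / (1-x^2)^a') := by
          have : (0:ℝ) ≤ (1-y^2)^a' / (1-x^2)^a' := le_of_lt (div_pos hpy hpx)
          nlinarith [le_max_left C 1]

lemma ratio_incr (hν : IsNormal ν a' b') :
    ∃ C > 0, ∀ x ∈ Ico (0:ℝ) 1, ∀ y ∈ Ico (0:ℝ) 1, x ≤ y →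
      ν x ≤ C * ν y * ((1 - x^2) / (1 - y^2)) ^ b' := by
  obtain ⟨C, hC, hmono⟩ := hν.2.2.2.2.2
  refine ⟨max C 1, lt_of_lt_of_le hC (le_max_left _ _), ?_⟩
  intro x hx y hy hxy
  have hx2 : (0:ℝ) < 1 - x^2 := by nlinarith [hx.1, hx.2]
  have hy2 : (0:ℝ) < 1 - y^2 := by nlinarith [hy.1, hy.2]
  have hνx : 0 < ν x := hν.2.2.1 x hx
  have hνy : 0 < ν y := hν.2.2.1 y hy
  rcases eq_or_lt_of_le hxy with rfl | hlt
  · rw [div_self (ne_of_gt hx2), Real.one_rpow, mul_one]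
    nlinarith [le_max_right C 1]
  · have h1 : ν x / (1-x^2)^b' ≤ C * (ν y / (1-y^2)^b') := hmono x hx y hy hlt
    have hpy : (0:ℝ) < (1-y^2)^b' := Real.rpow_pos_of_pos hy2 _
    have hpx : (0:ℝ) < (1-x^2)^b' := Real.rpow_pos_of_pos hx2 _
    have h2 : ν x ≤ C * ν y * ((1-x^2)^b' / (1-y^2)^b') := by
      rw [div_le_iff₀ hpx] at h1
      calc ν x ≤ C * (ν y / (1-y^2)^b') * (1-x^2)^b' := h1
        _ = C * ν y * ((1-x^2)^b' / (1-y^2)^b') := by ring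
    rw [Real.div_rpow (le_of_lt hx2) (le_of_lt hy2)]
    calc ν x ≤ C * ν y * ((1-x^2)^b' / (1-y^2)^b') := h2
      _ ≤ max C 1 * ν y * ((1-x^2)^b' / (1-y^2)^b') := by
          have : (0:ℝ) ≤ (1-x^2)^b' / (1-y^2)^b' := le_of_lt (div_pos hpx hpy)
          nlinarith [le_max_left C 1]

end Helpers
section TailMeas

variable {ν : ℝ → ℝ} {a' b' : ℝ} {α : ℝ}

lemma pow_ge_exp_neg_two {n : ℕ} (hn : 2 ≤ n) {t : ℝ} (ht : 1 - 1/(n:ℝ) ≤ t) (ht1 : t < 1) :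
    Real.exp (-2) ≤ t ^ n := by
  have hn0 : (0:ℝ) < n := by positivity
  have hn2 : (2:ℝ) ≤ n := by exact_mod_cast hn
  have h4 : (0:ℝ) ≤ 1 - 1/(n:ℝ) := by
    rw [sub_nonneg, div_le_one hn0]; linarith
  have h1 : (2/(n:ℝ)) + 1 ≤ Real.exp (2/(n:ℝ)) := Real.add_one_le_exp _
  have hepos := Real.exp_pos (2/(n:ℝ))
  have hprod : Real.exp (-2/(n:ℝ)) * Real.exp (2/(n:ℝ)) = 1 := by
    rw [← Real.exp_add]; norm_num [neg_div]
  have key : Real.exp (-2/(n:ℝ)) ≤ 1 - 1/(n:ℝ) := by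
    have h2 : (1:ℝ) ≤ (1-1/(n:ℝ))*(1+2/(n:ℝ)) := by
      have h3 : (1-1/(n:ℝ))*(1+2/(n:ℝ)) - 1 = ((n:ℝ)-2)/(n:ℝ)^2 := by
        field_simp; ring
      nlinarith [div_nonneg (by linarith : (0:ℝ) ≤ (n:ℝ)-2) (by positivity : (0:ℝ) ≤ (n:ℝ)^2)]
    have hq : (1:ℝ) ≤ (1 - 1/(n:ℝ)) * Real.exp (2/(n:ℝ)) := by nlinarith
    nlinarith
  have hexp : (Real.exp (-2/(n:ℝ)))^n = Real.exp (-2) := by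
    rw [← Real.exp_nat_mul]
    congr 1
    field_simp
  calc Real.exp (-2) = (Real.exp (-2/(n:ℝ)))^n := hexp.symm
    _ ≤ t^n := pow_le_pow_left₀ (le_of_lt (Real.exp_pos _)) (le_trans key ht) n

lemma tail_meas (hν : IsNormal ν a' b') (μ : Measure ℝ) [IsFiniteMeasure μ] {M : ℝ}
    (h : ∀ n : ℕ, 1 ≤ n →
      (n : ℝ) ^ (α + 2) * ν (1 - 1 / (n:ℝ)) * ∫ t in Ico (0:ℝ) 1, t ^ n ∂μ ≤ M) :
    ∃ B > 0, ∀ n : ℕ, 2 ≤ n →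
      (μ (Ico (1 - 1/(n:ℝ)) 1)).toReal ≤ B / ((n:ℝ)^(α+2) * ν (1 - 1/(n:ℝ))) := by
  refine ⟨Real.exp 2 * max M 1, by positivity, ?_⟩
  intro n hn
  set s : ℝ := 1 - 1/(n:ℝ) with hs
  have hn0 : (0:ℝ) < n := by positivity
  have hn2 : (2:ℝ) ≤ n := by exact_mod_cast hn
  have hs0 : 0 ≤ s := by
    rw [hs, sub_nonneg, div_le_one hn0]; linarith
  have hs1 : s < 1 := by
    rw [hs]; have : (0:ℝ) < 1/n := by positivity
    linarith
  have hsmem : s ∈ Ico (0:ℝ) 1 := ⟨hs0, hs1⟩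
  have hνs : 0 < ν s := hν.2.2.1 s hsmem
  have hpow : (0:ℝ) < (n:ℝ)^(α+2) := Real.rpow_pos_of_pos hn0 _
  -- integrability of t^n
  have hint : ∀ u : Set ℝ, MeasurableSet u → u ⊆ Ico (0:ℝ) 1 →
      IntegrableOn (fun t : ℝ => t ^ n) u μ := by
    intro u hu hsub
    apply Integrable.mono' (integrable_const (1:ℝ))
    · exact (continuous_pow n).aestronglyMeasurable
    · rw [ae_restrict_iff' hu]
      filter_upwards with t ht
      have h1 := hsub ht
      rw [Real.norm_eq_abs, abs_pow, abs_of_nonneg h1.1]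
      exact pow_le_one₀ h1.1 (le_of_lt h1.2)
  have claim2 : Real.exp (-2) * (μ (Ico s 1)).toReal ≤ ∫ t in Ico s 1, t^n ∂μ := by
    have := MeasureTheory.setIntegral_const (μ := μ) (s := Ico s 1) (Real.exp (-2))
    rw [smul_eq_mul, mul_comm] at this
    rw [show (μ (Ico s 1)).toReal = μ.real (Ico s 1) from rfl, ← this]
    apply setIntegral_mono_on
    · exact integrableOn_const (measure_ne_top μ _)
    · exact hint _ measurableSet_Ico (fun t ht => ⟨le_trans hs0 ht.1, ht.2⟩)
    · exact measurableSet_Ico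
    · intro t ht
      exact pow_ge_exp_neg_two hn ht.1 ht.2
  have claim3 : ∫ t in Ico s 1, t^n ∂μ ≤ ∫ t in Ico (0:ℝ) 1, t^n ∂μ := by
    apply setIntegral_mono_set (hint _ measurableSet_Ico (fun t ht => ht))
    · filter_upwards [ae_restrict_mem measurableSet_Ico] with t ht
      exact pow_nonneg ht.1 n
    · exact HasSubset.Subset.eventuallyLE (fun t ht => ⟨le_trans hs0 ht.1, ht.2⟩)
  have hμn : ∫ t in Ico (0:ℝ) 1, t^n ∂μ ≤ M / ((n:ℝ)^(α+2) * ν s) := by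
    have := h n (le_trans one_le_two hn)
    rw [le_div_iff₀ (by positivity)]
    calc (∫ t in Ico (0:ℝ) 1, t^n ∂μ) * ((n:ℝ)^(α+2) * ν s)
        = (n : ℝ) ^ (α + 2) * ν s * ∫ t in Ico (0:ℝ) 1, t ^ n ∂μ := by ring
      _ ≤ M := this
  have hfinal : (μ (Ico s 1)).toReal ≤ Real.exp 2 * (M / ((n:ℝ)^(α+2) * ν s)) := by
    have h5 : Real.exp (-2) * (μ (Ico s 1)).toReal ≤ M / ((n:ℝ)^(α+2) * ν s) :=
      le_trans claim2 (le_trans claim3 hμn)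
    have h6 := mul_le_mul_of_nonneg_left h5 (le_of_lt (Real.exp_pos 2))
    calc (μ (Ico s 1)).toReal = Real.exp 2 * (Real.exp (-2) * (μ (Ico s 1)).toReal) := by
          rw [← mul_assoc, ← Real.exp_add]; norm_num
      _ ≤ Real.exp 2 * (M / ((n:ℝ)^(α+2) * ν s)) := h6
  calc (μ (Ico s 1)).toReal ≤ Real.exp 2 * (M / ((n:ℝ)^(α+2) * ν s)) := hfinal
    _ ≤ Real.exp 2 * max M 1 / ((n:ℝ)^(α+2) * ν s) := by
        rw [mul_div_assoc]
        apply mul_le_mul_of_nonneg_left _ (le_of_lt (Real.exp_pos 2))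
        apply div_le_div_of_nonneg_right ?_ (by positivity)
        exact le_max_left M 1

end TailMeas
section LemA

variable {ν : ℝ → ℝ} {a' b' : ℝ} {α : ℝ}

lemma aesm_rpow {μ : Measure ℝ} (c r : ℝ) {s : Set ℝ} (hs : MeasurableSet s) {d : ℝ}
    (hd : 0 < d) (hlow : ∀ t ∈ s, d ≤ 1 - t*r) :
    AEStronglyMeasurable (fun t : ℝ => (1 - t*r)^c) (μ.restrict s) := by
  apply ContinuousOn.aestronglyMeasurable _ hs
  apply ContinuousOn.rpow_const
    ((continuous_const.sub (continuous_id.mul continuous_const)).continuousOn)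
  intro t ht
  exact Or.inl (ne_of_gt (lt_of_lt_of_le hd (hlow t ht)))

lemma integrableOn_rpow {μ : Measure ℝ} [IsFiniteMeasure μ] {c : ℝ} (hc : c ≤ 0) (r : ℝ)
    {s : Set ℝ} (hs : MeasurableSet s) {d : ℝ} (hd : 0 < d) (hlow : ∀ t ∈ s, d ≤ 1 - t*r) :
    IntegrableOn (fun t : ℝ => (1 - t*r)^c) s μ := by
  apply Integrable.mono' (integrable_const (d ^ c)) (aesm_rpow c r hs hd hlow)
  rw [ae_restrict_iff' hs]
  filter_upwards with t ht
  have h1 := hlow t ht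
  rw [Real.norm_eq_abs, abs_of_nonneg (Real.rpow_nonneg (by linarith) c)]
  exact Real.rpow_le_rpow_of_nonpos hd h1 hc

lemma piece_bound {μ : Measure ℝ} [IsFiniteMeasure μ] {c : ℝ} (hc : 0 ≤ c) (r : ℝ)
    {s : Set ℝ} (hs : MeasurableSet s) {d : ℝ} (hd : 0 < d) (hlow : ∀ t ∈ s, d ≤ 1 - t*r) :
    ∫ t in s, (1 - t*r)^(-c) ∂μ ≤ d^(-c) * (μ s).toReal := by
  refine le_trans (le_abs_self _) ?_
  rw [← Real.norm_eq_abs]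
  apply norm_setIntegral_le_of_norm_le_const (measure_lt_top μ s)
  intro t ht
  have h1 := hlow t ht
  rw [Real.norm_eq_abs, abs_of_nonneg (Real.rpow_nonneg (by linarith) _)]
  exact Real.rpow_le_rpow_of_nonpos hd h1 (by linarith)

lemma geo_sum {q : ℝ} (h0 : 0 ≤ q) (h1 : q < 1) (m : ℕ) :
    ∑ j ∈ Finset.range m, q^j ≤ (1-q)⁻¹ := by
  calc ∑ j ∈ Finset.range m, q^j ≤ ∑' j : ℕ, q^j :=
        Summable.sum_le_tsum _ (fun i _ => pow_nonneg h0 i) (summable_geometric_of_lt_one h0 h1)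
    _ = (1-q)⁻¹ := tsum_geometric_of_lt_one h0 h1

lemma half_pow_rpow (m : ℕ) (c : ℝ) :
    ((1/2:ℝ)^(m+1))^(-c) = (2:ℝ)^c * ((2:ℝ)^m)^c := by
  have h1 : ((1/2:ℝ)^(m+1)) = ((2:ℝ)^(m+1))⁻¹ := by
    rw [one_div, inv_pow]
  rw [h1, Real.inv_rpow (by positivity), ← Real.rpow_neg (by positivity), neg_neg]
  rw [pow_succ, mul_comm ((2:ℝ)^m) 2, Real.mul_rpow (by norm_num) (by positivity)]

lemma shell_est (hν : IsNormal ν a' b') (μ : Measure ℝ) [IsFiniteMeasure μ] (hα : -1 < α)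
    {B : ℝ} (hB : 0 < B)
    (htail : ∀ n : ℕ, 2 ≤ n →
      (μ (Ico (1 - 1/(n:ℝ)) 1)).toReal ≤ B / ((n:ℝ)^(α+2) * ν (1 - 1/(n:ℝ))))
    (m : ℕ) (hm : 1 ≤ m) (r : ℝ) {s : Set ℝ} (hs : MeasurableSet s)
    (hsub : s ⊆ Ico (1-(1/2:ℝ)^m) 1) (hlow : ∀ t ∈ s, (1/2:ℝ)^(m+1) ≤ 1 - t*r) :
    ∫ t in s, (1 - t*r)^(-(α+2)) ∂μ ≤ B * (2:ℝ)^(α+2) / ν (1-(1/2:ℝ)^m) := by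
  have hq : (0:ℝ) < (1/2:ℝ)^(m+1) := by positivity
  have hqm : (0:ℝ) < (1/2:ℝ)^m := by positivity
  have hqm1 : (1/2:ℝ)^m ≤ 1 := pow_le_one₀ (by norm_num) (by norm_num)
  have hmem : 1-(1/2:ℝ)^m ∈ Ico (0:ℝ) 1 := ⟨by linarith, by linarith⟩
  have hνpos : 0 < ν (1-(1/2:ℝ)^m) := hν.2.2.1 _ hmem
  have hα2 : (0:ℝ) ≤ α + 2 := by linarith
  have hcast : ((2^m : ℕ) : ℝ) = (2:ℝ)^m := by push_cast; ring
  have hinv : 1/((2:ℝ)^m) = (1/2:ℝ)^m := by rw [div_pow]; norm_num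
  have hn2 : 2 ≤ 2^m := by
    calc 2 = 2^1 := (pow_one 2).symm
    _ ≤ 2^m := Nat.pow_le_pow_right (by norm_num) hm
  have htail' : (μ (Ico (1-(1/2:ℝ)^m) 1)).toReal ≤
      B / (((2:ℝ)^m)^(α+2) * ν (1-(1/2:ℝ)^m)) := by
    have := htail (2^m) hn2
    rwa [hcast, hinv] at this
  have hpow2 : (0:ℝ) < ((2:ℝ)^m)^(α+2) := Real.rpow_pos_of_pos (by positivity) _
  calc ∫ t in s, (1 - t*r)^(-(α+2)) ∂μ
      ≤ ((1/2:ℝ)^(m+1))^(-(α+2)) * (μ s).toReal := piece_bound hα2 r hs hq hlow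
    _ ≤ ((1/2:ℝ)^(m+1))^(-(α+2)) * (μ (Ico (1-(1/2:ℝ)^m) 1)).toReal := by
        apply mul_le_mul_of_nonneg_left _ (Real.rpow_nonneg (le_of_lt hq) _)
        exact ENNReal.toReal_mono (measure_ne_top μ _) (measure_mono hsub)
    _ ≤ ((1/2:ℝ)^(m+1))^(-(α+2)) * (B / (((2:ℝ)^m)^(α+2) * ν (1-(1/2:ℝ)^m))) :=
        mul_le_mul_of_nonneg_left htail' (Real.rpow_nonneg (le_of_lt hq) _)
    _ = B * (2:ℝ)^(α+2) / ν (1-(1/2:ℝ)^m) := by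
        rw [half_pow_rpow m _]
        have hb : ((2:ℝ)^m)^(α+2) ≠ 0 := ne_of_gt hpow2
        calc ((2:ℝ)^(α+2) * ((2:ℝ)^m)^(α+2)) * (B / (((2:ℝ)^m)^(α+2) * ν (1-(1/2:ℝ)^m)))
            = (B * (2:ℝ)^(α+2) / ν (1-(1/2:ℝ)^m)) * (((2:ℝ)^m)^(α+2) / ((2:ℝ)^m)^(α+2)) := by
              ring
          _ = B * (2:ℝ)^(α+2) / ν (1-(1/2:ℝ)^m) := by rw [div_self hb, mul_one]

lemma shell_sum (hν : IsNormal ν a' b') (μ : Measure ℝ) [IsFiniteMeasure μ] (hα : -1 < α)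
    {B : ℝ} (hB : 0 < B)
    (htail : ∀ n : ℕ, 2 ≤ n →
      (μ (Ico (1 - 1/(n:ℝ)) 1)).toReal ≤ B / ((n:ℝ)^(α+2) * ν (1 - 1/(n:ℝ))))
    (m : ℕ) :
    ∫ t in Ico (0:ℝ) (1-(1/2:ℝ)^m), (1 - t*1)^(-(α+2)) ∂μ ≤
      (2:ℝ)^(α+2) * (μ (Ico (0:ℝ) 1)).toReal +
      ∑ j ∈ Finset.range m, B * (2:ℝ)^(α+2) / ν (1-(1/2:ℝ)^j) := by
  have hα2 : (0:ℝ) ≤ α + 2 := by linarith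
  have hE : (0:ℝ) ≤ (2:ℝ)^(α+2) * (μ (Ico (0:ℝ) 1)).toReal :=
    mul_nonneg (Real.rpow_nonneg (by norm_num) _) ENNReal.toReal_nonneg
  induction m with
  | zero =>
    simp only [pow_zero, sub_self, Set.Ico_self, Measure.restrict_empty, integral_zero_measure,
      Finset.range_zero, Finset.sum_empty, add_zero]
    exact hE
  | succ m ih =>
    have hqm : (0:ℝ) < (1/2:ℝ)^m := by positivity
    have hqm1' : (0:ℝ) < (1/2:ℝ)^(m+1) := by positivity
    have hqle : ((1/2:ℝ))^(m+1) ≤ (1/2:ℝ)^m :=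
      pow_le_pow_of_le_one (by norm_num) (by norm_num) (Nat.le_succ m)
    have hqm1 : (1/2:ℝ)^m ≤ 1 := pow_le_one₀ (by norm_num) (by norm_num)
    have hx0 : (0:ℝ) ≤ 1-(1/2:ℝ)^m := by linarith
    have hxy : (1:ℝ)-(1/2:ℝ)^m ≤ 1-(1/2:ℝ)^(m+1) := by linarith
    have hlow1 : ∀ t ∈ Ico (0:ℝ) (1-(1/2:ℝ)^m), (1/2:ℝ)^m ≤ 1 - t*1 := by
      intro t ht; rw [mul_one]; have := ht.2; linarith
    have hlow2 : ∀ t ∈ Ico (1-(1/2:ℝ)^m) (1-(1/2:ℝ)^(m+1)), (1/2:ℝ)^(m+1) ≤ 1 - t*1 := by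
      intro t ht; rw [mul_one]; have := ht.2; linarith
    rw [← Set.Ico_union_Ico_eq_Ico hx0 hxy,
      setIntegral_union Set.Ico_disjoint_Ico_same measurableSet_Ico
        (integrableOn_rpow (by linarith) 1 measurableSet_Ico hqm hlow1)
        (integrableOn_rpow (by linarith) 1 measurableSet_Ico hqm1' hlow2)]
    rcases Nat.eq_zero_or_pos m with rfl | hm1
    · -- m = 0 : first integral over the empty set, second piece ≤ E
      have he : Ico (0:ℝ) (1-(1/2:ℝ)^0) = ∅ := by norm_num
      rw [he]
      simp only [Measure.restrict_empty, integral_zero_measure, zero_add]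
      have hp : ∫ t in Ico (1-(1/2:ℝ)^0) (1-(1/2:ℝ)^(0+1)), (1 - t*1)^(-(α+2)) ∂μ ≤
          ((1/2:ℝ)^(0+1))^(-(α+2)) * (μ (Ico (1-(1/2:ℝ)^0) (1-(1/2:ℝ)^(0+1)))).toReal :=
        piece_bound hα2 1 measurableSet_Ico (by norm_num) hlow2
      have hval : ((1/2:ℝ)^(0+1))^(-(α+2)) = (2:ℝ)^(α+2) := by
        rw [half_pow_rpow 0]
        simp [Real.one_rpow]
      have hμ : (μ (Ico (1-(1/2:ℝ)^0) (1-(1/2:ℝ)^(0+1)))).toReal ≤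
          (μ (Ico (0:ℝ) 1)).toReal := by
        apply ENNReal.toReal_mono (measure_ne_top μ _) (measure_mono _)
        intro t ht
        constructor
        · have := ht.1; simp only [pow_zero] at this; linarith
        · have := ht.2; nlinarith [ht.2]
      have hc0 : (0:ℝ) ≤ B * (2:ℝ)^(α+2) / ν (1-(1/2:ℝ)^0) := by
        apply div_nonneg (by positivity)
        have : (1:ℝ)-(1/2:ℝ)^0 = 0 := by norm_num
        rw [this]
        exact le_of_lt (hν.2.2.1 0 ⟨le_refl _, zero_lt_one⟩)
      rw [Finset.sum_range_one]
      have h2 : (2:ℝ)^(α+2) * (μ (Ico (1-(1/2:ℝ)^0) (1-(1/2:ℝ)^(0+1)))).toReal ≤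
          (2:ℝ)^(α+2) * (μ (Ico (0:ℝ) 1)).toReal :=
        mul_le_mul_of_nonneg_left hμ (Real.rpow_nonneg (by norm_num) _)
      rw [hval] at hp
      linarith
    · -- m ≥ 1
      have hpiece := shell_est hν μ hα hB htail m hm1 1 (measurableSet_Ico)
        (fun t ht => ⟨ht.1, lt_of_lt_of_le ht.2 (by linarith)⟩) hlow2
      rw [Finset.sum_range_succ]
      linarith [ih]

end LemA
section LemAMain

variable {ν : ℝ → ℝ} {a' b' : ℝ} {α : ℝ}

lemma pow_rpow_comm (x : ℝ) (hx : 0 ≤ x) (c : ℝ) (k : ℕ) : (x^k)^c = (x^c)^k := by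
  rw [← Real.rpow_natCast x k, ← Real.rpow_mul hx, mul_comm ((k:ℕ):ℝ) c,
    Real.rpow_mul hx, Real.rpow_natCast]

lemma lemA (hν : IsNormal ν a' b') (μ : Measure ℝ) [IsFiniteMeasure μ] (hα : -1 < α) {M : ℝ}
    (h : ∀ n : ℕ, 1 ≤ n →
      (n : ℝ) ^ (α + 2) * ν (1 - 1 / (n:ℝ)) * ∫ t in Ico (0:ℝ) 1, t ^ n ∂μ ≤ M) :
    ∃ C > 0, ∀ r ∈ Ico (0:ℝ) 1, ν r * ∫ t in Ico (0:ℝ) 1, (1 - t*r)^(-(α+2)) ∂μ ≤ C := by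
  obtain ⟨B, hB, htail⟩ := tail_meas hν μ h
  obtain ⟨Cd, hCd, hdec⟩ := ratio_decr hν
  have hν0 : 0 < ν 0 := hν.2.2.1 0 ⟨le_refl _, zero_lt_one⟩
  have ha' : 0 < a' := hν.1
  have hα2 : (0:ℝ) ≤ α + 2 := by linarith
  have hα2' : -(α+2) ≤ 0 := by linarith
  set q' : ℝ := (1/2:ℝ)^a' with hq'def
  have hq'0 : 0 < q' := Real.rpow_pos_of_pos (by norm_num) _
  have hq'1 : q' < 1 := Real.rpow_lt_one (by norm_num) (by norm_num) ha'
  set E : ℝ := (2:ℝ)^(α+2) * (μ (Ico (0:ℝ) 1)).toReal with hEdef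
  have hE0 : 0 ≤ E := mul_nonneg (Real.rpow_nonneg (by norm_num) _) ENNReal.toReal_nonneg
  have hGnn : (0:ℝ) ≤ B * (2:ℝ)^(α+2) * (Cd * (2:ℝ)^a') * (1-q')⁻¹ := by
    apply mul_nonneg _ (inv_nonneg.2 (by linarith))
    have h2 : (0:ℝ) ≤ (2:ℝ)^(α+2) := Real.rpow_nonneg (by norm_num) _
    have h3 : (0:ℝ) ≤ (2:ℝ)^a' := Real.rpow_nonneg (by norm_num) _
    positivity
  refine ⟨Cd * ν 0 * E + B * (2:ℝ)^(α+2) * (Cd * (2:ℝ)^a') * (1-q')⁻¹ + 1, by positivity, ?_⟩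
  intro r hr
  have hνr : 0 < ν r := hν.2.2.1 r hr
  have hνrle : ν r ≤ Cd * ν 0 := by
    have hd := hdec 0 ⟨le_refl _, zero_lt_one⟩ r hr hr.1
    have hbase0 : (0:ℝ) ≤ ((1-r^2)/(1-(0:ℝ)^2)) := by nlinarith [hr.2, hr.1]
    have hbase : ((1-r^2)/(1-(0:ℝ)^2)) ≤ 1 := by nlinarith [hr.1]
    have hone := Real.rpow_le_one hbase0 hbase (le_of_lt ha')
    nlinarith [mul_nonneg (mul_nonneg hCd.le hν0.le) (sub_nonneg.2 hone)]
  by_cases hr2 : r < 1/2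
  · -- small r
    have hlow : ∀ t ∈ Ico (0:ℝ) 1, (1/2:ℝ) ≤ 1 - t*r := by
      intro t ht
      nlinarith [ht.1, ht.2, hr.1, mul_nonneg ht.1 hr.1]
    have hint := piece_bound (μ := μ) hα2 r measurableSet_Ico (show (0:ℝ) < 1/2 by norm_num) hlow
    have hhalf : ((1/2:ℝ))^(-(α+2)) = (2:ℝ)^(α+2) := by
      rw [one_div, Real.inv_rpow (by norm_num), ← Real.rpow_neg (by norm_num), neg_neg]
    rw [hhalf] at hint
    have hIk : ν r * ∫ t in Ico (0:ℝ) 1, (1 - t*r)^(-(α+2)) ∂μ ≤ Cd * ν 0 * E := by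
      calc ν r * ∫ t in Ico (0:ℝ) 1, (1 - t*r)^(-(α+2)) ∂μ ≤ ν r * E :=
            mul_le_mul_of_nonneg_left hint hνr.le
        _ ≤ Cd * ν 0 * E := mul_le_mul_of_nonneg_right hνrle hE0
    linarith
  · -- 1/2 ≤ r
    push_neg at hr2
    have hr1 : r < 1 := hr.2
    have h1r : 0 < 1 - r := by linarith
    have hex : ∃ k, (1/2:ℝ)^(k+1) < 1-r := by
      obtain ⟨k, hk⟩ := exists_pow_lt_of_lt_one h1r (show (1/2:ℝ) < 1 by norm_num)
      exact ⟨k, lt_of_le_of_lt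
        (pow_le_pow_of_le_one (by norm_num) (by norm_num) (Nat.le_succ k)) hk⟩
    set m := Nat.find hex with hmdef
    have hPm : (1/2:ℝ)^(m+1) < 1-r := Nat.find_spec hex
    have hm1 : 1 ≤ m := by
      by_contra hcon
      have hm0 : m = 0 := by omega
      rw [hm0, pow_one] at hPm
      linarith
    have hle : 1-r ≤ (1/2:ℝ)^m := by
      have hmm : m - 1 < m := by omega
      have hmin := Nat.find_min hex hmm
      push_neg at hmin
      have hsm : m - 1 + 1 = m := by omega
      rwa [hsm] at hmin
    have hqm : (0:ℝ) < (1/2:ℝ)^m := by positivity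
    have hqm' : (0:ℝ) < (1/2:ℝ)^(m+1) := by positivity
    have hqm1 : (1/2:ℝ)^m ≤ 1 := pow_le_one₀ (by norm_num) (by norm_num)
    have hqle : ((1/2:ℝ))^(m+1) ≤ (1/2:ℝ)^m :=
      pow_le_pow_of_le_one (by norm_num) (by norm_num) (Nat.le_succ m)
    have hx0 : (0:ℝ) ≤ 1-(1/2:ℝ)^m := by linarith
    have hxy : 1-(1/2:ℝ)^m ≤ 1 := by linarith
    have hlowA : ∀ t ∈ Ico (0:ℝ) (1-(1/2:ℝ)^m), (1/2:ℝ)^(m+1) ≤ 1 - t*r := by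
      intro t ht
      have h2 : t*r ≤ t := mul_le_of_le_one_right ht.1 (le_of_lt hr1)
      have := ht.2
      linarith
    have hlowA1 : ∀ t ∈ Ico (0:ℝ) (1-(1/2:ℝ)^m), (1/2:ℝ)^m ≤ 1 - t*1 := by
      intro t ht; rw [mul_one]; have := ht.2; linarith
    have hlowB : ∀ t ∈ Ico (1-(1/2:ℝ)^m) 1, (1/2:ℝ)^(m+1) ≤ 1 - t*r := by
      intro t ht
      have h2 : t*r ≤ r := by nlinarith [ht.2, hr.1, ht.1]
      linarith
    have intA := integrableOn_rpow (μ := μ) hα2' r measurableSet_Ico hqm' hlowA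
    have intA1 := integrableOn_rpow (μ := μ) hα2' 1 measurableSet_Ico hqm hlowA1
    have intB := integrableOn_rpow (μ := μ) hα2' r measurableSet_Ico hqm' hlowB
    rw [← Set.Ico_union_Ico_eq_Ico hx0 hxy,
      setIntegral_union Set.Ico_disjoint_Ico_same measurableSet_Ico intA intB]
    have hmono : ∫ t in Ico (0:ℝ) (1-(1/2:ℝ)^m), (1 - t*r)^(-(α+2)) ∂μ ≤
        ∫ t in Ico (0:ℝ) (1-(1/2:ℝ)^m), (1 - t*1)^(-(α+2)) ∂μ := by
      apply setIntegral_mono_on intA intA1 measurableSet_Ico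
      intro t ht
      apply Real.rpow_le_rpow_of_nonpos _ _ hα2'
      · rw [mul_one]; linarith [hlowA1 t ht, hqm]
      · rw [mul_one]
        have : t*r ≤ t := mul_le_of_le_one_right ht.1 (le_of_lt hr1)
        linarith
    have hfirst := shell_sum hν μ hα hB htail m
    have hsecond := shell_est hν μ hα hB htail m hm1 r measurableSet_Ico
      (fun t ht => ht) hlowB
    -- per-term bound
    have hterm : ∀ j : ℕ, j ≤ m →
        ν r * (B * (2:ℝ)^(α+2) / ν (1-(1/2:ℝ)^j)) ≤
        B * (2:ℝ)^(α+2) * (Cd * (2:ℝ)^a' * q'^(m-j)) := by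
      intro j hj
      have hqj : (0:ℝ) < (1/2:ℝ)^j := by positivity
      have hqj1 : (1/2:ℝ)^j ≤ 1 := pow_le_one₀ (by norm_num) (by norm_num)
      have hxmem : 1-(1/2:ℝ)^j ∈ Ico (0:ℝ) 1 := ⟨by linarith, by linarith⟩
      have hνx : 0 < ν (1-(1/2:ℝ)^j) := hν.2.2.1 _ hxmem
      have hqmj : (1/2:ℝ)^m ≤ (1/2:ℝ)^j :=
        pow_le_pow_of_le_one (by norm_num) (by norm_num) hj
      have hxr : 1-(1/2:ℝ)^j ≤ r := by linarith
      have hd := hdec _ hxmem r hr hxr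
      have hx2pos : (0:ℝ) < 1-(1-(1/2:ℝ)^j)^2 := by nlinarith
      have hden : (1/2:ℝ)^j ≤ 1-(1-(1/2:ℝ)^j)^2 := by nlinarith
      have hmsplit : (1/2:ℝ)^m = (1/2:ℝ)^j * (1/2:ℝ)^(m-j) := by
        rw [← pow_add]
        congr 1
        omega
      have hratio : ((1-r^2)/(1-(1-(1/2:ℝ)^j)^2)) ≤ 2 * (1/2:ℝ)^(m-j) := by
        rw [div_le_iff₀ hx2pos]
        have hnum : 1-r^2 ≤ 2*(1-r) := by nlinarith [hr.1]
        have hpmj : (0:ℝ) < (1/2:ℝ)^(m-j) := by positivity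
        nlinarith [mul_le_mul_of_nonneg_left hden (le_of_lt (by positivity : (0:ℝ) < 2 * (1/2:ℝ)^(m-j)))]
      have hratio0 : 0 ≤ ((1-r^2)/(1-(1-(1/2:ℝ)^j)^2)) :=
        div_nonneg (by nlinarith [hr.2, hr.1]) hx2pos.le
      have hrp : ((1-r^2)/(1-(1-(1/2:ℝ)^j)^2))^a' ≤ (2:ℝ)^a' * q'^(m-j) := by
        calc ((1-r^2)/(1-(1-(1/2:ℝ)^j)^2))^a' ≤ (2 * (1/2:ℝ)^(m-j))^a' :=
              Real.rpow_le_rpow hratio0 hratio (le_of_lt ha')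
          _ = (2:ℝ)^a' * ((1/2:ℝ)^(m-j))^a' := Real.mul_rpow (by norm_num) (by positivity)
          _ = (2:ℝ)^a' * q'^(m-j) := by rw [pow_rpow_comm (1/2:ℝ) (by norm_num) a' (m-j)]
      have hfrac : ν r / ν (1-(1/2:ℝ)^j) ≤ Cd * ((2:ℝ)^a' * q'^(m-j)) := by
        rw [div_le_iff₀ hνx]
        calc ν r ≤ Cd * ν (1-(1/2:ℝ)^j) * ((1-r^2)/(1-(1-(1/2:ℝ)^j)^2))^a' := hd
          _ ≤ Cd * ν (1-(1/2:ℝ)^j) * ((2:ℝ)^a' * q'^(m-j)) :=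
              mul_le_mul_of_nonneg_left hrp (mul_nonneg hCd.le hνx.le)
          _ = Cd * ((2:ℝ)^a' * q'^(m-j)) * ν (1-(1/2:ℝ)^j) := by ring
      have heq : ν r * (B * (2:ℝ)^(α+2) / ν (1-(1/2:ℝ)^j)) =
          (B * (2:ℝ)^(α+2)) * (ν r / ν (1-(1/2:ℝ)^j)) := by ring
      rw [heq]
      have hB2 : (0:ℝ) ≤ B * (2:ℝ)^(α+2) :=
        mul_nonneg hB.le (Real.rpow_nonneg (by norm_num) _)
      calc (B * (2:ℝ)^(α+2)) * (ν r / ν (1-(1/2:ℝ)^j)) ≤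
            (B * (2:ℝ)^(α+2)) * (Cd * ((2:ℝ)^a' * q'^(m-j))) :=
            mul_le_mul_of_nonneg_left hfrac hB2
        _ = B * (2:ℝ)^(α+2) * (Cd * (2:ℝ)^a' * q'^(m-j)) := by ring
    have hsum : ∑ j ∈ Finset.range (m+1), ν r * (B * (2:ℝ)^(α+2) / ν (1-(1/2:ℝ)^j)) ≤
        B * (2:ℝ)^(α+2) * (Cd * (2:ℝ)^a') * (1-q')⁻¹ := by
      have hB2' : (0:ℝ) ≤ B * (2:ℝ)^(α+2) * (Cd * (2:ℝ)^a') := by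
        have h2 : (0:ℝ) ≤ (2:ℝ)^(α+2) := Real.rpow_nonneg (by norm_num) _
        have h3 : (0:ℝ) ≤ (2:ℝ)^a' := Real.rpow_nonneg (by norm_num) _
        positivity
      calc ∑ j ∈ Finset.range (m+1), ν r * (B * (2:ℝ)^(α+2) / ν (1-(1/2:ℝ)^j))
          ≤ ∑ j ∈ Finset.range (m+1), B * (2:ℝ)^(α+2) * (Cd * (2:ℝ)^a' * q'^(m-j)) :=
            Finset.sum_le_sum (fun j hj => hterm j (by
              have := Finset.mem_range.1 hj; omega))
        _ = B * (2:ℝ)^(α+2) * (Cd * (2:ℝ)^a') * ∑ j ∈ Finset.range (m+1), q'^(m-j) := by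
            rw [Finset.mul_sum]
            apply Finset.sum_congr rfl
            intro j _
            ring
        _ = B * (2:ℝ)^(α+2) * (Cd * (2:ℝ)^a') * ∑ j ∈ Finset.range (m+1), q'^j := by
            congr 1
            have hrefl := Finset.sum_range_reflect (fun k => q'^k) (m+1)
            simp only [Nat.add_sub_cancel] at hrefl
            rw [← hrefl]
        _ ≤ B * (2:ℝ)^(α+2) * (Cd * (2:ℝ)^a') * (1-q')⁻¹ :=
            mul_le_mul_of_nonneg_left (geo_sum hq'0.le hq'1 (m+1)) hB2'
    have hI1 : ∫ t in Ico (0:ℝ) (1-(1/2:ℝ)^m), (1 - t*r)^(-(α+2)) ∂μ ≤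
        E + ∑ j ∈ Finset.range m, B * (2:ℝ)^(α+2) / ν (1-(1/2:ℝ)^j) :=
      le_trans hmono hfirst
    have hνrE : ν r * E ≤ Cd * ν 0 * E := mul_le_mul_of_nonneg_right hνrle hE0
    calc ν r * ((∫ t in Ico (0:ℝ) (1-(1/2:ℝ)^m), (1 - t*r)^(-(α+2)) ∂μ) +
          ∫ t in Ico (1-(1/2:ℝ)^m) 1, (1 - t*r)^(-(α+2)) ∂μ)
        ≤ ν r * ((E + ∑ j ∈ Finset.range m, B * (2:ℝ)^(α+2) / ν (1-(1/2:ℝ)^j)) +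
          B * (2:ℝ)^(α+2) / ν (1-(1/2:ℝ)^m)) :=
          mul_le_mul_of_nonneg_left (add_le_add hI1 hsecond) hνr.le
      _ = ν r * E + ∑ j ∈ Finset.range (m+1), ν r * (B * (2:ℝ)^(α+2) / ν (1-(1/2:ℝ)^j)) := by
          rw [Finset.sum_range_succ, mul_add, mul_add, Finset.mul_sum, add_assoc]
      _ ≤ Cd * ν 0 * E + B * (2:ℝ)^(α+2) * (Cd * (2:ℝ)^a') * (1-q')⁻¹ := add_le_add hνrE hsum
      _ ≤ Cd * ν 0 * E + B * (2:ℝ)^(α+2) * (Cd * (2:ℝ)^a') * (1-q')⁻¹ + 1 := by linarith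

end LemAMain
section DerivPart

variable {α : ℝ}

lemma norm_cpow_ofReal {w : ℂ} (hw : w ≠ 0) (c : ℝ) : ‖w ^ ((c:ℝ):ℂ)‖ = ‖w‖ ^ c := by
  rw [Complex.norm_cpow_of_ne_zero hw]
  simp [Complex.ofReal_im, Complex.ofReal_re, Real.exp_zero]

lemma one_sub_mul_ne_zero {t : ℝ} (ht : t ∈ Ico (0:ℝ) 1) {x : ℂ} (hx : ‖x‖ < 1) :
    (0:ℝ) < 1 - t * ‖x‖ ∧ 1 - t * ‖x‖ ≤ ‖1 - (t:ℂ)*x‖ ∧ (1 - (t:ℂ)*x) ≠ 0 := by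
  have h1 : t * ‖x‖ ≤ ‖x‖ := mul_le_of_le_one_left (norm_nonneg x) (le_of_lt ht.2)
  have h0 : (0:ℝ) ≤ t * ‖x‖ := mul_nonneg ht.1 (norm_nonneg x)
  have hpos : (0:ℝ) < 1 - t * ‖x‖ := by linarith
  have hle : 1 - t * ‖x‖ ≤ ‖1 - (t:ℂ)*x‖ := by
    have := norm_sub_norm_le (1:ℂ) ((t:ℂ)*x)
    rw [norm_one] at this
    have he : ‖(t:ℂ)*x‖ = t * ‖x‖ := by
      rw [norm_mul, Complex.norm_real, Real.norm_eq_abs, abs_of_nonneg ht.1]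
    linarith
  refine ⟨hpos, hle, ?_⟩
  intro hzero
  rw [hzero, norm_zero] at hle
  linarith

lemma slit_mem {t : ℝ} (ht : t ∈ Ico (0:ℝ) 1) {x : ℂ} (hx : ‖x‖ < 1) :
    (1 - (t:ℂ)*x) ∈ Complex.slitPlane := by
  apply Complex.mem_slitPlane_iff.2 (Or.inl _)
  have hre : ((t:ℂ)*x).re = t * x.re := by
    rw [Complex.mul_re]
    simp [Complex.ofReal_re, Complex.ofReal_im]
  have h1 : |x.re| ≤ ‖x‖ := Complex.abs_re_le_norm x
  have h2 : t * x.re ≤ t * |x.re| := mul_le_mul_of_nonneg_left (le_abs_self _) ht.1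
  have h3 : t * |x.re| ≤ t * ‖x‖ := mul_le_mul_of_nonneg_left h1 ht.1
  have h4 : t * ‖x‖ ≤ ‖x‖ := mul_le_of_le_one_left (norm_nonneg x) (le_of_lt ht.2)
  have : (1 - (t:ℂ)*x).re = 1 - t * x.re := by
    rw [Complex.sub_re, hre, Complex.one_re]
  rw [this]
  linarith

lemma hasDerivAt_kernel (α : ℝ) {t : ℝ} (ht : t ∈ Ico (0:ℝ) 1) {z : ℂ} (hz : ‖z‖ < 1)
    (w : ℂ) :
    HasDerivAt (fun x : ℂ => w / (1 - (t:ℂ)*x)^((α:ℂ)+1))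
      (w * (((α:ℂ)+1) * t * (1 - (t:ℂ)*z)^(-((α:ℂ)+2)))) z := by
  have hslit := slit_mem ht hz
  have hinner : HasDerivAt (fun x : ℂ => 1 - (t:ℂ)*x) (-(t:ℂ)) z := by
    simpa using ((hasDerivAt_id z).const_mul (t:ℂ)).const_sub 1
  have hcp : HasDerivAt (fun x : ℂ => (1 - (t:ℂ)*x) ^ (-((α:ℂ)+1)))
      ((-((α:ℂ)+1)) * (1 - (t:ℂ)*z) ^ (-((α:ℂ)+1) - 1) * (-(t:ℂ))) z :=
    HasDerivAt.cpow_const hinner hslit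
  have he : (-((α:ℂ)+1) - 1) = -((α:ℂ)+2) := by ring
  rw [he] at hcp
  have hfun : (fun x : ℂ => w / (1 - (t:ℂ)*x)^((α:ℂ)+1)) =
      (fun x : ℂ => w * (1 - (t:ℂ)*x)^(-((α:ℂ)+1))) := by
    funext x
    rw [Complex.cpow_neg, div_eq_mul_inv]
  rw [hfun]
  have := hcp.const_mul w
  exact this.congr_deriv (by ring)

lemma norm_kernel_deriv {t : ℝ} (ht : t ∈ Ico (0:ℝ) 1) {x : ℂ} (hx : ‖x‖ < 1) (hα : -1 < α)
    (w : ℂ) :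
    ‖w * (((α:ℂ)+1) * t * (1 - (t:ℂ)*x)^(-((α:ℂ)+2)))‖ ≤
      ‖w‖ * ((α+1) * (1 - t * ‖x‖) ^ (-(α+2))) := by
  obtain ⟨hpos, hle, hne⟩ := one_sub_mul_ne_zero ht hx
  have hcast : (-((α:ℂ)+2)) = ((-(α+2):ℝ):ℂ) := by push_cast; ring
  have hnorm : ‖(1 - (t:ℂ)*x)^(-((α:ℂ)+2))‖ = ‖1 - (t:ℂ)*x‖ ^ (-(α+2)) := by
    rw [hcast, norm_cpow_ofReal hne]
  have hbound : ‖1 - (t:ℂ)*x‖ ^ (-(α+2)) ≤ (1 - t * ‖x‖) ^ (-(α+2)) :=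
    Real.rpow_le_rpow_of_nonpos hpos hle (by linarith)
  have hα1 : ‖((α:ℂ)+1)‖ = α+1 := by
    have : ((α:ℂ)+1) = (((α+1):ℝ):ℂ) := by push_cast; ring
    rw [this, Complex.norm_real, Real.norm_eq_abs, abs_of_nonneg (by linarith)]
  have hαt : ‖(t:ℂ)‖ = t := by
    rw [Complex.norm_real, Real.norm_eq_abs, abs_of_nonneg ht.1]
  calc ‖w * (((α:ℂ)+1) * t * (1 - (t:ℂ)*x)^(-((α:ℂ)+2)))‖
      = ‖w‖ * ((α+1) * t * ‖(1 - (t:ℂ)*x)^(-((α:ℂ)+2))‖) := by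
        rw [norm_mul, norm_mul, norm_mul, hα1, hαt]
    _ ≤ ‖w‖ * ((α+1) * 1 * ((1 - t * ‖x‖) ^ (-(α+2)))) := by
        apply mul_le_mul_of_nonneg_left _ (norm_nonneg w)
        rw [hnorm]
        apply mul_le_mul
        · apply mul_le_mul_of_nonneg_left (le_of_lt ht.2) (by linarith)
        · exact hbound
        · exact Real.rpow_nonneg (norm_nonneg _) _
        · nlinarith [ht.1, ht.2]
    _ = ‖w‖ * ((α+1) * (1 - t * ‖x‖) ^ (-(α+2))) := by ring_nf

end DerivPart
section Parametric

variable {α : ℝ}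

lemma ofReal_mem_ball {t : ℝ} (ht : t ∈ Ico (0:ℝ) 1) : ((t:ℝ):ℂ) ∈ Metric.ball (0:ℂ) 1 := by
  rw [mem_ball_zero_iff, Complex.norm_real, Real.norm_eq_abs, abs_of_nonneg ht.1]
  exact ht.2

lemma continuousOn_kernel_mul {f : ℂ → ℂ} (hf : ContinuousOn f (Metric.ball 0 1))
    {x : ℂ} (hx : ‖x‖ < 1) (c : ℂ) (g : ℝ → ℂ) (hg : Continuous g) :
    ContinuousOn (fun t : ℝ => f t * (g t * (1 - (t:ℂ)*x) ^ c)) (Ico (0:ℝ) 1) := by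
  apply ContinuousOn.mul
  · exact hf.comp Complex.continuous_ofReal.continuousOn (fun t ht => ofReal_mem_ball ht)
  · apply ContinuousOn.mul hg.continuousOn
    apply ContinuousOn.cpow_const
    · exact (continuous_const.sub (Complex.continuous_ofReal.mul continuous_const)).continuousOn
    · intro t ht
      exact slit_mem ht hx

lemma hasDerivAt_intHilbert (μ : Measure ℝ) [IsFiniteMeasure μ] (hα : -1 < α)
    {f : ℂ → ℂ} (hf : ContinuousOn f (Metric.ball 0 1)) {δ : ℝ}
    (hδ : ∀ t ∈ Ico (0:ℝ) 1, ‖f t‖ ≤ δ) {z : ℂ} (hz : ‖z‖ < 1) :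
    Integrable (fun t : ℝ => f t * (((α:ℂ)+1) * t * (1 - (t:ℂ)*z)^(-((α:ℂ)+2))))
      (μ.restrict (Ico (0:ℝ) 1)) ∧
    HasDerivAt (intHilbert μ α f)
      (∫ t in Ico (0:ℝ) 1, f t * (((α:ℂ)+1) * t * (1 - (t:ℂ)*z)^(-((α:ℂ)+2))) ∂μ) z := by
  have hδ0 : 0 ≤ δ := le_trans (norm_nonneg _) (hδ 0 ⟨le_refl _, zero_lt_one⟩)
  have hε0 : 0 < (1-‖z‖)/2 := by linarith
  have hρ1 : (1+‖z‖)/2 < 1 := by linarith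
  have hρ0 : 0 < 1 - (1+‖z‖)/2 := by linarith
  have hρ : ∀ x ∈ Metric.ball z ((1-‖z‖)/2), ‖x‖ ≤ (1+‖z‖)/2 := by
    intro x hx
    rw [Metric.mem_ball, dist_eq_norm] at hx
    calc ‖x‖ = ‖z + (x - z)‖ := by ring_nf
      _ ≤ ‖z‖ + ‖x - z‖ := norm_add_le _ _
      _ ≤ (1+‖z‖)/2 := by linarith
  have hxlt1 : ∀ x ∈ Metric.ball z ((1-‖z‖)/2), ‖x‖ < 1 :=
    fun x hx => lt_of_le_of_lt (hρ x hx) hρ1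
  have key := hasDerivAt_integral_of_dominated_loc_of_deriv_le
    (μ := μ.restrict (Ico (0:ℝ) 1))
    (F := fun (x : ℂ) (t : ℝ) => f t * (1 - (t:ℂ)*x)^(-((α:ℂ)+1)))
    (F' := fun (x : ℂ) (t : ℝ) => f t * (((α:ℂ)+1) * t * (1 - (t:ℂ)*x)^(-((α:ℂ)+2))))
    (bound := fun _ => δ * ((α+1) * (1 - (1+‖z‖)/2)^(-(α+2))))
    (x₀ := z) (Metric.ball_mem_nhds z hε0)
    ?_ ?_ ?_ ?_ ?_ ?_
  · constructor
    · exact key.1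
    · have hiH : intHilbert μ α f =
          fun x : ℂ => ∫ t in Ico (0:ℝ) 1, f t * (1 - (t:ℂ)*x)^(-((α:ℂ)+1)) ∂μ := by
        funext x
        unfold intHilbert
        simp only [div_eq_mul_inv, ← Complex.cpow_neg]
      rw [hiH]
      exact key.2
  · -- measurability of F x near z
    filter_upwards [Metric.ball_mem_nhds z hε0] with x hx
    have := continuousOn_kernel_mul hf (hxlt1 x hx) (-((α:ℂ)+1)) (fun _ => 1) continuous_const
    simp only [one_mul] at this
    exact this.aestronglyMeasurable measurableSet_Ico
  · -- integrability of F z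
    apply Integrable.mono' (integrable_const (δ * (1-‖z‖)^(-(α+1))))
    · have := continuousOn_kernel_mul hf hz (-((α:ℂ)+1)) (fun _ => 1) continuous_const
      simp only [one_mul] at this
      exact this.aestronglyMeasurable measurableSet_Ico
    · rw [ae_restrict_iff' measurableSet_Ico]
      filter_upwards with t ht
      obtain ⟨hpos, hle, hne⟩ := one_sub_mul_ne_zero ht hz
      have hzpos : (0:ℝ) < 1 - ‖z‖ := by linarith
      have hcast : (-((α:ℂ)+1)) = ((-(α+1):ℝ):ℂ) := by push_cast; ring
      rw [norm_mul, hcast, norm_cpow_ofReal hne]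
      have h1 : ‖1 - (t:ℂ)*z‖ ^ (-(α+1)) ≤ (1-‖z‖) ^ (-(α+1)) := by
        apply Real.rpow_le_rpow_of_nonpos hzpos _ (by linarith)
        have : t * ‖z‖ ≤ ‖z‖ := mul_le_of_le_one_left (norm_nonneg z) (le_of_lt ht.2)
        linarith
      have h2 : (0:ℝ) ≤ ‖1 - (t:ℂ)*z‖ ^ (-(α+1)) := Real.rpow_nonneg (norm_nonneg _) _
      calc ‖f ↑t‖ * ‖1 - (t:ℂ)*z‖ ^ (-(α+1)) ≤ δ * ‖1 - (t:ℂ)*z‖ ^ (-(α+1)) :=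
            mul_le_mul_of_nonneg_right (hδ t ht) h2
        _ ≤ δ * (1-‖z‖) ^ (-(α+1)) := mul_le_mul_of_nonneg_left h1 hδ0
  · -- measurability of F' z
    exact (continuousOn_kernel_mul hf hz (-((α:ℂ)+2))
      (fun t : ℝ => ((α:ℂ)+1) * t)
      (continuous_const.mul Complex.continuous_ofReal)).aestronglyMeasurable measurableSet_Ico
  · -- uniform bound on the ball
    rw [ae_restrict_iff' measurableSet_Ico]
    filter_upwards with t ht
    intro x hx
    have hx1 : ‖x‖ < 1 := hxlt1 x hx
    calc ‖f ↑t * (((α:ℂ)+1) * t * (1 - (t:ℂ)*x)^(-((α:ℂ)+2)))‖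
        ≤ ‖f ↑t‖ * ((α+1) * (1 - t * ‖x‖) ^ (-(α+2))) := norm_kernel_deriv ht hx1 hα _
      _ ≤ δ * ((α+1) * (1 - (1+‖z‖)/2)^(-(α+2))) := by
          have hb : (1 - t * ‖x‖) ^ (-(α+2)) ≤ (1 - (1+‖z‖)/2)^(-(α+2)) := by
            apply Real.rpow_le_rpow_of_nonpos hρ0 _ (by linarith)
            have h4 : t * ‖x‖ ≤ ‖x‖ := mul_le_of_le_one_left (norm_nonneg x) (le_of_lt ht.2)
            have h5 := hρ x hx
            linarith
          have h6 : (0:ℝ) ≤ (1 - t * ‖x‖) ^ (-(α+2)) := Real.rpow_nonneg (by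
            obtain ⟨hpos, _, _⟩ := one_sub_mul_ne_zero ht hx1
            linarith) _
          apply mul_le_mul (hδ t ht) _ _ hδ0
          · exact mul_le_mul_of_nonneg_left hb (by linarith)
          · exact mul_nonneg (by linarith) h6
  · exact integrable_const _
  · -- differentiability
    rw [ae_restrict_iff' measurableSet_Ico]
    filter_upwards with t ht
    intro x hx
    have hx1 : ‖x‖ < 1 := hxlt1 x hx
    have hker := hasDerivAt_kernel α ht hx1 (f t)
    have heq : (fun y : ℂ => f ↑t / (1 - (t:ℂ)*y)^((α:ℂ)+1)) =
        (fun y : ℂ => f ↑t * (1 - (t:ℂ)*y)^(-((α:ℂ)+1))) := by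
      funext y
      rw [Complex.cpow_neg, div_eq_mul_inv]
    rw [heq] at hker
    exact hker

end Parametric
section KeyBound

variable {ν : ℝ → ℝ} {a' b' α : ℝ}

lemma key_bound (hν : IsNormal ν a' b') (μ : Measure ℝ) [IsFiniteMeasure μ] (hα : -1 < α) {M : ℝ}
    (h : ∀ n : ℕ, 1 ≤ n →
      (n : ℝ) ^ (α + 2) * ν (1 - 1 / (n:ℝ)) * ∫ t in Ico (0:ℝ) 1, t ^ n ∂μ ≤ M) :
    ∃ K > 0, ∀ (f : ℂ → ℂ) (δ : ℝ), DifferentiableOn ℂ f (Metric.ball 0 1) →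
      (∀ t ∈ Ico (0:ℝ) 1, ‖f (t:ℂ)‖ ≤ δ) →
      MemBloch ν (intHilbert μ α f) ∧ blochNorm ν (intHilbert μ α f) ≤ K * δ := by
  obtain ⟨CA, hCA, hA⟩ := lemA hν μ hα h
  have hμt : (0:ℝ) ≤ (μ (Ico (0:ℝ) 1)).toReal := ENNReal.toReal_nonneg
  have hα1 : (0:ℝ) < α + 1 := by linarith
  refine ⟨(μ (Ico (0:ℝ) 1)).toReal + (α+1) * CA + 1, by positivity, ?_⟩
  intro f δ hdf hδ
  have hδ0 : 0 ≤ δ := le_trans (norm_nonneg _) (hδ 0 ⟨le_refl _, zero_lt_one⟩)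
  have hf : ContinuousOn f (Metric.ball 0 1) := hdf.continuousOn
  have hder : ∀ z : ℂ, z ∈ Metric.ball (0:ℂ) 1 →
      HasDerivAt (intHilbert μ α f)
        (∫ t in Ico (0:ℝ) 1, f t * (((α:ℂ)+1) * t * (1 - (t:ℂ)*z)^(-((α:ℂ)+2))) ∂μ) z :=
    fun z hz => (hasDerivAt_intHilbert μ hα hf hδ (mem_ball_zero_iff.1 hz)).2
  have hdiff : DifferentiableOn ℂ (intHilbert μ α f) (Metric.ball 0 1) :=
    fun z hz => ((hder z hz).differentiableAt).differentiableWithinAt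
  have hsup : ∀ z : ℂ, z ∈ Metric.ball (0:ℂ) 1 →
      ν ‖z‖ * ‖deriv (intHilbert μ α f) z‖ ≤ (α+1) * CA * δ := by
    intro z hz
    have hz1 : ‖z‖ < 1 := mem_ball_zero_iff.1 hz
    have hzmem : ‖z‖ ∈ Ico (0:ℝ) 1 := ⟨norm_nonneg z, hz1⟩
    have hint := (hasDerivAt_intHilbert μ hα hf hδ hz1).1
    have hval := (hder z hz).deriv
    rw [hval]
    have hlow : ∀ t ∈ Ico (0:ℝ) 1, 1-‖z‖ ≤ 1 - t*‖z‖ := by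
      intro t ht
      have : t*‖z‖ ≤ ‖z‖ := mul_le_of_le_one_left (norm_nonneg z) (le_of_lt ht.2)
      linarith
    have hIrpow := integrableOn_rpow (μ := μ) (by linarith : -(α+2) ≤ 0) ‖z‖
      measurableSet_Ico (by linarith : (0:ℝ) < 1-‖z‖) hlow
    have hI0 : (0:ℝ) ≤ ∫ t in Ico (0:ℝ) 1, (1-t*‖z‖)^(-(α+2)) ∂μ :=
      setIntegral_nonneg measurableSet_Ico
        (fun t ht => Real.rpow_nonneg (by linarith [hlow t ht]) _)
    have h1 : ‖∫ t in Ico (0:ℝ) 1, f t * (((α:ℂ)+1) * t * (1 - (t:ℂ)*z)^(-((α:ℂ)+2))) ∂μ‖ ≤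
        ∫ t in Ico (0:ℝ) 1, ‖f t * (((α:ℂ)+1) * t * (1 - (t:ℂ)*z)^(-((α:ℂ)+2)))‖ ∂μ :=
      norm_integral_le_integral_norm _
    have h2 : ∫ t in Ico (0:ℝ) 1, ‖f t * (((α:ℂ)+1) * t * (1 - (t:ℂ)*z)^(-((α:ℂ)+2)))‖ ∂μ ≤
        ∫ t in Ico (0:ℝ) 1, δ*(α+1) * (1-t*‖z‖)^(-(α+2)) ∂μ := by
      apply setIntegral_mono_on hint.norm (hIrpow.const_mul (δ*(α+1))) measurableSet_Ico
      intro t ht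
      calc ‖f t * (((α:ℂ)+1) * t * (1 - (t:ℂ)*z)^(-((α:ℂ)+2)))‖
          ≤ ‖f t‖ * ((α+1) * (1-t*‖z‖)^(-(α+2))) := norm_kernel_deriv ht hz1 hα _
        _ ≤ δ * ((α+1) * (1-t*‖z‖)^(-(α+2))) := by
            apply mul_le_mul_of_nonneg_right (hδ t ht)
            have := hlow t ht
            have h7 : (0:ℝ) ≤ (1-t*‖z‖)^(-(α+2)) := Real.rpow_nonneg (by linarith) _
            positivity
        _ = δ*(α+1) * (1-t*‖z‖)^(-(α+2)) := by ring
    have h3 : ∫ t in Ico (0:ℝ) 1, δ*(α+1) * (1-t*‖z‖)^(-(α+2)) ∂μ =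
        δ*(α+1) * ∫ t in Ico (0:ℝ) 1, (1-t*‖z‖)^(-(α+2)) ∂μ := by
      exact integral_const_mul _ _
    have hAz := hA ‖z‖ hzmem
    have hνz : 0 < ν ‖z‖ := hν.2.2.1 _ hzmem
    calc ν ‖z‖ * ‖∫ t in Ico (0:ℝ) 1, f t * (((α:ℂ)+1) * t * (1 - (t:ℂ)*z)^(-((α:ℂ)+2))) ∂μ‖
        ≤ ν ‖z‖ * (δ*(α+1) * ∫ t in Ico (0:ℝ) 1, (1-t*‖z‖)^(-(α+2)) ∂μ) := by
          apply mul_le_mul_of_nonneg_left _ hνz.le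
          calc _ ≤ _ := h1
            _ ≤ _ := h2
            _ = _ := h3
      _ = δ*(α+1) * (ν ‖z‖ * ∫ t in Ico (0:ℝ) 1, (1-t*‖z‖)^(-(α+2)) ∂μ) := by ring
      _ ≤ δ*(α+1) * CA := mul_le_mul_of_nonneg_left hAz (by positivity)
      _ = (α+1) * CA * δ := by ring
  have hbdd : BddAbove (Set.range fun z : Metric.ball (0:ℂ) 1 =>
      ν ‖(z : ℂ)‖ * ‖deriv (intHilbert μ α f) z‖) := by
    refine ⟨(α+1)*CA*δ, ?_⟩
    rintro y ⟨z, rfl⟩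
    exact hsup z z.2
  have hzero : intHilbert μ α f 0 = ∫ t in Ico (0:ℝ) 1, f t ∂μ := by
    unfold intHilbert
    simp
  have haesm : AEStronglyMeasurable (fun t : ℝ => f t) (μ.restrict (Ico (0:ℝ) 1)) :=
    (hf.comp Complex.continuous_ofReal.continuousOn
      (fun t ht => ofReal_mem_ball ht)).aestronglyMeasurable measurableSet_Ico
  have hzb : ‖intHilbert μ α f 0‖ ≤ δ * (μ (Ico (0:ℝ) 1)).toReal := by
    rw [hzero]
    exact norm_setIntegral_le_of_norm_le_const (measure_lt_top μ _) (fun t ht => hδ t ht)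
  refine ⟨⟨hdiff, hbdd⟩, ?_⟩
  unfold blochNorm
  haveI : Nonempty (Metric.ball (0:ℂ) 1) := ⟨⟨0, Metric.mem_ball_self one_pos⟩⟩
  have hsup2 : (⨆ z : Metric.ball (0:ℂ) 1, ν ‖(z : ℂ)‖ * ‖deriv (intHilbert μ α f) z‖) ≤
      (α+1)*CA*δ := ciSup_le (fun z => hsup z z.2)
  have := add_le_add hzb hsup2
  calc ‖intHilbert μ α f 0‖ +
        (⨆ z : Metric.ball (0:ℂ) 1, ν ‖(z : ℂ)‖ * ‖deriv (intHilbert μ α f) z‖)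
      ≤ δ * (μ (Ico (0:ℝ) 1)).toReal + (α+1)*CA*δ := this
    _ ≤ ((μ (Ico (0:ℝ) 1)).toReal + (α+1) * CA + 1) * δ := by nlinarith

end KeyBound
section OmegaSide

variable {ω : ℝ → ℝ} {a b : ℝ}

lemma one_div_omega_ae_nonneg (hω : IsNormal ω a b) {c d : ℝ} (hc : 0 ≤ c) (hd : d ≤ 1) :
    0 ≤ᶠ[ae ((volume : Measure ℝ).restrict (Icc c d))] fun s => 1/ω s := by
  have hne : ∀ᵐ (u:ℝ) ∂(volume : Measure ℝ), u ≠ 1 := by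
    have hset : {u : ℝ | ¬ u ≠ 1} = {1} := by ext u; simp
    rw [ae_iff, hset]
    exact Real.volume_singleton
  filter_upwards [ae_restrict_mem measurableSet_Icc, ae_restrict_of_ae hne] with u hu hu1
  have humem : u ∈ Ico (0:ℝ) 1 := ⟨le_trans hc hu.1, lt_of_le_of_ne (le_trans hu.2 hd) hu1⟩
  have := hω.2.2.1 u humem
  positivity

lemma one_div_omega_ae_nonneg' (hω : IsNormal ω a b) {c d : ℝ} (hc : 0 ≤ c) (hd : d ≤ 1) :
    0 ≤ᶠ[ae ((volume : Measure ℝ).restrict (Ioc c d))] fun s => 1/ω s := by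
  have hne : ∀ᵐ (u:ℝ) ∂(volume : Measure ℝ), u ≠ 1 := by
    have hset : {u : ℝ | ¬ u ≠ 1} = {1} := by ext u; simp
    rw [ae_iff, hset]
    exact Real.volume_singleton
  filter_upwards [ae_restrict_mem measurableSet_Ioc, ae_restrict_of_ae hne] with u hu hu1
  have humem : u ∈ Ico (0:ℝ) 1 := ⟨le_trans hc hu.1.le, lt_of_le_of_ne (le_trans hu.2 hd) hu1⟩
  have := hω.2.2.1 u humem
  positivity

lemma tail_int_nonneg (hω : IsNormal ω a b) {r : ℝ} (hr0 : 0 ≤ r) (hr1 : r ≤ 1) :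
    0 ≤ ∫ s in r..(1:ℝ), 1/ω s :=
  intervalIntegral.integral_nonneg_of_ae_restrict hr1 (one_div_omega_ae_nonneg hω hr0 (le_refl 1))

lemma seg_bound (hω : IsNormal ω a b)
    (hω1 : IntervalIntegrable (fun s => 1 / ω s) volume 0 1)
    {f : ℂ → ℂ} (hf : MemBloch ω f) {r t : ℝ} (h0 : 0 ≤ r) (hrt : r ≤ t) (ht : t < 1) :
    ‖f t‖ ≤ ‖f r‖ +
      (⨆ z : Metric.ball (0:ℂ) 1, ω ‖(z : ℂ)‖ * ‖deriv f z‖) * ∫ s in r..(1:ℝ), 1 / ω s := by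
  have hωpos := hω.2.2.1
  have hB0 : 0 ≤ ⨆ z : Metric.ball (0:ℂ) 1, ω ‖(z : ℂ)‖ * ‖deriv f z‖ := by
    apply Real.iSup_nonneg
    intro z
    apply mul_nonneg _ (norm_nonneg _)
    exact le_of_lt (hωpos _ ⟨norm_nonneg _, mem_ball_zero_iff.1 z.2⟩)
  have hmapsTo : ∀ u ∈ Icc r t, u ∈ Ico (0:ℝ) 1 :=
    fun u hu => ⟨le_trans h0 hu.1, lt_of_le_of_lt hu.2 ht⟩
  have hderivOn : ContinuousOn (deriv f) (Metric.ball 0 1) :=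
    ((hf.1.analyticOnNhd Metric.isOpen_ball).deriv.differentiableOn).continuousOn
  have hgcont : ContinuousOn (fun u : ℝ => deriv f u) (Icc r t) :=
    hderivOn.comp Complex.continuous_ofReal.continuousOn
      (fun u hu => ofReal_mem_ball (hmapsTo u hu))
  have hFTC : ∫ u in r..t, deriv f u = f t - f r := by
    apply intervalIntegral.integral_eq_sub_of_hasDerivAt
    · intro u hu
      rw [Set.uIcc_of_le hrt] at hu
      have humem := hmapsTo u hu
      have hball : ((u:ℝ):ℂ) ∈ Metric.ball (0:ℂ) 1 := ofReal_mem_ball humem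
      have hd : HasDerivAt f (deriv f u) u :=
        (hf.1.differentiableAt (Metric.isOpen_ball.mem_nhds hball)).hasDerivAt
      exact hd.comp_ofReal
    · apply ContinuousOn.intervalIntegrable
      rw [Set.uIcc_of_le hrt]
      exact hgcont
  have h2 : ‖∫ u in r..t, deriv f u‖ ≤ ∫ u in r..t, ‖deriv f u‖ :=
    intervalIntegral.norm_integral_le_integral_norm hrt
  have hIntNorm : IntervalIntegrable (fun u : ℝ => ‖deriv f u‖) volume r t := by
    apply ContinuousOn.intervalIntegrable
    rw [Set.uIcc_of_le hrt]
    exact hgcont.norm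
  have hIntBound : IntervalIntegrable
      (fun u : ℝ => (⨆ z : Metric.ball (0:ℂ) 1, ω ‖(z : ℂ)‖ * ‖deriv f z‖) * (1/ω u))
      volume r t := by
    apply IntervalIntegrable.const_mul
    apply hω1.mono_set
    rw [Set.uIcc_of_le hrt, Set.uIcc_of_le (zero_le_one)]
    exact fun u hu => ⟨le_trans h0 hu.1, le_trans hu.2 (le_of_lt ht)⟩
  have h3 : ∫ u in r..t, ‖deriv f u‖ ≤
      ∫ u in r..t, (⨆ z : Metric.ball (0:ℂ) 1, ω ‖(z : ℂ)‖ * ‖deriv f z‖) * (1/ω u) := by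
    apply intervalIntegral.integral_mono_on hrt hIntNorm hIntBound
    intro u hu
    have humem := hmapsTo u hu
    have hωu : 0 < ω u := hωpos u humem
    have hle : ω ‖((u:ℝ):ℂ)‖ * ‖deriv f u‖ ≤
        ⨆ z : Metric.ball (0:ℂ) 1, ω ‖(z : ℂ)‖ * ‖deriv f z‖ :=
      le_ciSup hf.2 ⟨((u:ℝ):ℂ), ofReal_mem_ball humem⟩
    have hnu : ‖((u:ℝ):ℂ)‖ = u := by
      rw [Complex.norm_real, Real.norm_eq_abs, abs_of_nonneg humem.1]
    rw [hnu] at hle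
    rw [mul_one_div, le_div_iff₀ hωu]
    nlinarith
  have h4 : ∫ u in r..t, (⨆ z : Metric.ball (0:ℂ) 1, ω ‖(z : ℂ)‖ * ‖deriv f z‖) * (1/ω u) =
      (⨆ z : Metric.ball (0:ℂ) 1, ω ‖(z : ℂ)‖ * ‖deriv f z‖) * ∫ u in r..t, 1/ω u :=
    intervalIntegral.integral_const_mul _ _
  have h5 : ∫ u in r..t, 1/ω u ≤ ∫ u in r..(1:ℝ), 1/ω u := by
    apply intervalIntegral.integral_mono_interval (le_refl r) hrt (le_of_lt ht)
      (one_div_omega_ae_nonneg' hω h0 (le_refl 1))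
    apply hω1.mono_set
    rw [Set.uIcc_of_le (le_of_lt (lt_of_le_of_lt hrt ht)), Set.uIcc_of_le zero_le_one]
    exact fun u hu => ⟨le_trans h0 hu.1, hu.2⟩
  have h6 : ‖f ↑t‖ - ‖f ↑r‖ ≤ ‖f ↑t - f ↑r‖ := norm_sub_norm_le _ _
  rw [hFTC] at h2
  rw [h4] at h3
  have h7 := mul_le_mul_of_nonneg_left h5 hB0
  linarith
end OmegaSide
section OmegaSide2

variable {ω : ℝ → ℝ} {a b : ℝ}

lemma sup_bound (hω : IsNormal ω a b)
    (hω1 : IntervalIntegrable (fun s => 1 / ω s) volume 0 1)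
    {f : ℂ → ℂ} (hf : MemBloch ω f) :
    ∀ t ∈ Ico (0:ℝ) 1, ‖f ↑t‖ ≤ (1 + ∫ s in (0:ℝ)..1, 1/ω s) * blochNorm ω f := by
  intro t ht
  have hseg := seg_bound hω hω1 hf (le_refl 0) ht.1 ht.2
  rw [Complex.ofReal_zero] at hseg
  have hW0 : 0 ≤ ∫ s in (0:ℝ)..1, 1/ω s := tail_int_nonneg hω (le_refl 0) zero_le_one
  have hB0 : 0 ≤ ⨆ z : Metric.ball (0:ℂ) 1, ω ‖(z : ℂ)‖ * ‖deriv f z‖ := by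
    apply Real.iSup_nonneg
    intro z
    exact mul_nonneg
      (le_of_lt (hω.2.2.1 _ ⟨norm_nonneg _, mem_ball_zero_iff.1 z.2⟩)) (norm_nonneg _)
  have hb1 : ‖f 0‖ ≤ blochNorm ω f := by unfold blochNorm; linarith
  have hb2 : (⨆ z : Metric.ball (0:ℂ) 1, ω ‖(z : ℂ)‖ * ‖deriv f z‖) ≤ blochNorm ω f := by
    unfold blochNorm; linarith [norm_nonneg (f 0)]
  have hbn : 0 ≤ blochNorm ω f := le_trans (norm_nonneg _) hb1
  nlinarith [mul_le_mul_of_nonneg_right hb2 hW0]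

lemma tail_radius (hω1 : IntervalIntegrable (fun s => 1/ω s) volume 0 1) :
    ∀ ε > 0, ∃ r : ℝ, 0 ≤ r ∧ r < 1 ∧ ∫ s in r..(1:ℝ), 1/ω s < ε := by
  intro ε hε
  have hIcc : IntegrableOn (fun s => 1/ω s) (uIcc (0:ℝ) 1) volume := by
    rw [Set.uIcc_of_le zero_le_one, integrableOn_Icc_iff_integrableOn_Ioc]
    exact hω1.1
  have hcont := intervalIntegral.continuousOn_primitive_interval hIcc
  have h1mem : (1:ℝ) ∈ uIcc (0:ℝ) 1 := by
    rw [Set.uIcc_of_le zero_le_one]; exact ⟨zero_le_one, le_refl 1⟩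
  have hcw := hcont 1 h1mem
  have hmono : nhdsWithin 1 (Ico (0:ℝ) 1) ≤ nhdsWithin 1 (uIcc (0:ℝ) 1) := by
    apply nhdsWithin_mono
    rw [Set.uIcc_of_le zero_le_one]
    exact Set.Ico_subset_Icc_self
  have htend : Tendsto (fun x => ∫ t in (0:ℝ)..x, 1/ω t) (nhdsWithin 1 (Ico (0:ℝ) 1))
      (nhds (∫ t in (0:ℝ)..1, 1/ω t)) := hcw.tendsto.mono_left hmono
  haveI hNB : (nhdsWithin (1:ℝ) (Ico (0:ℝ) 1)).NeBot := by
    apply mem_closure_iff_nhdsWithin_neBot.1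
    rw [closure_Ico zero_ne_one]
    exact ⟨zero_le_one, le_refl 1⟩
  have hev : ∀ᶠ x in nhdsWithin 1 (Ico (0:ℝ) 1),
      dist (∫ t in (0:ℝ)..x, 1/ω t) (∫ t in (0:ℝ)..1, 1/ω t) < ε :=
    (Metric.tendsto_nhds.1 htend) ε hε
  obtain ⟨r, hrd, hrmem⟩ := (hev.and self_mem_nhdsWithin).exists
  refine ⟨r, hrmem.1, hrmem.2, ?_⟩
  have hint0r : IntervalIntegrable (fun s => 1/ω s) volume 0 r := by
    apply hω1.mono_set
    rw [Set.uIcc_of_le hrmem.1, Set.uIcc_of_le zero_le_one]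
    exact Set.Icc_subset_Icc (le_refl 0) hrmem.2.le
  have hsub := intervalIntegral.integral_interval_sub_left hω1 hint0r
  rw [← hsub]
  rw [Real.dist_eq] at hrd
  calc (∫ t in (0:ℝ)..1, 1/ω t) - ∫ t in (0:ℝ)..r, 1/ω t
      ≤ |(∫ t in (0:ℝ)..1, 1/ω t) - ∫ t in (0:ℝ)..r, 1/ω t| := le_abs_self _
    _ = |(∫ t in (0:ℝ)..r, 1/ω t) - ∫ t in (0:ℝ)..1, 1/ω t| := abs_sub_comm _ _
    _ < ε := hrd

lemma unif_small (hω : IsNormal ω a b)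
    (hω1 : IntervalIntegrable (fun s => 1 / ω s) volume 0 1)
    (h : ℕ → ℂ → ℂ) (M : ℝ)
    (hmem : ∀ k, MemBloch ω (h k) ∧ blochNorm ω (h k) ≤ M)
    (hconv : TendstoLocallyUniformlyOn (fun k z => h k z) (fun _ => 0) atTop
      (Metric.ball (0:ℂ) 1)) :
    ∀ δ > 0, ∀ᶠ k in atTop, ∀ t ∈ Ico (0:ℝ) 1, ‖h k ↑t‖ ≤ δ := by
  intro δ hδ
  have hM'0 : (0:ℝ) < max M 1 := lt_of_lt_of_le zero_lt_one (le_max_right M 1)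
  have hBk : ∀ k, (⨆ z : Metric.ball (0:ℂ) 1, ω ‖(z:ℂ)‖ * ‖deriv (h k) z‖) ≤ max M 1 := by
    intro k
    have hbk := (hmem k).2
    unfold blochNorm at hbk
    have := norm_nonneg (h k 0)
    linarith [le_max_left M 1]
  obtain ⟨r, hr0, hr1, hrε⟩ := tail_radius hω1 (δ/(2*max M 1)) (by positivity)
  have hKcompact : IsCompact ((fun x:ℝ => (x:ℂ)) '' Icc 0 r) :=
    isCompact_Icc.image Complex.continuous_ofReal
  have hKsub : ((fun x:ℝ => (x:ℂ)) '' Icc 0 r) ⊆ Metric.ball (0:ℂ) 1 := by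
    rintro _ ⟨x, hx, rfl⟩
    exact ofReal_mem_ball ⟨hx.1, lt_of_le_of_lt hx.2 hr1⟩
  have hUnif := (tendstoLocallyUniformlyOn_iff_forall_isCompact Metric.isOpen_ball).1 hconv
    _ hKsub hKcompact
  rw [Metric.tendstoUniformlyOn_iff] at hUnif
  filter_upwards [hUnif (δ/2) (by positivity)] with k hk
  intro t ht
  by_cases hcase : t ≤ r
  · have := hk (t:ℂ) ⟨t, ⟨ht.1, hcase⟩, rfl⟩
    rw [dist_zero_left] at this
    linarith
  · push_neg at hcase
    have hseg := seg_bound hω hω1 (hmem k).1 hr0 (le_of_lt hcase) ht.2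
    have hfr : ‖h k ↑r‖ ≤ δ/2 := by
      have := hk (r:ℂ) ⟨r, ⟨hr0, le_refl r⟩, rfl⟩
      rw [dist_zero_left] at this
      linarith
    have hint0 : 0 ≤ ∫ s in r..(1:ℝ), 1/ω s := tail_int_nonneg hω hr0 hr1.le
    have hB0 : 0 ≤ ⨆ z : Metric.ball (0:ℂ) 1, ω ‖(z:ℂ)‖ * ‖deriv (h k) z‖ := by
      apply Real.iSup_nonneg
      intro z
      exact mul_nonneg
        (le_of_lt (hω.2.2.1 _ ⟨norm_nonneg _, mem_ball_zero_iff.1 z.2⟩)) (norm_nonneg _)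
    have hstep : (⨆ z : Metric.ball (0:ℂ) 1, ω ‖(z:ℂ)‖ * ‖deriv (h k) z‖) *
        (∫ s in r..(1:ℝ), 1/ω s) ≤ max M 1 * (δ/(2*max M 1)) := by
      apply mul_le_mul (hBk k) hrε.le hint0 (le_of_lt hM'0)
    have heq : max M 1 * (δ/(2*max M 1)) = δ/2 := by
      field_simp
    rw [heq] at hstep
    linarith

end OmegaSide2
theorem stmt15 (ω ν : ℝ → ℝ) (a b a' b' : ℝ) (hω : IsNormal ω a b) (hν : IsNormal ν a' b')
    (μ : Measure ℝ) [IsFiniteMeasure μ] (α : ℝ) (hα : -1 < α)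
    (hω1 : IntervalIntegrable (fun s => 1 / ω s) MeasureTheory.volume 0 1)
    (h : ∃ M : ℝ, ∀ n : ℕ, 1 ≤ n →
      (n : ℝ) ^ (α + 2) * ν (1 - 1 / (n:ℝ)) * ∫ t in Ico (0:ℝ) 1, t ^ n ∂μ ≤ M) :
    IsCompactOp ω ν (intHilbert μ α) := by
  obtain ⟨M, hM⟩ := h
  obtain ⟨K, hK, hKey⟩ := key_bound hν μ hα hM
  have hW0 : 0 ≤ ∫ s in (0:ℝ)..1, 1/ω s := tail_int_nonneg hω (le_refl 0) zero_le_one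
  have hC3 : (0:ℝ) < 1 + ∫ s in (0:ℝ)..1, 1/ω s := by linarith
  constructor
  · -- boundedness
    refine ⟨K * (1 + ∫ s in (0:ℝ)..1, 1/ω s), mul_pos hK hC3, ?_⟩
    intro f hfmem
    have hδ := sup_bound hω hω1 hfmem
    have hkey := hKey f ((1 + ∫ s in (0:ℝ)..1, 1/ω s) * blochNorm ω f) hfmem.1 hδ
    refine ⟨hkey.1, ?_⟩
    calc blochNorm ν (intHilbert μ α f) ≤
          K * ((1 + ∫ s in (0:ℝ)..1, 1/ω s) * blochNorm ω f) := hkey.2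
      _ = K * (1 + ∫ s in (0:ℝ)..1, 1/ω s) * blochNorm ω f := by ring
  · -- compactness
    intro hseq M2 hseqmem hconv
    rw [Metric.tendsto_atTop]
    intro ε hε
    have hsmall := unif_small hω hω1 hseq M2 hseqmem hconv (ε/(2*K)) (by positivity)
    rw [Filter.eventually_atTop] at hsmall
    obtain ⟨N, hN⟩ := hsmall
    refine ⟨N, fun k hk => ?_⟩
    have hδk := hN k hk
    have hkey := hKey (hseq k) (ε/(2*K)) (hseqmem k).1.1 hδk
    have hb := hkey.2
    have heq : K * (ε/(2*K)) = ε/2 := by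
      field_simp
    rw [heq] at hb
    have hnn : 0 ≤ blochNorm ν (intHilbert μ α (hseq k)) := by
      unfold blochNorm
      apply add_nonneg (norm_nonneg _)
      apply Real.iSup_nonneg
      intro z
      exact mul_nonneg
        (le_of_lt (hν.2.2.1 _ ⟨norm_nonneg _, mem_ball_zero_iff.1 z.2⟩)) (norm_nonneg _)
    rw [Real.dist_eq, sub_zero, abs_of_nonneg hnn]
    linarith
end
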